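/- arXiv:1708.00732 — 4 statements merged into one kernel-verified Lean document; each statement's English description precedes it below -/
import Mathlib

section
/- Let x: [0,∞) → ℝ be càdlàg and ε > 0. Define x̃^ε_t := x_0 + UTV(x,[0,t],ε) − DTV(x,[0,t],ε) for t ≥ 0. Then |x̃^ε_t − x_t| ≤ ε for every t ≥ 0; that is, the path x̃^ε uniformly approximates x with accuracy ε. -/
open MeasureTheory Filter Topology Set
open scoped Classical

noncomputable section

/-- The jump `Δf_s = f s - f (s-)` of a path at a point. -/
def jmp (f : ℝ → ℝ) (s : ℝ) : ℝ := f s - Function.leftLim f s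

/-- A path `f : ℝ → ℝ` (thought of as a path on `[0,∞)`) is càdlàg: right-continuous at
every `t ≥ 0` and with finite left limits at every `t > 0`. -/
def Cadlag (f : ℝ → ℝ) : Prop :=
  (∀ t : ℝ, 0 ≤ t → ContinuousWithinAt f (Ici t) t) ∧
    ∀ t : ℝ, 0 < t → Tendsto f (𝓝[<] t) (𝓝 (Function.leftLim f t))

/-- `p = (u, v)` is a decomposition of `y` on `[0,∞)` as a difference of two nondecreasing
right-continuous functions. -/
def IsBVDecompOn (y : ℝ → ℝ) (p : StieltjesFunction ℝ × StieltjesFunction ℝ) : Prop :=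
  ∀ s : ℝ, 0 ≤ s → y s = p.1 s - p.2 s

/-- `y` has locally finite total variation on `[0,∞)`: for right-continuous `y` with left
limits this is equivalent to admitting a Jordan decomposition `y = u - v` with `u, v`
nondecreasing and right-continuous. -/
def LocBV (y : ℝ → ℝ) : Prop := ∃ p, IsBVDecompOn y p

/-- The Lebesgue–Stieltjes integral `∫_{(0,t]} g dy` of `g` with respect to the signed
Lebesgue–Stieltjes measure `μ_u - μ_v`, where `y = u - v` with `u, v` nondecreasing and
right-continuous.  (For integrable `g` its value does not depend on the choice of the
decomposition.) -/
def lsInt (y g : ℝ → ℝ) (t : ℝ) : ℝ :=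
  if h : ∃ p, IsBVDecompOn y p then
    (∫ s in Ioc (0:ℝ) t, g s ∂(h.choose.1.measure)) -
      ∫ s in Ioc (0:ℝ) t, g s ∂(h.choose.2.measure)
  else 0

/-- The integral `∫_{(0,t]} |g| |dy|` of `|g|` with respect to the total variation measure of
the signed Lebesgue–Stieltjes measure of `y`; it is computed from a minimal (mutually
singular on `(0,∞)`) decomposition of `y`, for which the total variation measure is
`μ_u + μ_v`. -/
def lsAbs (y g : ℝ → ℝ) (t : ℝ) : ℝ :=
  if h : ∃ p, IsBVDecompOn y p ∧
      (p.1.measure.restrict (Ioi 0)).MutuallySingular (p.2.measure.restrict (Ioi 0)) then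
    ∫ s in Ioc (0:ℝ) t, |g s| ∂(h.choose.1.measure + h.choose.2.measure)
  else 0

/-- The truncated variation of `x` on `[a,b]` with truncation parameter `ε`. -/
def TTV (x : ℝ → ℝ) (a b ε : ℝ) : ℝ :=
  sSup {v : ℝ | ∃ (n : ℕ) (t : ℕ → ℝ), a ≤ t 0 ∧ t n ≤ b ∧ (∀ i, i < n → t i < t (i + 1)) ∧
    v = ∑ i ∈ Finset.range n, max (|x (t (i + 1)) - x (t i)| - ε) 0}

/-- The upward truncated variation of `x` on `[a,b]` with truncation parameter `ε`. -/
def UTV (x : ℝ → ℝ) (a b ε : ℝ) : ℝ :=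
  sSup {v : ℝ | ∃ (n : ℕ) (t : ℕ → ℝ), a ≤ t 0 ∧ t n ≤ b ∧ (∀ i, i < n → t i < t (i + 1)) ∧
    v = ∑ i ∈ Finset.range n, max (x (t (i + 1)) - x (t i) - ε) 0}

/-- The downward truncated variation of `x` on `[a,b]` with truncation parameter `ε`. -/
def DTV (x : ℝ → ℝ) (a b ε : ℝ) : ℝ :=
  sSup {v : ℝ | ∃ (n : ℕ) (t : ℕ → ℝ), a ≤ t 0 ∧ t n ≤ b ∧ (∀ i, i < n → t i < t (i + 1)) ∧
    v = ∑ i ∈ Finset.range n, max (x (t i) - x (t (i + 1)) - ε) 0}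

/-- The standing assumptions: `x` is càdlàg with `Σ_{0<s≤t} (Δx_s)² < ∞` for all `t > 0`;
`𝒳 = (xe ε)_{ε>0}` is a family of càdlàg paths of locally finite total variation with
`sup_{s ≥ 0} |x s - xe ε s| ≤ ε`; `q = ⟨x⟩` is the uniform-on-compacts limit of
`2 ∫_{(0,·]} (x - xe ε) d(xe ε)` as `ε → 0+`;
`sup_{ε>0} ∫_{(0,t]} |x - xe ε| |d(xe ε)| < ∞` for every `t > 0`; and there is a constant
`K` with `|Δ(xe ε)_s| ≤ K |Δx_s|` for all `s > 0` and `ε > 0`. -/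
structure StandingAssumptions (x : ℝ → ℝ) (xe : ℝ → ℝ → ℝ) (q : ℝ → ℝ) : Prop where
  cadlag_x : Cadlag x
  jumps_sq_summable : ∀ t : ℝ, 0 < t → Summable fun s : Ioc (0:ℝ) t => jmp x (s : ℝ) ^ 2
  cadlag_xe : ∀ ε : ℝ, 0 < ε → Cadlag (xe ε)
  bv_xe : ∀ ε : ℝ, 0 < ε → LocBV (xe ε)
  approx : ∀ ε : ℝ, 0 < ε → ∀ s : ℝ, 0 ≤ s → |x s - xe ε s| ≤ ε
  qv_unif : ∀ T : ℝ, 0 ≤ T →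
    TendstoUniformlyOn (fun ε s => 2 * lsInt (xe ε) (fun r => x r - xe ε r) s) q
      (𝓝[>] 0) (Icc 0 T)
  bdd : ∀ t : ℝ, 0 < t → ∃ C : ℝ, ∀ ε : ℝ, 0 < ε →
    lsAbs (xe ε) (fun r => x r - xe ε r) t ≤ C
  jump_bdd : ∃ K : ℝ, ∀ ε : ℝ, 0 < ε → ∀ s : ℝ, 0 < s → |jmp (xe ε) s| ≤ K * |jmp x s|

section Aux

/-- The set whose supremum is `UTV`. -/
def USet (x : ℝ → ℝ) (a b ε : ℝ) : Set ℝ :=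
  {v : ℝ | ∃ (n : ℕ) (t : ℕ → ℝ), a ≤ t 0 ∧ t n ≤ b ∧ (∀ i, i < n → t i < t (i + 1)) ∧
    v = ∑ i ∈ Finset.range n, max (x (t (i + 1)) - x (t i) - ε) 0}

/-- The set whose supremum is `DTV`. -/
def DSet (x : ℝ → ℝ) (a b ε : ℝ) : Set ℝ :=
  {v : ℝ | ∃ (n : ℕ) (t : ℕ → ℝ), a ≤ t 0 ∧ t n ≤ b ∧ (∀ i, i < n → t i < t (i + 1)) ∧
    v = ∑ i ∈ Finset.range n, max (x (t i) - x (t (i + 1)) - ε) 0}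

/-- The set whose supremum is `TTV` (with `a = 0`). -/
def VSet (x : ℝ → ℝ) (b ε : ℝ) : Set ℝ :=
  {v : ℝ | ∃ (n : ℕ) (t : ℕ → ℝ), 0 ≤ t 0 ∧ t n ≤ b ∧ (∀ i, i < n → t i < t (i + 1)) ∧
    v = ∑ i ∈ Finset.range n, max (|x (t (i + 1)) - x (t i)| - ε) 0}

lemma UTV_eq_sSup (x : ℝ → ℝ) (a b ε : ℝ) : UTV x a b ε = sSup (USet x a b ε) := rfl

lemma DTV_eq_sSup (x : ℝ → ℝ) (a b ε : ℝ) : DTV x a b ε = sSup (DSet x a b ε) := rfl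

lemma part_mono {n : ℕ} {t : ℕ → ℝ} (h : ∀ i, i < n → t i < t (i + 1)) :
    ∀ i j, i ≤ j → j ≤ n → t i ≤ t j := by
  intro i j hij
  induction hij with
  | refl => intro _; exact le_rfl
  | @step j a ih =>
      intro hj
      exact le_trans (ih (by omega)) (le_of_lt (h j (by omega)))

lemma uset_nonempty (x : ℝ → ℝ) (T ε : ℝ) (hT : 0 ≤ T) : (USet x 0 T ε).Nonempty := by
  refine ⟨0, 0, fun _ => 0, le_rfl, by simpa using hT, ?_, by simp⟩
  intro i hi; exact absurd hi (Nat.not_lt_zero i)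

lemma DSet_eq (x : ℝ → ℝ) (a b ε : ℝ) : DSet x a b ε = USet (fun s => -x s) a b ε := by
  ext v
  constructor <;> rintro ⟨n, t, h0, hn, hs, rfl⟩ <;>
    refine ⟨n, t, h0, hn, hs, Finset.sum_congr rfl fun i _ => by congr 1; ring⟩

lemma USet_eq (x : ℝ → ℝ) (a b ε : ℝ) : USet x a b ε = DSet (fun s => -x s) a b ε := by
  ext v
  constructor <;> rintro ⟨n, t, h0, hn, hs, rfl⟩ <;>
    refine ⟨n, t, h0, hn, hs, Finset.sum_congr rfl fun i _ => by congr 1; ring⟩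

lemma bddAbove_USet {x : ℝ → ℝ} {b ε : ℝ} (h : BddAbove (VSet x b ε)) :
    BddAbove (USet x 0 b ε) := by
  obtain ⟨M, hM⟩ := h
  refine ⟨M, ?_⟩
  rintro v ⟨n, t, h0, hn, hs, rfl⟩
  have hle : ∀ i ∈ Finset.range n, max (x (t (i + 1)) - x (t i) - ε) 0 ≤
      max (|x (t (i + 1)) - x (t i)| - ε) 0 := by
    intro i _
    exact max_le_max (sub_le_sub_right (le_abs_self _) ε) le_rfl
  exact le_trans (Finset.sum_le_sum hle) (hM ⟨n, t, h0, hn, hs, rfl⟩)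

lemma bddAbove_DSet {x : ℝ → ℝ} {b ε : ℝ} (h : BddAbove (VSet x b ε)) :
    BddAbove (DSet x 0 b ε) := by
  obtain ⟨M, hM⟩ := h
  refine ⟨M, ?_⟩
  rintro v ⟨n, t, h0, hn, hs, rfl⟩
  have hle : ∀ i ∈ Finset.range n, max (x (t i) - x (t (i + 1)) - ε) 0 ≤
      max (|x (t (i + 1)) - x (t i)| - ε) 0 := by
    intro i _
    refine max_le_max (sub_le_sub_right ?_ ε) le_rfl
    calc x (t i) - x (t (i + 1)) = -(x (t (i + 1)) - x (t i)) := by ring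
      _ ≤ |x (t (i + 1)) - x (t i)| := neg_le_abs _
  exact le_trans (Finset.sum_le_sum hle) (hM ⟨n, t, h0, hn, hs, rfl⟩)

end Aux
section Aux2

/-- A "down partition" from `0` to `e` with down-truncated sum `v`. -/
def IsDPart (y : ℝ → ℝ) (ε e v : ℝ) : Prop :=
  ∃ (r : ℕ) (s : ℕ → ℝ), s 0 = 0 ∧ s r = e ∧ (∀ i, i < r → s i < s (i + 1)) ∧
    v = ∑ i ∈ Finset.range r, max (y (s i) - y (s (i + 1)) - ε) 0

lemma dpart_zero (y : ℝ → ℝ) (ε : ℝ) : IsDPart y ε 0 0 := by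
  refine ⟨0, fun _ => 0, rfl, rfl, ?_, by simp⟩
  intro i hi; exact absurd hi (Nat.not_lt_zero i)

lemma dpart_append {y : ℝ → ℝ} {ε e v : ℝ} (h : IsDPart y ε e v) {p : ℝ} (hp : e < p) :
    IsDPart y ε p (v + max (y e - y p - ε) 0) := by
  obtain ⟨r, s, hs0, hsr, hm, rfl⟩ := h
  refine ⟨r + 1, fun i => if i ≤ r then s i else p, by simp [hs0], by simp, ?_, ?_⟩
  · intro i hi
    rcases lt_or_eq_of_le (Nat.lt_succ_iff.mp hi) with h' | h'
    · simp only [if_pos (le_of_lt h'), if_pos (Nat.succ_le_of_lt h')]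
      exact hm i h'
    · subst h'
      simp only [if_pos le_rfl, if_neg (by omega : ¬ i + 1 ≤ i)]
      exact hsr ▸ hp
  · rw [Finset.sum_range_succ]
    congr 1
    · refine Finset.sum_congr rfl fun i hi => ?_
      have hi' : i < r := Finset.mem_range.mp hi
      have e1 : (fun j => if j ≤ r then s j else p) i = s i := if_pos (le_of_lt hi')
      have e2 : (fun j => if j ≤ r then s j else p) (i + 1) = s (i + 1) :=
        if_pos (Nat.succ_le_of_lt hi')
      rw [e1, e2]
    · have e1 : (fun j => if j ≤ r then s j else p) r = e := (if_pos le_rfl).trans hsr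
      have e2 : (fun j => if j ≤ r then s j else p) (r + 1) = p :=
        if_neg (by omega : ¬ r + 1 ≤ r)
      rw [e1, e2]

lemma dpart_mem {y : ℝ → ℝ} {ε e v T : ℝ} (h : IsDPart y ε e v) (heT : e ≤ T) :
    v ∈ DSet y 0 T ε := by
  obtain ⟨r, s, hs0, hsr, hm, rfl⟩ := h
  exact ⟨r, s, le_of_eq hs0.symm, hsr ▸ heT, hm, rfl⟩

lemma keyInv (y : ℝ → ℝ) (ε : ℝ) (hε : 0 < ε) :
    ∀ (n : ℕ) (t : ℕ → ℝ), 0 ≤ t 0 → (∀ i, i < n → t i < t (i + 1)) →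
    ∃ e d, 0 ≤ e ∧ e ≤ t n ∧ IsDPart y ε e d ∧
      ∑ i ∈ Finset.range n, max (y (t (i + 1)) - y (t i) - ε) 0 ≤ y e - y 0 + d := by
  intro n
  induction n with
  | zero =>
      intro t h0 _
      exact ⟨0, 0, le_rfl, h0, dpart_zero y ε, by simp⟩
  | succ m ih =>
      intro t h0 hs
      obtain ⟨e, d, he0, hem, hd, hb⟩ := ih t h0 (fun i hi => hs i (by omega))
      have hmm : t m < t (m + 1) := hs m (by omega)
      rw [Finset.sum_range_succ]
      rcases le_or_gt (y (t (m + 1)) - y (t m)) ε with hle | hgt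
      · refine ⟨e, d, he0, le_trans hem (le_of_lt hmm), hd, ?_⟩
        have hz : max (y (t (m + 1)) - y (t m) - ε) 0 = 0 := max_eq_right (by linarith)
        rw [hz]; linarith
      · have hmx : max (y (t (m + 1)) - y (t m) - ε) 0 = y (t (m + 1)) - y (t m) - ε :=
          max_eq_left (by linarith)
        rw [hmx]
        rcases eq_or_lt_of_le hem with heq | hlt
        · have hep : e < t (m + 1) := heq ▸ hmm
          refine ⟨t (m + 1), d + max (y e - y (t (m + 1)) - ε) 0, by linarith, le_rfl,
            dpart_append hd hep, ?_⟩
          rw [heq] at hb ⊢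
          have h1 : (0:ℝ) ≤ max (y (t m) - y (t (m + 1)) - ε) 0 := le_max_right _ _
          linarith
        · have h1 := dpart_append hd hlt
          have h2 := dpart_append h1 hmm
          refine ⟨t (m + 1), _, by linarith, le_rfl, h2, ?_⟩
          have hmax1 : y e - y (t m) - ε ≤ max (y e - y (t m) - ε) 0 := le_max_left _ _
          have hmax2 : (0:ℝ) ≤ max (y (t m) - y (t (m + 1)) - ε) 0 := le_max_right _ _
          linarith

lemma utv_le_aux (y : ℝ → ℝ) (T ε : ℝ) (hT : 0 ≤ T) (hε : 0 < ε)
    (hD : BddAbove (DSet y 0 T ε)) :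
    sSup (USet y 0 T ε) ≤ y T - y 0 + ε + sSup (DSet y 0 T ε) := by
  apply csSup_le (uset_nonempty y T ε hT)
  rintro v ⟨n, t, h0, hn, hs, rfl⟩
  obtain ⟨e, d, he0, hen, hd, hb⟩ := keyInv y ε hε n t h0 hs
  have heT : e ≤ T := le_trans hen hn
  rcases eq_or_lt_of_le heT with heq | hlt
  · have hle := le_csSup hD (dpart_mem hd heT)
    rw [heq] at hb
    linarith
  · have hd2 := dpart_append hd hlt
    have hle := le_csSup hD (dpart_mem hd2 le_rfl)
    have hmax : y e - y T - ε ≤ max (y e - y T - ε) 0 := le_max_left _ _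
    linarith

end Aux2
section Aux3

lemma extend_bdd (x : ℝ → ℝ) (ε a b M : ℝ) (hε : 0 < ε) (ha0 : 0 ≤ a) (hab : a ≤ b)
    (hM0 : 0 ≤ M) (hM : ∀ v ∈ VSet x a ε, v ≤ M)
    (c : ℝ) (hc : ∀ s, a < s → s < b → |x s - c| ≤ ε / 2) :
    BddAbove (VSet x b ε) := by
  set B : ℝ := max (|x 0| + M + ε) (max (|c| + ε / 2) (|x b|)) with hB
  have hB0 : (0:ℝ) ≤ B := le_trans (by positivity) (le_max_left _ _)
  -- pointwise bound on |x| over [0, b]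
  have hpt : ∀ s, 0 ≤ s → s ≤ b → |x s| ≤ B := by
    intro s hs0 hsb
    rcases le_or_gt s a with hsa | hsa
    · rcases eq_or_lt_of_le hs0 with h | h
      · rw [← h]
        calc |x 0| ≤ |x 0| + M + ε := by linarith
          _ ≤ B := le_max_left _ _
      · have hmem : max (|x s - x 0| - ε) 0 ∈ VSet x a ε := by
          refine ⟨1, fun i => if i = 0 then 0 else s, by simp, by simp [hsa], ?_, ?_⟩
          · intro i hi
            have : i = 0 := by omega
            subst this
            simpa using h
          · simp
        have h1 : |x s - x 0| - ε ≤ M := le_trans (le_max_left _ _) (hM _ hmem)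
        have h2 : |x s| ≤ |x 0| + |x s - x 0| := by
          calc |x s| = |x 0 + (x s - x 0)| := by ring_nf
            _ ≤ |x 0| + |x s - x 0| := abs_add_le _ _
        calc |x s| ≤ |x 0| + M + ε := by linarith
          _ ≤ B := le_max_left _ _
    · rcases eq_or_lt_of_le hsb with h | h
      · rw [h]
        exact le_trans (le_max_right _ _) (le_max_right _ _)
      · have h2 : |x s| ≤ |c| + ε / 2 := by
          calc |x s| = |c + (x s - c)| := by ring_nf
            _ ≤ |c| + |x s - c| := abs_add_le _ _
            _ ≤ |c| + ε / 2 := by linarith [hc s hsa h]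
        exact le_trans h2 (le_trans (le_max_left _ _) (le_max_right _ _))
  refine ⟨M + 4 * B, ?_⟩
  rintro v ⟨n, t, h0, hn, hs, rfl⟩
  have htm := part_mono hs
  -- generic term bounds
  have hterm2B : ∀ i, i < n → max (|x (t (i + 1)) - x (t i)| - ε) 0 ≤ 2 * B := by
    intro i hi
    have p1 : |x (t i)| ≤ B := hpt _ (le_trans h0 (htm 0 i (by omega) (by omega)))
      (le_trans (htm i n (by omega) le_rfl) hn)
    have p2 : |x (t (i + 1))| ≤ B := hpt _ (le_trans h0 (htm 0 (i + 1) (by omega) (by omega)))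
      (le_trans (htm (i + 1) n (by omega) le_rfl) hn)
    have : |x (t (i + 1)) - x (t i)| ≤ 2 * B := by
      calc |x (t (i + 1)) - x (t i)| ≤ |x (t (i + 1))| + |x (t i)| := abs_sub _ _
        _ ≤ 2 * B := by linarith
    exact max_le (by linarith) (by linarith)
  have htermz : ∀ i, i < n → a < t i → t (i + 1) < b →
      max (|x (t (i + 1)) - x (t i)| - ε) 0 = 0 := by
    intro i hi hai hib
    have hai1 : a < t (i + 1) := lt_trans hai (hs i hi)
    have hib0 : t i < b := lt_trans (hs i hi) hib
    have := hc _ hai hib0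
    have := hc _ hai1 hib
    have habs : |x (t (i + 1)) - x (t i)| ≤ ε := by
      calc |x (t (i + 1)) - x (t i)| ≤ |x (t (i + 1)) - c| + |c - x (t i)| := abs_sub_le _ _ _
        _ = |x (t (i + 1)) - c| + |x (t i) - c| := by rw [abs_sub_comm c]
        _ ≤ ε := by linarith
    exact max_eq_right (by linarith)
  rcases le_or_gt (t 0) a with h0a | h0a
  · -- split at the last index ≤ a
    set P : ℕ → Prop := fun k => t k ≤ a with hP
    set j : ℕ := Nat.findGreatest P n with hj
    have hjn : j ≤ n := Nat.findGreatest_le n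
    have hPj : P j := Nat.findGreatest_spec (Nat.zero_le n) h0a
    have hgt : ∀ k, j < k → k ≤ n → a < t k := by
      intro k h1 h2
      by_contra hcon
      exact Nat.findGreatest_is_greatest h1 h2 (not_lt.mp hcon)
    have hsplit : ∑ i ∈ Finset.range n, max (|x (t (i + 1)) - x (t i)| - ε) 0 =
        (∑ i ∈ Finset.range j, max (|x (t (i + 1)) - x (t i)| - ε) 0) +
        ∑ i ∈ Finset.Ico j n, max (|x (t (i + 1)) - x (t i)| - ε) 0 := by
      simp only [Finset.range_eq_Ico]
      exact (Finset.sum_Ico_consecutive _ (Nat.zero_le j) hjn).symm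
    have hpart1 : ∑ i ∈ Finset.range j, max (|x (t (i + 1)) - x (t i)| - ε) 0 ≤ M :=
      hM _ ⟨j, t, h0, hPj, fun i hi => hs i (by omega), rfl⟩
    have hpart2 : ∑ i ∈ Finset.Ico j n, max (|x (t (i + 1)) - x (t i)| - ε) 0 ≤
        (if j ∈ Finset.Ico j n then 2 * B else 0) +
        (if n - 1 ∈ Finset.Ico j n then 2 * B else 0) := by
      have hbnd : ∀ i ∈ Finset.Ico j n, max (|x (t (i + 1)) - x (t i)| - ε) 0 ≤
          (if i = j then 2 * B else 0) + (if i = n - 1 then 2 * B else 0) := by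
        intro i hi
        obtain ⟨hji, hin⟩ := Finset.mem_Ico.mp hi
        by_cases hij : i = j
        · have h1 : (0:ℝ) ≤ if i = n - 1 then 2 * B else 0 := by positivity
          rw [if_pos hij]
          linarith [hterm2B i hin]
        · by_cases hin1 : i = n - 1
          · have h1 : (0:ℝ) ≤ if i = j then 2 * B else 0 := by positivity
            rw [if_pos hin1]
            linarith [hterm2B i hin]
          · have hji' : j < i := lt_of_le_of_ne hji (Ne.symm hij)
            have hlt : t (i + 1) < b := by
              have h1 : t (i + 1) ≤ t (n - 1) := htm (i + 1) (n - 1) (by omega) (by omega)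
              have h2 : t (n - 1) < t n := by
                have h3 := hs (n - 1) (by omega)
                have h4 : n - 1 + 1 = n := by omega
                rwa [h4] at h3
              linarith [hn]
            have hz := htermz i hin (hgt i hji' (by omega)) hlt
            rw [hz, if_neg hij, if_neg hin1]
            norm_num
      calc ∑ i ∈ Finset.Ico j n, max (|x (t (i + 1)) - x (t i)| - ε) 0 ≤
          ∑ i ∈ Finset.Ico j n,
            ((if i = j then 2 * B else 0) + (if i = n - 1 then 2 * B else 0)) :=
            Finset.sum_le_sum hbnd
        _ = (∑ i ∈ Finset.Ico j n, if i = j then 2 * B else 0) +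
            ∑ i ∈ Finset.Ico j n, if i = n - 1 then 2 * B else 0 := Finset.sum_add_distrib
        _ = _ := by rw [Finset.sum_ite_eq' _ j fun _ => 2 * B,
              Finset.sum_ite_eq' _ (n - 1) fun _ => 2 * B]
    have hite1 : (if j ∈ Finset.Ico j n then 2 * B else 0) ≤ 2 * B := by
      split <;> linarith
    have hite2 : (if n - 1 ∈ Finset.Ico j n then 2 * B else 0) ≤ 2 * B := by
      split <;> linarith
    rw [hsplit]
    linarith
  · -- all points are in (a, b]
    rcases Nat.eq_zero_or_pos n with rfl | hn1
    · simp; linarith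
    · have hzmost : ∀ i ∈ Finset.range (n - 1), max (|x (t (i + 1)) - x (t i)| - ε) 0 = 0 := by
        intro i hi
        have hi' : i < n - 1 := Finset.mem_range.mp hi
        refine htermz i (by omega) (lt_of_lt_of_le h0a (htm 0 i (by omega) (by omega))) ?_
        have h1 : t (i + 1) ≤ t (n - 1) := htm (i + 1) (n - 1) (by omega) (by omega)
        have h2 : t (n - 1) < t n := by
          have := hs (n - 1) (by omega)
          have hn1' : n - 1 + 1 = n := by omega
          rw [hn1'] at this
          exact this
        linarith [hn]
      have hsplit := Finset.sum_range_succ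
        (fun i => max (|x (t (i + 1)) - x (t i)| - ε) 0) (n - 1)
      rw [show n - 1 + 1 = n from by omega] at hsplit
      rw [hsplit, Finset.sum_eq_zero hzmost]
      have h2 := hterm2B (n - 1) (by omega)
      rw [show n - 1 + 1 = n from by omega] at h2
      linarith

lemma vset_bdd (x : ℝ → ℝ) (hx : Cadlag x) (ε t : ℝ) (hε : 0 < ε) (ht : 0 ≤ t) :
    BddAbove (VSet x t ε) := by
  set A : Set ℝ := {b | b ∈ Icc (0:ℝ) t ∧ BddAbove (VSet x b ε)} with hA
  have h0A : (0:ℝ) ∈ A := by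
    refine ⟨⟨le_rfl, ht⟩, ⟨0, ?_⟩⟩
    rintro v ⟨n, t', h0, hn, hs, rfl⟩
    rcases Nat.eq_zero_or_pos n with rfl | hn1
    · simp
    · exfalso
      have h1 : t' 0 < t' 1 := hs 0 (by omega)
      have h2 : t' 1 ≤ t' n := part_mono hs 1 n (by omega) le_rfl
      linarith
  have hAb : BddAbove A := ⟨t, fun b hb => hb.1.2⟩
  have hAne : A.Nonempty := ⟨0, h0A⟩
  set u := sSup A with hu
  have hu0 : (0:ℝ) ≤ u := le_csSup hAb h0A
  have hut : u ≤ t := csSup_le hAne fun b hb => hb.1.2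
  have huA : u ∈ A := by
    rcases eq_or_lt_of_le hu0 with h | hupos
    · exact h ▸ h0A
    · have hll := hx.2 u hupos
      have hev : ∀ᶠ s in 𝓝[<] u, |x s - Function.leftLim x u| ≤ ε / 2 := by
        have hball : Metric.closedBall (Function.leftLim x u) (ε / 2) ∈
            𝓝 (Function.leftLim x u) := Metric.closedBall_mem_nhds _ (by linarith)
        filter_upwards [hll hball] with s hsb
        simpa [Metric.mem_closedBall, Real.dist_eq] using hsb
      obtain ⟨l, hl, hsub⟩ := mem_nhdsLT_iff_exists_Ioo_subset.mp hev
      obtain ⟨a, haA, hla⟩ := exists_lt_of_lt_csSup hAne hl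
      have hau : a ≤ u := le_csSup hAb haA
      rcases eq_or_lt_of_le hau with h | hau'
      · exact h ▸ haA
      · obtain ⟨M, hM⟩ := haA.2
        refine ⟨⟨hu0, hut⟩, ?_⟩
        refine extend_bdd x ε a u (max M 0) hε haA.1.1 (le_of_lt hau') (le_max_right _ _)
          (fun v hv => le_max_of_le_left (hM hv)) (Function.leftLim x u) ?_
        intro s hs1 hs2
        exact hsub ⟨lt_trans hla hs1, hs2⟩
  rcases eq_or_lt_of_le hut with h | hut'
  · exact h ▸ huA.2
  · exfalso
    have hrc : Tendsto x (𝓝[≥] u) (𝓝 (x u)) := hx.1 u hu0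
    have hev : ∀ᶠ s in 𝓝[≥] u, |x s - x u| ≤ ε / 2 := by
      have hball : Metric.closedBall (x u) (ε / 2) ∈ 𝓝 (x u) :=
        Metric.closedBall_mem_nhds _ (by linarith)
      filter_upwards [hrc hball] with s hsb
      simpa [Metric.mem_closedBall, Real.dist_eq] using hsb
    obtain ⟨w, hw, hsub⟩ := mem_nhdsGE_iff_exists_Ico_subset.mp hev
    have huw : u < w := hw
    set b := min t ((u + w) / 2) with hb
    have hub : u < b := lt_min hut' (by linarith)
    obtain ⟨M, hM⟩ := huA.2
    have hbA : b ∈ A := by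
      refine ⟨⟨le_trans hu0 (le_of_lt hub), min_le_left _ _⟩, ?_⟩
      refine extend_bdd x ε u b (max M 0) hε hu0 (le_of_lt hub) (le_max_right _ _)
        (fun v hv => le_max_of_le_left (hM hv)) (x u) ?_
      intro s hs1 hs2
      refine hsub ⟨le_of_lt hs1, ?_⟩
      have : b ≤ (u + w) / 2 := min_le_right _ _
      linarith
    have := le_csSup hAb hbA
    linarith
end Aux3

/-- `x̃ᵉ_t = x_0 + UTV(x,[0,t],ε) - DTV(x,[0,t],ε)` approximates `x`
uniformly with accuracy `ε`. -/
theorem statement15 (x : ℝ → ℝ) (hx : Cadlag x) (ε : ℝ) (hε : 0 < ε)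
    (t : ℝ) (ht : 0 ≤ t) :
    |x 0 + UTV x 0 t ε - DTV x 0 t ε - x t| ≤ ε := by
  have hV := vset_bdd x hx ε t hε ht
  have hU : BddAbove (USet x 0 t ε) := bddAbove_USet hV
  have hD : BddAbove (DSet x 0 t ε) := bddAbove_DSet hV
  have h1 : sSup (USet x 0 t ε) ≤ x t - x 0 + ε + sSup (DSet x 0 t ε) :=
    utv_le_aux x t ε ht hε hD
  have hD' : BddAbove (DSet (fun s => -x s) 0 t ε) := by
    rw [← USet_eq]; exact hU
  have h2 := utv_le_aux (fun s => -x s) t ε ht hε hD'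
  rw [← DSet_eq, ← USet_eq] at h2
  have e1 : UTV x 0 t ε = sSup (USet x 0 t ε) := rfl
  have e2 : DTV x 0 t ε = sSup (DSet x 0 t ε) := rfl
  rw [e1, e2, abs_le]
  constructor
  · linarith
  · linarith
end
end

section
/- Let x: [0,∞) → ℝ be càdlàg, ε > 0 and t ≥ 0. Then TTV(x,[0,t],ε) = UTV(x,[0,t],ε) + DTV(x,[0,t],ε). -/
open MeasureTheory Filter Topology Set
open scoped Classical

noncomputable section

namespace S16

def upC (y : ℕ → ℝ) (ε : ℝ) (p : ℕ × ℕ) : ℝ := max (y p.2 - y p.1 - ε) 0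
def dnC (y : ℕ → ℝ) (ε : ℝ) (p : ℕ × ℕ) : ℝ := max (y p.1 - y p.2 - ε) 0
def ovl (p q : ℕ × ℕ) : ℕ := min p.2 q.2 - max p.1 q.1
def nno (p q : ℕ × ℕ) : Prop := p.2 ≤ q.1 ∨ q.2 ≤ p.1
def meas (U D : List (ℕ × ℕ)) : ℕ := (U.map (fun p => (D.map (fun q => ovl p q)).sum)).sum
def vals (y : ℕ → ℝ) (ε : ℝ) (U D : List (ℕ × ℕ)) : ℝ :=
  (U.map (upC y ε)).sum + (D.map (dnC y ε)).sum
def Good (N : ℕ) (U D : List (ℕ × ℕ)) : Prop :=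
  (∀ p ∈ U, p.1 ≤ p.2 ∧ p.2 ≤ N) ∧ (∀ p ∈ D, p.1 ≤ p.2 ∧ p.2 ≤ N) ∧
    U.Pairwise nno ∧ D.Pairwise nno
def tvs (y : ℕ → ℝ) (ε : ℝ) (n : ℕ) (c : ℕ → ℕ) : ℝ :=
  ∑ i ∈ Finset.range n, max (|y (c (i+1)) - y (c i)| - ε) 0

lemma meas_nil_left (D : List (ℕ × ℕ)) : meas [] D = 0 := rfl
lemma meas_nil_right (U : List (ℕ × ℕ)) : meas U [] = 0 := by simp [meas]
lemma meas_append_left (A B D : List (ℕ × ℕ)) : meas (A ++ B) D = meas A D + meas B D := by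
  simp [meas]
lemma meas_cons_left (p : ℕ × ℕ) (A D : List (ℕ × ℕ)) :
    meas (p :: A) D = meas [p] D + meas A D := by simp [meas]
lemma meas_append_right (U A B : List (ℕ × ℕ)) : meas U (A ++ B) = meas U A + meas U B := by
  induction U with
  | nil => rfl
  | cons p U ih => simp [meas] at ih ⊢; omega
lemma meas_cons_right (U : List (ℕ × ℕ)) (q : ℕ × ℕ) (A : List (ℕ × ℕ)) :
    meas U (q :: A) = meas U [q] + meas U A := by
  rw [show q :: A = [q] ++ A from rfl, meas_append_right]
lemma meas_singleton (p q : ℕ × ℕ) : meas [p] [q] = ovl p q := by simp [meas]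

lemma meas_mono_left {A B : List (ℕ × ℕ)} (h : ∀ w, meas A [w] ≤ meas B [w]) :
    ∀ Y, meas A Y ≤ meas B Y := by
  intro Y
  induction Y with
  | nil => simp [meas_nil_right]
  | cons w Y ih =>
    rw [show w :: Y = [w] ++ Y from rfl, meas_append_right, meas_append_right]
    exact Nat.add_le_add (h w) ih
lemma meas_mono_right {A B : List (ℕ × ℕ)} (h : ∀ w, meas [w] A ≤ meas [w] B) :
    ∀ X, meas X A ≤ meas X B := by
  intro X
  induction X with
  | nil => simp [meas_nil_left]
  | cons w X ih =>
    rw [show w :: X = [w] ++ X from rfl, meas_append_left, meas_append_left]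
    exact Nat.add_le_add (h w) ih

end S16

namespace S16

lemma pairwise_replace {l1 l2 M : List (ℕ × ℕ)} {p : ℕ × ℕ}
    (h : (l1 ++ p :: l2).Pairwise nno) (hM : M.Pairwise nno)
    (hsub : ∀ r ∈ M, p.1 ≤ r.1 ∧ r.2 ≤ p.2) :
    (l1 ++ M ++ l2).Pairwise nno := by
  rw [List.append_assoc, List.pairwise_append]
  rw [List.pairwise_append] at h
  obtain ⟨h1, h2, h12⟩ := h
  rw [List.pairwise_cons] at h2
  obtain ⟨hp2, h2⟩ := h2
  refine ⟨h1, ?_, ?_⟩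
  · rw [List.pairwise_append]
    refine ⟨hM, h2, fun r hr b hb => ?_⟩
    have e1 := hp2 b hb; have e2 := hsub r hr; unfold nno at *; omega
  · intro a ha b hb
    rcases List.mem_append.1 hb with hb | hb
    · have e1 := h12 a ha p List.mem_cons_self
      have e2 := hsub b hb; unfold nno at *; omega
    · exact h12 a ha b (List.mem_cons_of_mem _ hb)

lemma step (y : ℕ → ℝ) (ε : ℝ) (N : ℕ) (p q : ℕ × ℕ) (U1 U2 D1 D2 MU MD : List (ℕ × ℕ))
    (hg : Good N (U1 ++ p :: U2) (D1 ++ q :: D2))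
    (hMU : ∀ r ∈ MU, (p.1 ≤ r.1 ∧ r.2 ≤ p.2) ∧ r.1 ≤ r.2)
    (hMD : ∀ r ∈ MD, (q.1 ≤ r.1 ∧ r.2 ≤ q.2) ∧ r.1 ≤ r.2)
    (hMUp : MU.Pairwise nno) (hMDp : MD.Pairwise nno)
    (h5 : ∀ w, meas MU [w] ≤ meas [p] [w])
    (h5' : ∀ w, meas [w] MD ≤ meas [w] [q])
    (h6 : meas MU MD = 0)
    (h7 : upC y ε p + dnC y ε q ≤ (MU.map (upC y ε)).sum + (MD.map (dnC y ε)).sum) :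
    Good N (U1 ++ MU ++ U2) (D1 ++ MD ++ D2) ∧
      meas (U1 ++ MU ++ U2) (D1 ++ MD ++ D2) + ovl p q ≤
        meas (U1 ++ p :: U2) (D1 ++ q :: D2) ∧
      vals y ε (U1 ++ p :: U2) (D1 ++ q :: D2) ≤ vals y ε (U1 ++ MU ++ U2) (D1 ++ MD ++ D2) := by
  obtain ⟨hgU, hgD, hgUp, hgDp⟩ := hg
  have hpmem : p ∈ U1 ++ p :: U2 := by simp
  have hqmem : q ∈ D1 ++ q :: D2 := by simp
  have hA := meas_mono_right h5'
  have hB := meas_mono_left h5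
  have eL : ∀ Y, meas (U1 ++ MU ++ U2) Y = meas U1 Y + meas MU Y + meas U2 Y := by
    intro Y; rw [meas_append_left, meas_append_left]
  have eLold : ∀ Y, meas (U1 ++ p :: U2) Y = meas U1 Y + meas [p] Y + meas U2 Y := by
    intro Y
    rw [show p :: U2 = [p] ++ U2 from rfl, meas_append_left, meas_append_left]; omega
  have eR : ∀ X, meas X (D1 ++ MD ++ D2) = meas X D1 + meas X MD + meas X D2 := by
    intro X; rw [meas_append_right, meas_append_right]
  have eRold : ∀ X, meas X (D1 ++ q :: D2) = meas X D1 + meas X [q] + meas X D2 := by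
    intro X
    rw [show q :: D2 = [q] ++ D2 from rfl, meas_append_right, meas_append_right]; omega
  refine ⟨⟨?_, ?_, ?_, ?_⟩, ?_, ?_⟩
  · intro r hr
    simp only [List.append_assoc, List.mem_append] at hr
    rcases hr with h | h | h
    · exact hgU r (by simp [h])
    · exact ⟨(hMU r h).2, le_trans (hMU r h).1.2 (hgU p hpmem).2⟩
    · exact hgU r (by simp [h])
  · intro r hr
    simp only [List.append_assoc, List.mem_append] at hr
    rcases hr with h | h | h
    · exact hgD r (by simp [h])
    · exact ⟨(hMD r h).2, le_trans (hMD r h).1.2 (hgD q hqmem).2⟩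
    · exact hgD r (by simp [h])
  · exact pairwise_replace hgUp hMUp (fun r hr => (hMU r hr).1)
  · exact pairwise_replace hgDp hMDp (fun r hr => (hMD r hr).1)
  · have h1 := hA U1; have h2 := hA U2; have h3 := hB D1; have h4 := hB D2
    rw [eL (D1 ++ MD ++ D2), eR U1, eR MU, eR U2, eLold (D1 ++ q :: D2),
      eRold U1, eRold [p], eRold U2, meas_singleton, h6]
    omega
  · simp only [vals, List.map_append, List.sum_append, List.map_cons, List.sum_cons]
    linarith [h7]

end S16

namespace S16

def sC (y : ℕ → ℝ) (ε : ℝ) (P : (ℕ × ℕ) × Bool) : ℝ :=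
  if P.2 then upC y ε P.1 else dnC y ε P.1

lemma sC_nonneg (y : ℕ → ℝ) (ε : ℝ) (P : (ℕ × ℕ) × Bool) : 0 ≤ sC y ε P := by
  unfold sC upC dnC; split <;> exact le_max_right _ _

lemma sC_le (y : ℕ → ℝ) (ε : ℝ) (P : (ℕ × ℕ) × Bool) :
    sC y ε P ≤ max (|y P.1.2 - y P.1.1| - ε) 0 := by
  unfold sC upC dnC; split
  · exact max_le_max (sub_le_sub_right (le_abs_self _) _) le_rfl
  · refine max_le_max (sub_le_sub_right ?_ _) le_rfl
    rw [abs_sub_comm]; exact le_abs_self _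

lemma tvs_nonneg (y : ℕ → ℝ) (ε : ℝ) (n : ℕ) (c : ℕ → ℕ) : 0 ≤ tvs y ε n c :=
  Finset.sum_nonneg fun _ _ => le_max_right _ _

lemma assemble (y : ℕ → ℝ) (ε : ℝ) (N : ℕ) :
    ∀ L : List ((ℕ × ℕ) × Bool),
      (∀ P ∈ L, P.1.1 < P.1.2 ∧ P.1.2 ≤ N) →
      L.Pairwise (fun P Q => P.1.2 ≤ Q.1.1) →
      ∃ n c, (∀ i, i < n → c i < c (i+1)) ∧ c n ≤ N ∧
        (∀ P ∈ L.head?, c 0 = P.1.1) ∧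
        (L.map (sC y ε)).sum ≤ tvs y ε n c := by
  intro L
  induction L with
  | nil =>
    intro _ _
    exact ⟨0, fun _ => 0, by omega, Nat.zero_le N, by simp, by simp [tvs]⟩
  | cons P L ih =>
    intro hb hpw
    obtain ⟨hPab, hPN⟩ := hb P (by simp)
    have hpw' := List.pairwise_cons.1 hpw
    obtain ⟨n, c, hc, hcN, hhead, hsum⟩ := ih (fun Q hQ => hb Q (by simp [hQ])) hpw'.2
    rcases L with _ | ⟨Q, L2⟩
    · refine ⟨1, fun i => match i with | 0 => P.1.1 | _+1 => P.1.2, ?_, hPN, by simp, ?_⟩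
      · intro i hi
        have : i = 0 := by omega
        subst this; exact hPab
      · have : tvs y ε 1 (fun i => match i with | 0 => P.1.1 | _+1 => P.1.2)
            = max (|y P.1.2 - y P.1.1| - ε) 0 := by
          simp [tvs]
        rw [this]; simpa using sC_le y ε P
    · have hbQ : P.1.2 ≤ Q.1.1 := hpw'.1 Q (by simp)
      have hcQ : c 0 = Q.1.1 := hhead Q (by simp)
      rcases eq_or_lt_of_le (hbQ.trans hcQ.symm.le) with he | hlt
      · -- P.1.2 = c 0 : prepend one point
        refine ⟨n+1, fun i => match i with | 0 => P.1.1 | j+1 => c j, ?_, hcN, by simp, ?_⟩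
        · intro i hi
          rcases i with _ | j
          · show P.1.1 < c 0; omega
          · exact hc j (by omega)
        · have e := Finset.sum_range_succ'
            (fun i => max (|y ((fun i => match i with | 0 => P.1.1 | j+1 => c j) (i+1))
              - y ((fun i => match i with | 0 => P.1.1 | j+1 => c j) i)| - ε) 0) n
          show (sC y ε P + ((Q :: L2).map (sC y ε)).sum) ≤ _
          unfold tvs at hsum ⊢
          rw [e]
          have h0 : sC y ε P ≤ max (|y (c 0) - y P.1.1| - ε) 0 := by
            rw [← he]; simpa using sC_le y ε P
          show sC y ε P + _ ≤
            (∑ i ∈ Finset.range n, max (|y (c (i+1)) - y (c i)| - ε) 0)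
              + max (|y (c 0) - y P.1.1| - ε) 0
          linarith
      · -- P.1.2 < c 0 : prepend two points
        refine ⟨n+2, fun i => match i with | 0 => P.1.1 | 1 => P.1.2 | j+2 => c j, ?_, hcN, by simp, ?_⟩
        · intro i hi
          rcases i with _ | (_ | j)
          · exact hPab
          · exact hlt
          · exact hc j (by omega)
        · set c' : ℕ → ℕ := fun i => match i with | 0 => P.1.1 | 1 => P.1.2 | j+2 => c j with hc'
          have e1 := Finset.sum_range_succ'
            (fun i => max (|y (c' (i+1)) - y (c' i)| - ε) 0) (n+1)
          have e2 := Finset.sum_range_succ'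
            (fun i => max (|y (c' (i+2)) - y (c' (i+1))| - ε) 0) n
          show (sC y ε P + ((Q :: L2).map (sC y ε)).sum) ≤ tvs y ε (n+2) c'
          unfold tvs at hsum ⊢
          rw [e1]
          have : ∑ i ∈ Finset.range (n+1),
              max (|y (c' (i+1+1)) - y (c' (i+1))| - ε) 0
              = (∑ i ∈ Finset.range n, max (|y (c (i+1)) - y (c i)| - ε) 0)
                + max (|y (c 0) - y P.1.2| - ε) 0 := by
            rw [e2]
          rw [this]
          have h0 : sC y ε P ≤ max (|y P.1.2 - y P.1.1| - ε) 0 := sC_le y ε P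
          have h1 : (0:ℝ) ≤ max (|y (c 0) - y P.1.2| - ε) 0 := le_max_right _ _
          have h2 : max (|y (c' 1) - y (c' 0)| - ε) 0 = max (|y P.1.2 - y P.1.1| - ε) 0 := rfl
          rw [h2]
          linarith

end S16

namespace S16

lemma sum_filter_zero {α : Type*} (f : α → ℝ) (P : α → Bool) :
    ∀ l : List α, (∀ a ∈ l, P a = false → f a = 0) →
      ((l.filter P).map f).sum = (l.map f).sum := by
  intro l
  induction l with
  | nil => simp
  | cons a l ih =>
    intro h
    by_cases hP : P a
    · rw [List.filter_cons_of_pos hP]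
      simp only [List.map_cons, List.sum_cons, ih (fun b hb hb' => h b (by simp [hb]) hb')]
    · rw [List.filter_cons_of_neg (by simpa using hP)]
      simp only [List.map_cons, List.sum_cons, ih (fun b hb hb' => h b (by simp [hb]) hb'),
        h a (by simp) (by simpa using hP), zero_add]

lemma no_cross (y : ℕ → ℝ) (ε : ℝ) (hε : 0 ≤ ε) (N : ℕ) (U D : List (ℕ × ℕ))
    (hg : Good N U D)
    (hno : ∀ p ∈ U, ∀ q ∈ D, min p.2 q.2 ≤ max p.1 q.1) :
    ∃ n c, (∀ i, i < n → c i < c (i+1)) ∧ c n ≤ N ∧ vals y ε U D ≤ tvs y ε n c := by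
  classical
  obtain ⟨hgU, hgD, hgUp, hgDp⟩ := hg
  set U' := U.filter (fun p => decide (ε < y p.2 - y p.1)) with hU'
  set D' := D.filter (fun p => decide (ε < y p.1 - y p.2)) with hD'
  have hUmem : ∀ p ∈ U', p ∈ U ∧ ε < y p.2 - y p.1 := by
    intro p hp; rw [hU', List.mem_filter] at hp; exact ⟨hp.1, by simpa using hp.2⟩
  have hDmem : ∀ p ∈ D', p ∈ D ∧ ε < y p.1 - y p.2 := by
    intro p hp; rw [hD', List.mem_filter] at hp; exact ⟨hp.1, by simpa using hp.2⟩
  have hUstrict : ∀ p ∈ U', p.1 < p.2 := by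
    intro p hp
    have h1 := (hUmem p hp).2
    have h2 := (hgU p (hUmem p hp).1).1
    rcases h2.lt_or_eq with h | h
    · exact h
    · exfalso; rw [h] at h1; simp at h1; linarith
  have hDstrict : ∀ p ∈ D', p.1 < p.2 := by
    intro p hp
    have h1 := (hDmem p hp).2
    have h2 := (hgD p (hDmem p hp).1).1
    rcases h2.lt_or_eq with h | h
    · exact h
    · exfalso; rw [h] at h1; simp at h1; linarith
  set L0 : List ((ℕ × ℕ) × Bool) :=
    U'.map (fun p => (p, true)) ++ D'.map (fun p => (p, false)) with hL0
  have hL0mem : ∀ P ∈ L0, (P.1 ∈ U' ∧ P.2 = true) ∨ (P.1 ∈ D' ∧ P.2 = false) := by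
    intro P hP
    rw [hL0, List.mem_append] at hP
    rcases hP with hP | hP
    · obtain ⟨p, hp, rfl⟩ := List.mem_map.1 hP; exact Or.inl ⟨hp, rfl⟩
    · obtain ⟨p, hp, rfl⟩ := List.mem_map.1 hP; exact Or.inr ⟨hp, rfl⟩
  have hL0b : ∀ P ∈ L0, P.1.1 < P.1.2 ∧ P.1.2 ≤ N := by
    intro P hP
    rcases hL0mem P hP with ⟨h, _⟩ | ⟨h, _⟩
    · exact ⟨hUstrict _ h, (hgU _ (hUmem _ h).1).2⟩
    · exact ⟨hDstrict _ h, (hgD _ (hDmem _ h).1).2⟩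
  have hL0nno : L0.Pairwise (fun P Q => nno P.1 Q.1) := by
    rw [hL0, List.pairwise_append]
    refine ⟨List.Pairwise.map _ (fun a b h => h)
        ((hgUp.sublist List.filter_sublist) : U'.Pairwise nno), ?_, ?_⟩
    · exact List.Pairwise.map _ (fun a b h => h)
        ((hgDp.sublist List.filter_sublist) : D'.Pairwise nno)
    · intro a ha b hb
      obtain ⟨p, hp, rfl⟩ := List.mem_map.1 ha
      obtain ⟨q, hq, rfl⟩ := List.mem_map.1 hb
      have h1 := hno p (hUmem p hp).1 q (hDmem q hq).1
      have h2 := hUstrict p hp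
      have h3 := hDstrict q hq
      show nno p q
      unfold nno; omega
  set Ls := L0.mergeSort (fun P Q => Nat.ble P.1.1 Q.1.1) with hLs
  have hperm : Ls.Perm L0 := List.mergeSort_perm L0 _
  have hsorted : Ls.Pairwise (fun P Q => Nat.ble P.1.1 Q.1.1 = true) := by
    rw [hLs]
    exact List.pairwise_mergeSort (fun a b c => by simp [Nat.ble_eq]; omega)
      (fun a b => by simp [Nat.ble_eq]; omega) L0
  have hLsb : ∀ P ∈ Ls, P.1.1 < P.1.2 ∧ P.1.2 ≤ N := fun P hP => hL0b P (hperm.mem_iff.1 hP)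
  have hLsnno : Ls.Pairwise (fun P Q => nno P.1 Q.1) := by
    refine (hperm.pairwise_iff ?_).2 hL0nno
    intro a b h; unfold nno at *; omega
  have hchain : Ls.Pairwise (fun P Q => P.1.2 ≤ Q.1.1) := by
    refine (hsorted.and hLsnno).imp_of_mem ?_
    intro P Q hP hQ h
    have h1 := hLsb P hP
    have h2 := hLsb Q hQ
    have h3 := h.1
    have h4 := h.2
    rw [Nat.ble_eq] at h3
    unfold nno at h4; omega
  obtain ⟨n, c, h1, h2, _, h3⟩ := assemble y ε N Ls hLsb hchain
  refine ⟨n, c, h1, h2, ?_⟩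
  have ev : vals y ε U D = (L0.map (sC y ε)).sum := by
    rw [hL0, List.map_append, List.sum_append, List.map_map, List.map_map]
    have e1 : sC y ε ∘ (fun p => (p, true)) = upC y ε := by funext p; simp [sC]
    have e2 : sC y ε ∘ (fun p => (p, false)) = dnC y ε := by funext p; simp [sC]
    rw [e1, e2]
    unfold vals
    rw [sum_filter_zero (upC y ε) _ U, sum_filter_zero (dnC y ε) _ D]
    · intro a ha ha'
      simp only [decide_eq_false_iff_not, not_lt] at ha'
      unfold dnC; rw [max_eq_right]; linarith
    · intro a ha ha'
      simp only [decide_eq_false_iff_not, not_lt] at ha'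
      unfold upC; rw [max_eq_right]; linarith
  rw [ev, ← (hperm.map (sC y ε)).sum_eq]
  exact h3

end S16

namespace S16

lemma meas_decomp_left (U1 U2 D : List (ℕ × ℕ)) (p : ℕ × ℕ) :
    meas (U1 ++ p :: U2) D = meas U1 D + meas [p] D + meas U2 D := by
  rw [show p :: U2 = [p] ++ U2 from rfl, meas_append_left, meas_append_left]; omega

lemma meas_decomp_right (U D1 D2 : List (ℕ × ℕ)) (q : ℕ × ℕ) :
    meas U (D1 ++ q :: D2) = meas U D1 + meas U [q] + meas U D2 := by
  rw [show q :: D2 = [q] ++ D2 from rfl, meas_append_right, meas_append_right]; omega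

lemma ovl_le_meas {p q : ℕ × ℕ} {U D : List (ℕ × ℕ)} (hp : p ∈ U) (hq : q ∈ D) :
    ovl p q ≤ meas U D := by
  obtain ⟨U1, U2, rfl⟩ := List.append_of_mem hp
  obtain ⟨D1, D2, rfl⟩ := List.append_of_mem hq
  simp only [meas_decomp_left, meas_decomp_right, meas_singleton]
  omega

set_option maxHeartbeats 2000000 in
lemma disc (y : ℕ → ℝ) (ε : ℝ) (hε : 0 ≤ ε) (N : ℕ) :
    ∀ m (U D : List (ℕ × ℕ)), meas U D ≤ m → Good N U D →
      ∃ n c, (∀ i, i < n → c i < c (i+1)) ∧ c n ≤ N ∧ vals y ε U D ≤ tvs y ε n c := by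
  intro m
  induction m with
  | zero =>
    intro U D hm hg
    apply no_cross y ε hε N U D hg
    intro p hp q hq
    by_contra hlt
    push_neg at hlt
    have h1 : 1 ≤ ovl p q := by unfold ovl; omega
    have h2 := ovl_le_meas hp hq
    omega
  | succ m ih =>
    intro U D hm hg
    by_cases hex : ∃ p ∈ U, ∃ q ∈ D, max p.1 q.1 < min p.2 q.2
    · obtain ⟨p, hp, q, hq, hov⟩ := hex
      obtain ⟨U1, U2, rfl⟩ := List.append_of_mem hp
      obtain ⟨D1, D2, rfl⟩ := List.append_of_mem hq
      have hbp := hg.1 p (by simp)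
      have hbq := hg.2.1 q (by simp)
      have hovl1 : 1 ≤ ovl p q := by unfold ovl; omega
      have APPLY : ∀ MU MD : List (ℕ × ℕ),
          (∀ r ∈ MU, (p.1 ≤ r.1 ∧ r.2 ≤ p.2) ∧ r.1 ≤ r.2) →
          (∀ r ∈ MD, (q.1 ≤ r.1 ∧ r.2 ≤ q.2) ∧ r.1 ≤ r.2) →
          MU.Pairwise nno → MD.Pairwise nno →
          (∀ w, meas MU [w] ≤ meas [p] [w]) →
          (∀ w, meas [w] MD ≤ meas [w] [q]) →
          meas MU MD = 0 →
          upC y ε p + dnC y ε q ≤ (MU.map (upC y ε)).sum + (MD.map (dnC y ε)).sum →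
          ∃ n c, (∀ i, i < n → c i < c (i+1)) ∧ c n ≤ N ∧
            vals y ε (U1 ++ p :: U2) (D1 ++ q :: D2) ≤ tvs y ε n c := by
        intro MU MD h1 h2 h3 h4 h5 h5' h6 h7
        obtain ⟨hg', hm', hv'⟩ := step y ε N p q U1 U2 D1 D2 MU MD hg h1 h2 h3 h4 h5 h5' h6 h7
        obtain ⟨n, c, hc1, hc2, hc3⟩ := ih _ _ (by omega) hg'
        exact ⟨n, c, hc1, hc2, le_trans hv' hc3⟩
      by_cases hu0 : y p.2 - y p.1 ≤ ε
      · refine APPLY [] [q] (by simp) ?_ (by simp) (by simp) ?_ (fun w => le_rfl) rfl ?_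
        · intro r hr; simp at hr; subst hr; exact ⟨⟨le_rfl, le_rfl⟩, hbq.1⟩
        · intro w; simp [meas]
        · have : upC y ε p = 0 := max_eq_right (by linarith)
          simp [this]
      · by_cases hd0 : y q.1 - y q.2 ≤ ε
        · refine APPLY [p] [] ?_ (by simp) (by simp) (by simp) (fun w => le_rfl) ?_ ?_ ?_
          · intro r hr; simp at hr; subst hr; exact ⟨⟨le_rfl, le_rfl⟩, hbp.1⟩
          · intro w; simp [meas]
          · simp [meas]
          · have : dnC y ε q = 0 := max_eq_right (by linarith)
            simp [this]
        · push_neg at hu0 hd0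
          have kup : upC y ε p = y p.2 - y p.1 - ε := max_eq_left (by linarith)
          have kdn : dnC y ε q = y q.1 - y q.2 - ε := max_eq_left (by linarith)
          have k1 : y q.1 - y p.1 - ε ≤ upC y ε (p.1, q.1) := le_max_left _ _
          have k2 : y p.2 - y q.2 - ε ≤ dnC y ε (p.2, q.2) := le_max_left _ _
          have k3 : y p.2 - y q.2 - ε ≤ upC y ε (q.2, p.2) := le_max_left _ _
          have k4 : y q.1 - y p.1 - ε ≤ dnC y ε (q.1, p.1) := le_max_left _ _
          rcases le_total p.1 q.1 with hA | hB <;> rcases le_total p.2 q.2 with hS | hS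
          · -- A1 : p.1 ≤ q.1, p.2 ≤ q.2 (crossing, up first)
            rcases le_total (upC y ε p) (upC y ε (p.1, q.1)) with hopt | hopt
            · refine APPLY [(p.1, q.1)] [q] ?_ ?_ (by simp) (by simp) ?_ (fun w => le_rfl) ?_ ?_
              · intro r hr; simp at hr; subst hr
                exact ⟨⟨le_rfl, show q.1 ≤ p.2 by omega⟩, hA⟩
              · intro r hr; simp at hr; subst hr; exact ⟨⟨le_rfl, le_rfl⟩, hbq.1⟩
              · intro w; simp [meas, ovl] <;> omega
              · simp [meas, ovl] <;> omega
              · simp only [List.map_cons, List.map_nil, List.sum_cons, List.sum_nil]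
                linarith
            · refine APPLY [p] [(p.2, q.2)] ?_ ?_ (by simp) (by simp) (fun w => le_rfl) ?_ ?_ ?_
              · intro r hr; simp at hr; subst hr; exact ⟨⟨le_rfl, le_rfl⟩, hbp.1⟩
              · intro r hr; simp at hr; subst hr
                exact ⟨⟨show q.1 ≤ p.2 by omega, le_rfl⟩, hS⟩
              · intro w; simp [meas, ovl] <;> omega
              · simp [meas, ovl] <;> omega
              · simp only [List.map_cons, List.map_nil, List.sum_cons, List.sum_nil]
                linarith
          · -- A2 : p.1 ≤ q.1, q.2 ≤ p.2 (down nested in up)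
            refine APPLY [(p.1, q.1), (q.2, p.2)] [q] ?_ ?_ ?_ (by simp) ?_ (fun w => le_rfl) ?_ ?_
            · intro r hr; simp at hr
              rcases hr with rfl | rfl
              · exact ⟨⟨le_rfl, show q.1 ≤ p.2 by omega⟩, hA⟩
              · exact ⟨⟨show p.1 ≤ q.2 by omega, le_rfl⟩, hS⟩
            · intro r hr; simp at hr; subst hr; exact ⟨⟨le_rfl, le_rfl⟩, hbq.1⟩
            · simp [nno]; omega
            · intro w; simp [meas, ovl] <;> omega
            · simp [meas, ovl] <;> omega
            · simp only [List.map_cons, List.map_nil, List.sum_cons, List.sum_nil]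
              linarith
          · -- B2 : q.1 ≤ p.1, p.2 ≤ q.2 (up nested in down)
            refine APPLY [p] [(q.1, p.1), (p.2, q.2)] ?_ ?_ (by simp) ?_ (fun w => le_rfl) ?_ ?_ ?_
            · intro r hr; simp at hr; subst hr; exact ⟨⟨le_rfl, le_rfl⟩, hbp.1⟩
            · intro r hr; simp at hr
              rcases hr with rfl | rfl
              · exact ⟨⟨le_rfl, show p.1 ≤ q.2 by omega⟩, hB⟩
              · exact ⟨⟨show q.1 ≤ p.2 by omega, le_rfl⟩, hS⟩
            · simp [nno]; omega
            · intro w; simp [meas, ovl] <;> omega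
            · simp [meas, ovl] <;> omega
            · simp only [List.map_cons, List.map_nil, List.sum_cons, List.sum_nil]
              linarith
          · -- B1 : q.1 ≤ p.1, q.2 ≤ p.2 (crossing, down first)
            rcases le_total (dnC y ε q) (dnC y ε (q.1, p.1)) with hopt | hopt
            · refine APPLY [p] [(q.1, p.1)] ?_ ?_ (by simp) (by simp) (fun w => le_rfl) ?_ ?_ ?_
              · intro r hr; simp at hr; subst hr; exact ⟨⟨le_rfl, le_rfl⟩, hbp.1⟩
              · intro r hr; simp at hr; subst hr
                exact ⟨⟨le_rfl, show p.1 ≤ q.2 by omega⟩, hB⟩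
              · intro w; simp [meas, ovl] <;> omega
              · simp [meas, ovl] <;> omega
              · simp only [List.map_cons, List.map_nil, List.sum_cons, List.sum_nil]
                linarith
            · refine APPLY [(q.2, p.2)] [q] ?_ ?_ (by simp) (by simp) ?_ (fun w => le_rfl) ?_ ?_
              · intro r hr; simp at hr; subst hr
                exact ⟨⟨show p.1 ≤ q.2 by omega, le_rfl⟩, hS⟩
              · intro r hr; simp at hr; subst hr; exact ⟨⟨le_rfl, le_rfl⟩, hbq.1⟩
              · intro w; simp [meas, ovl] <;> omega
              · simp [meas, ovl] <;> omega
              · simp only [List.map_cons, List.map_nil, List.sum_cons, List.sum_nil]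
                linarith
    · push_neg at hex
      apply no_cross y ε hε N U D hg
      intro p hp q hq
      have := hex p hp q hq
      omega

end S16

namespace S16

lemma chain_mono {β : Type*} [Preorder β] {τ : ℕ → β} {n : ℕ}
    (h : ∀ i, i < n → τ i < τ (i+1)) :
    ∀ i j, i ≤ j → j ≤ n → τ i ≤ τ j := by
  intro i j
  induction j with
  | zero => intro h1 _; interval_cases i; exact le_rfl
  | succ j ih =>
    intro h1 h2
    rcases Nat.eq_or_lt_of_le h1 with rfl | hlt
    · exact le_rfl
    · exact le_trans (ih (by omega) (by omega)) (le_of_lt (h j (by omega)))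

lemma exists_osc (x : ℝ → ℝ) (hx : Cadlag x) (t : ℝ) (ht : 0 ≤ t) (δ : ℝ) (hδ : 0 < δ) :
    ∃ (N : ℕ) (s : ℕ → ℝ), s 0 = 0 ∧ s N = t ∧ (∀ j, j < N → s j < s (j+1)) ∧
      ∀ j, j < N → ∀ v, s j ≤ v → v < s (j+1) → |x v - x (s j)| ≤ δ := by
  classical
  set A : Set ℝ := {u : ℝ | 0 ≤ u ∧ u ≤ t ∧ ∃ (N : ℕ) (s : ℕ → ℝ), s 0 = 0 ∧ s N = u ∧
    (∀ j, j < N → s j < s (j+1)) ∧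
    ∀ j, j < N → ∀ v, s j ≤ v → v < s (j+1) → |x v - x (s j)| ≤ δ} with hA
  have h0 : (0:ℝ) ∈ A := ⟨le_rfl, ht, 0, fun _ => 0, rfl, rfl, by omega, by omega⟩
  have hne : A.Nonempty := ⟨0, h0⟩
  have hbdd : BddAbove A := ⟨t, fun u hu => hu.2.1⟩
  set c := sSup A with hc
  have hc0 : 0 ≤ c := le_csSup hbdd h0
  have hct : c ≤ t := csSup_le hne (fun u hu => hu.2.1)
  have hcA : c ∈ A := by
    rcases eq_or_lt_of_le hc0 with he | hpos
    · rw [← he]; exact h0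
    · have hev : x ⁻¹' Metric.ball (Function.leftLim x c) (δ/2) ∈ 𝓝[<] c :=
        hx.2 c hpos (Metric.ball_mem_nhds _ (by linarith))
      obtain ⟨l, hl, hsub⟩ := mem_nhdsLT_iff_exists_Ioo_subset.1 hev
      obtain ⟨a, haA, hal⟩ := exists_lt_of_lt_csSup hne (show l < sSup A from hl)
      have hac : a ≤ c := le_csSup hbdd haA
      rcases eq_or_lt_of_le hac with he | halt
      · rw [← he]; exact haA
      · obtain ⟨ha0, hat, Np, sp, hs0, hsN, hmono, hosc⟩ := haA
        refine ⟨hc0, hct, Np+1, fun j => if j ≤ Np then sp j else c, by simp [hs0], by simp, ?_, ?_⟩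
        · intro j hj
          rcases Nat.lt_or_ge j Np with h | h
          · simp only [if_pos (by omega : j ≤ Np), if_pos (by omega : j+1 ≤ Np)]
            exact hmono j h
          · have hj' : j = Np := by omega
            subst hj'
            simp only [if_pos le_rfl, if_neg (by omega : ¬ j+1 ≤ j)]
            rw [hsN]; exact halt
        · intro j hj v hv1 hv2
          rcases Nat.lt_or_ge j Np with h | h
          · simp only [if_pos (by omega : j ≤ Np), if_pos (by omega : j+1 ≤ Np)] at hv1 hv2 ⊢
            exact hosc j h v hv1 hv2
          · have hj' : j = Np := by omega
            subst hj'
            simp only [if_pos le_rfl, if_neg (by omega : ¬ j+1 ≤ j)] at hv1 hv2 ⊢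
            rw [hsN] at hv1 ⊢
            have hva : x v ∈ Metric.ball (Function.leftLim x c) (δ/2) := by
              apply hsub; exact ⟨lt_of_lt_of_le hal hv1, hv2⟩
            have haa : x a ∈ Metric.ball (Function.leftLim x c) (δ/2) := by
              apply hsub; exact ⟨hal, halt⟩
            rw [Metric.mem_ball, Real.dist_eq] at hva haa
            have : |x v - x a| ≤ |x v - Function.leftLim x c| + |Function.leftLim x c - x a| :=
              abs_sub_le _ _ _
            rw [abs_sub_comm (Function.leftLim x c) (x a)] at this
            linarith
  have hceq : c = t := by
    by_contra hne'
    have hclt : c < t := lt_of_le_of_ne hct hne'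
    have hev : x ⁻¹' Metric.ball (x c) δ ∈ 𝓝[≥] c :=
      hx.1 c hc0 (Metric.ball_mem_nhds _ hδ)
    obtain ⟨u, hu, hsub⟩ := mem_nhdsGE_iff_exists_Ico_subset.1 hev
    set b := min u t with hb
    have hcb : c < b := lt_min hu hclt
    obtain ⟨_, _, Np, sp, hs0, hsN, hmono, hosc⟩ := hcA
    have hbA : b ∈ A := by
      refine ⟨by linarith, min_le_right u t, Np+1, fun j => if j ≤ Np then sp j else b,
        by simp [hs0], by simp, ?_, ?_⟩
      · intro j hj
        rcases Nat.lt_or_ge j Np with h | h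
        · simp only [if_pos (by omega : j ≤ Np), if_pos (by omega : j+1 ≤ Np)]
          exact hmono j h
        · have hj' : j = Np := by omega
          subst hj'
          simp only [if_pos le_rfl, if_neg (by omega : ¬ j+1 ≤ j)]
          rw [hsN]; exact hcb
      · intro j hj v hv1 hv2
        rcases Nat.lt_or_ge j Np with h | h
        · simp only [if_pos (by omega : j ≤ Np), if_pos (by omega : j+1 ≤ Np)] at hv1 hv2 ⊢
          exact hosc j h v hv1 hv2
        · have hj' : j = Np := by omega
          subst hj'
          simp only [if_pos le_rfl, if_neg (by omega : ¬ j+1 ≤ j)] at hv1 hv2 ⊢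
          rw [hsN] at hv1 ⊢
          have hvb : x v ∈ Metric.ball (x c) δ := by
            apply hsub; exact ⟨hv1, lt_of_lt_of_le hv2 (min_le_left u t)⟩
          rw [Metric.mem_ball, Real.dist_eq] at hvb
          exact le_of_lt hvb
    have := le_csSup hbdd hbA
    rw [← hc] at this
    linarith
  rw [hceq] at hcA
  exact hcA.2.2

end S16

namespace S16

lemma bddT (x : ℝ → ℝ) (hx : Cadlag x) (ε : ℝ) (hε : 0 < ε) (t : ℝ) (ht : 0 ≤ t) :
    ∃ C : ℝ, ∀ (n : ℕ) (τ : ℕ → ℝ), 0 ≤ τ 0 → τ n ≤ t → (∀ i, i < n → τ i < τ (i+1)) →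
      ∑ i ∈ Finset.range n, max (|x (τ (i+1)) - x (τ i)| - ε) 0 ≤ C := by
  classical
  obtain ⟨N, s, hs0, hsN, hsm, hosc⟩ := exists_osc x hx t ht (ε/2) (by linarith)
  set M : ℝ := (∑ j ∈ Finset.range (N+1), |x (s j)|) + |x t| + ε/2 + 1 with hM_def
  have hsum_nn : 0 ≤ ∑ j ∈ Finset.range (N+1), |x (s j)| :=
    Finset.sum_nonneg fun _ _ => abs_nonneg _
  have hMpos : 0 < M := by
    have := abs_nonneg (x t); rw [hM_def]; linarith
  have hM : ∀ v, 0 ≤ v → v ≤ t → |x v| ≤ M := by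
    intro v h0 h1
    rcases eq_or_lt_of_le h1 with he | hvt
    · rw [he, hM_def]; linarith
    · have hP0 : s 0 ≤ v := by simpa [hs0] using h0
      have hPj : s (Nat.findGreatest (fun k => s k ≤ v) N) ≤ v :=
        Nat.findGreatest_spec (P := fun k => s k ≤ v) (Nat.zero_le N) hP0
      set j := Nat.findGreatest (fun k => s k ≤ v) N with hj
      have hjN : j ≤ N := Nat.findGreatest_le N
      have hjlt : j < N := by
        rcases eq_or_lt_of_le hjN with he' | h'
        · exfalso; rw [he'] at hPj; rw [hsN] at hPj; linarith
        · exact h'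
      have hnext : v < s (j+1) := by
        by_contra hh
        push_neg at hh
        exact Nat.findGreatest_is_greatest (P := fun k => s k ≤ v) (n := N)
          (by omega) (by omega) hh
      have h2 := hosc j hjlt v hPj hnext
      have h3 : |x (s j)| ≤ ∑ j ∈ Finset.range (N+1), |x (s j)| :=
        Finset.single_le_sum (f := fun k => |x (s k)|) (fun i _ => abs_nonneg _)
          (Finset.mem_range.2 (by omega))
      have h4 : |x v| - |x (s j)| ≤ |x v - x (s j)| := abs_sub_abs_le_abs_sub _ _
      rw [hM_def]
      have := abs_nonneg (x t)
      linarith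
  refine ⟨(N : ℝ) * (2 * M), ?_⟩
  intro n τ hτ0 hτn hτm
  have hτmono := chain_mono hτm
  have hτmem : ∀ i, i ≤ n → 0 ≤ τ i ∧ τ i ≤ t := fun i hi =>
    ⟨le_trans hτ0 (hτmono 0 i (by omega) hi), le_trans (hτmono i n hi le_rfl) hτn⟩
  set f : ℕ → ℕ := fun i => Nat.findGreatest (fun k => s k ≤ τ i) N with hf
  have hfmono : ∀ i, i < n → f i ≤ f (i+1) := by
    intro i hi
    exact Nat.findGreatest_mono (fun k hk => le_trans hk (le_of_lt (hτm i hi))) le_rfl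
  have hfN : ∀ i, f i ≤ N := fun i => Nat.findGreatest_le N
  have hfspec : ∀ i, i ≤ n → s (f i) ≤ τ i := by
    intro i hi
    exact Nat.findGreatest_spec (P := fun k => s k ≤ τ i) (Nat.zero_le N)
      (show s 0 ≤ τ i by rw [hs0]; exact (hτmem i hi).1)
  have key : ∀ i, i < n → max (|x (τ (i+1)) - x (τ i)| - ε) 0 ≤ ((f (i+1) : ℝ) - f i) * (2*M) := by
    intro i hi
    have h0i := hτmem i (by omega)
    have h0i' := hτmem (i+1) (by omega)
    rcases eq_or_lt_of_le (hfmono i hi) with he | hlt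
    · have hPj : s (f i) ≤ τ i := hfspec i (by omega)
      have hPj' : s (f i) ≤ τ (i+1) := by rw [he]; exact hfspec (i+1) (by omega)
      have hjlt : f i < N := by
        rcases eq_or_lt_of_le (hfN i) with he' | h'
        · exfalso
          have e1 : s N ≤ τ i := by rw [← he']; exact hPj
          rw [hsN] at e1
          have := hτm i hi
          linarith [h0i'.2]
        · exact h'
      have hni : τ i < s (f i + 1) := by
        by_contra hh; push_neg at hh
        refine Nat.findGreatest_is_greatest (P := fun k => s k ≤ τ i) (n := N)
          ?_ (by omega) hh
        show f i < f i + 1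
        omega
      have hni' : τ (i+1) < s (f i + 1) := by
        by_contra hh; push_neg at hh
        refine Nat.findGreatest_is_greatest (k := f i + 1)
          (P := fun k => s k ≤ τ (i+1)) (n := N) ?_ (by omega) hh
        show f (i+1) < f i + 1
        omega
      have o1 := hosc (f i) hjlt (τ i) hPj hni
      have o2 := hosc (f i) hjlt (τ (i+1)) hPj' hni'
      have habs : |x (τ (i+1)) - x (τ i)| ≤ ε := by
        have h5 : |x (τ (i+1)) - x (τ i)| ≤ |x (τ (i+1)) - x (s (f i))| + |x (s (f i)) - x (τ i)| :=
          abs_sub_le _ _ _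
        rw [abs_sub_comm (x (s (f i))) (x (τ i))] at h5
        linarith
      rw [← he]
      have : ((f i : ℝ) - f i) * (2*M) = 0 := by ring
      rw [this]
      exact max_le (by linarith) le_rfl
    · have h2M : |x (τ (i+1)) - x (τ i)| ≤ 2*M := by
        have e1 := hM (τ i) h0i.1 h0i.2
        have e2 := hM (τ (i+1)) h0i'.1 h0i'.2
        have e3 : |x (τ (i+1)) - x (τ i)| ≤ |x (τ (i+1))| + |x (τ i)| := abs_sub _ _
        linarith
      have hd1 : (1:ℝ) ≤ (f (i+1) : ℝ) - f i := by
        have : f i + 1 ≤ f (i+1) := hlt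
        have := Nat.cast_le (α := ℝ).2 this
        push_cast at this
        linarith
      apply max_le
      · nlinarith
      · nlinarith
  calc ∑ i ∈ Finset.range n, max (|x (τ (i+1)) - x (τ i)| - ε) 0
      ≤ ∑ i ∈ Finset.range n, ((f (i+1) : ℝ) - f i) * (2*M) :=
        Finset.sum_le_sum (fun i hi => key i (Finset.mem_range.1 hi))
    _ = ∑ i ∈ Finset.range n, ((fun k => (f k : ℝ) * (2*M)) (i+1) - (fun k => (f k : ℝ) * (2*M)) i) := by
        apply Finset.sum_congr rfl; intro i _; ring
    _ = (f n : ℝ) * (2*M) - (f 0 : ℝ) * (2*M) := Finset.sum_range_sub (fun k => (f k : ℝ) * (2*M)) n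
    _ ≤ (N : ℝ) * (2 * M) := by
        have h1 : (f n : ℝ) ≤ N := Nat.cast_le.2 (hfN n)
        have h2 : (0:ℝ) ≤ (f 0 : ℝ) := Nat.cast_nonneg _
        nlinarith

end S16


namespace S16

lemma list_range_map_sum (f : ℕ → ℝ) (n : ℕ) :
    ((List.range n).map f).sum = ∑ i ∈ Finset.range n, f i := by
  induction n with
  | zero => simp
  | succ n ih => rw [List.range_succ, Finset.sum_range_succ]; simp [ih]

lemma max_split (a b ε : ℝ) (hε : 0 ≤ ε) :
    max (|a - b| - ε) 0 = max (a - b - ε) 0 + max (b - a - ε) 0 := by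
  rcases le_total b a with h | h
  · rw [abs_of_nonneg (by linarith : (0:ℝ) ≤ a - b),
      max_eq_right (by linarith : b - a - ε ≤ 0), add_zero]
  · rw [abs_of_nonpos (by linarith : a - b ≤ 0),
      max_eq_right (by linarith : a - b - ε ≤ 0), zero_add, neg_sub]

end S16

/-- `TTV = UTV + DTV` for càdlàg paths. -/
theorem statement16 (x : ℝ → ℝ) (hx : Cadlag x) (ε : ℝ) (hε : 0 < ε)
    (t : ℝ) (ht : 0 ≤ t) :
    TTV x 0 t ε = UTV x 0 t ε + DTV x 0 t ε := by
  classical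
  have hε' : (0:ℝ) ≤ ε := le_of_lt hε
  obtain ⟨C, hC⟩ := S16.bddT x hx ε hε t ht
  unfold TTV UTV DTV
  set TS := {v : ℝ | ∃ (n : ℕ) (τ : ℕ → ℝ), 0 ≤ τ 0 ∧ τ n ≤ t ∧
    (∀ i, i < n → τ i < τ (i + 1)) ∧
    v = ∑ i ∈ Finset.range n, max (|x (τ (i + 1)) - x (τ i)| - ε) 0} with hTS
  set US := {v : ℝ | ∃ (n : ℕ) (τ : ℕ → ℝ), 0 ≤ τ 0 ∧ τ n ≤ t ∧
    (∀ i, i < n → τ i < τ (i + 1)) ∧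
    v = ∑ i ∈ Finset.range n, max (x (τ (i + 1)) - x (τ i) - ε) 0} with hUS
  set DS := {v : ℝ | ∃ (n : ℕ) (τ : ℕ → ℝ), 0 ≤ τ 0 ∧ τ n ≤ t ∧
    (∀ i, i < n → τ i < τ (i + 1)) ∧
    v = ∑ i ∈ Finset.range n, max (x (τ i) - x (τ (i + 1)) - ε) 0} with hDS
  have h0T : (0:ℝ) ∈ TS := ⟨0, fun _ => 0, le_rfl, ht, by omega, by simp⟩
  have h0U : (0:ℝ) ∈ US := ⟨0, fun _ => 0, le_rfl, ht, by omega, by simp⟩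
  have h0D : (0:ℝ) ∈ DS := ⟨0, fun _ => 0, le_rfl, ht, by omega, by simp⟩
  have hbT : BddAbove TS := by
    refine ⟨C, ?_⟩
    rintro v ⟨n, τ, h1, h2, h3, rfl⟩
    exact hC n τ h1 h2 h3
  have hbU : BddAbove US := by
    refine ⟨C, ?_⟩
    rintro v ⟨n, τ, h1, h2, h3, rfl⟩
    refine le_trans (Finset.sum_le_sum ?_) (hC n τ h1 h2 h3)
    intro i _
    exact max_le_max (sub_le_sub_right (le_abs_self _) _) le_rfl
  have hbD : BddAbove DS := by
    refine ⟨C, ?_⟩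
    rintro v ⟨n, τ, h1, h2, h3, rfl⟩
    refine le_trans (Finset.sum_le_sum ?_) (hC n τ h1 h2 h3)
    intro i _
    refine max_le_max (sub_le_sub_right ?_ _) le_rfl
    rw [abs_sub_comm]
    exact le_abs_self _
  apply le_antisymm
  · refine csSup_le ⟨0, h0T⟩ ?_
    rintro v ⟨n, τ, h1, h2, h3, rfl⟩
    have e1 : ∑ i ∈ Finset.range n, max (|x (τ (i + 1)) - x (τ i)| - ε) 0
        = (∑ i ∈ Finset.range n, max (x (τ (i + 1)) - x (τ i) - ε) 0)
          + ∑ i ∈ Finset.range n, max (x (τ i) - x (τ (i + 1)) - ε) 0 := by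
      rw [← Finset.sum_add_distrib]
      exact Finset.sum_congr rfl fun i _ => S16.max_split _ _ _ hε'
    rw [e1]
    exact add_le_add (le_csSup hbU ⟨n, τ, h1, h2, h3, rfl⟩)
      (le_csSup hbD ⟨n, τ, h1, h2, h3, rfl⟩)
  · have key : ∀ u ∈ US, ∀ d ∈ DS, u + d ≤ sSup TS := by
      rintro u ⟨n1, τ1, h11, h12, h13, rfl⟩ d ⟨n2, τ2, h21, h22, h23, rfl⟩
      set S : Finset ℝ := ((Finset.range (n1+1)).image τ1) ∪ ((Finset.range (n2+1)).image τ2)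
        with hS
      have hmem1 : ∀ i, i ≤ n1 → τ1 i ∈ S := fun i hi =>
        Finset.mem_union_left _ (Finset.mem_image.2 ⟨i, Finset.mem_range.2 (by omega), rfl⟩)
      have hmem2 : ∀ i, i ≤ n2 → τ2 i ∈ S := fun i hi =>
        Finset.mem_union_right _ (Finset.mem_image.2 ⟨i, Finset.mem_range.2 (by omega), rfl⟩)
      have hSrange : ∀ v ∈ S, 0 ≤ v ∧ v ≤ t := by
        intro v hv
        rw [hS, Finset.mem_union] at hv
        rcases hv with hv | hv <;> obtain ⟨i, hi, rfl⟩ := Finset.mem_image.1 hv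
        · have hi' : i ≤ n1 := by have := Finset.mem_range.1 hi; omega
          exact ⟨le_trans h11 (S16.chain_mono h13 0 i (by omega) hi'),
            le_trans (S16.chain_mono h13 i n1 hi' le_rfl) h12⟩
        · have hi' : i ≤ n2 := by have := Finset.mem_range.1 hi; omega
          exact ⟨le_trans h21 (S16.chain_mono h23 0 i (by omega) hi'),
            le_trans (S16.chain_mono h23 i n2 hi' le_rfl) h22⟩
      have hK : 0 < S.card := Finset.card_pos.2 ⟨τ1 0, hmem1 0 (by omega)⟩
      set N := S.card - 1 with hN
      set e := S.orderIsoOfFin (rfl : S.card = S.card) with he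
      set s : ℕ → ℝ := fun j => (e ⟨min j N, by omega⟩ : ℝ) with hs
      have hsmem : ∀ j, s j ∈ S := fun j => (e _).2
      have hsmono : ∀ j j', j ≤ j' → s j ≤ s j' := by
        intro j j' h1
        apply Subtype.coe_le_coe.2
        apply e.monotone
        rw [Fin.mk_le_mk]
        omega
      have hsstrict : ∀ j j', j < j' → j' ≤ N → s j < s j' := by
        intro j j' h1 h2
        apply Subtype.coe_lt_coe.2
        apply e.strictMono
        rw [Fin.mk_lt_mk]
        omega
      set idx : ℝ → ℕ := fun v => if h : v ∈ S then ((e.symm ⟨v, h⟩ : Fin S.card) : ℕ) else 0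
        with hidx
      have hidxN : ∀ v, idx v ≤ N := by
        intro v
        rw [hidx]
        dsimp only
        split
        · have := (e.symm ⟨v, ‹_›⟩).isLt; omega
        · omega
      have hsidx : ∀ v, v ∈ S → s (idx v) = v := by
        intro v hv
        have hlt := (e.symm ⟨v, hv⟩).isLt
        have h1 : idx v = ((e.symm ⟨v, hv⟩ : Fin S.card) : ℕ) := by
          rw [hidx]; dsimp only; rw [dif_pos hv]
        rw [h1, hs]
        dsimp only
        have h2 : (⟨min ((e.symm ⟨v, hv⟩ : Fin S.card) : ℕ) N, by omega⟩ : Fin S.card)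
            = e.symm ⟨v, hv⟩ := by
          apply Fin.ext
          simp only []
          omega
        rw [h2, OrderIso.apply_symm_apply]
      have hidxlt : ∀ v w, v ∈ S → w ∈ S → v < w → idx v < idx w := by
        intro v w hv hw hvw
        by_contra hh
        push_neg at hh
        have := hsmono _ _ hh
        rw [hsidx v hv, hsidx w hw] at this
        linarith
      have hidxle : ∀ v w, v ∈ S → w ∈ S → v ≤ w → idx v ≤ idx w := by
        intro v w hv hw hvw
        rcases eq_or_lt_of_le hvw with rfl | h
        · exact le_rfl
        · exact le_of_lt (hidxlt v w hv hw h)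
      set y : ℕ → ℝ := fun j => x (s j) with hy
      set U : List (ℕ × ℕ) := (List.range n1).map (fun i => (idx (τ1 i), idx (τ1 (i+1)))) with hU
      set D : List (ℕ × ℕ) := (List.range n2).map (fun i => (idx (τ2 i), idx (τ2 (i+1)))) with hD
      have hGood : S16.Good N U D := by
        refine ⟨?_, ?_, ?_, ?_⟩
        · intro p hp
          rw [hU] at hp
          obtain ⟨i, hi, rfl⟩ := List.mem_map.1 hp
          have hi' : i < n1 := List.mem_range.1 hi
          exact ⟨le_of_lt (hidxlt _ _ (hmem1 i (by omega)) (hmem1 (i+1) (by omega)) (h13 i hi')),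
            hidxN _⟩
        · intro p hp
          rw [hD] at hp
          obtain ⟨i, hi, rfl⟩ := List.mem_map.1 hp
          have hi' : i < n2 := List.mem_range.1 hi
          exact ⟨le_of_lt (hidxlt _ _ (hmem2 i (by omega)) (hmem2 (i+1) (by omega)) (h23 i hi')),
            hidxN _⟩
        · rw [hU, List.pairwise_map]
          refine (List.pairwise_lt_range (n := n1)).imp_of_mem ?_
          intro a b ha hb hab
          have hb' : b < n1 := List.mem_range.1 hb
          exact Or.inl (hidxle _ _ (hmem1 (a+1) (by omega)) (hmem1 b (by omega))
            (S16.chain_mono h13 (a+1) b (by omega) (by omega)))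
        · rw [hD, List.pairwise_map]
          refine (List.pairwise_lt_range (n := n2)).imp_of_mem ?_
          intro a b ha hb hab
          have hb' : b < n2 := List.mem_range.1 hb
          exact Or.inl (hidxle _ _ (hmem2 (a+1) (by omega)) (hmem2 b (by omega))
            (S16.chain_mono h23 (a+1) b (by omega) (by omega)))
      obtain ⟨n, c, hc, hcN, hval⟩ := S16.disc y ε hε' N (S16.meas U D) U D le_rfl hGood
      have hvals : S16.vals y ε U D
          = (∑ i ∈ Finset.range n1, max (x (τ1 (i + 1)) - x (τ1 i) - ε) 0)
            + ∑ i ∈ Finset.range n2, max (x (τ2 i) - x (τ2 (i + 1)) - ε) 0 := by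
        rw [S16.vals, hU, hD, List.map_map, List.map_map,
          S16.list_range_map_sum, S16.list_range_map_sum]
        congr 1
        · apply Finset.sum_congr rfl
          intro i hi
          have hi' : i < n1 := Finset.mem_range.1 hi
          show S16.upC y ε (idx (τ1 i), idx (τ1 (i+1))) = _
          rw [S16.upC, hy]
          dsimp only
          rw [hsidx _ (hmem1 i (by omega)), hsidx _ (hmem1 (i+1) (by omega))]
        · apply Finset.sum_congr rfl
          intro i hi
          have hi' : i < n2 := Finset.mem_range.1 hi
          show S16.dnC y ε (idx (τ2 i), idx (τ2 (i+1))) = _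
          rw [S16.dnC, hy]
          dsimp only
          rw [hsidx _ (hmem2 i (by omega)), hsidx _ (hmem2 (i+1) (by omega))]
      have hcle : ∀ i, i ≤ n → c i ≤ N := fun i hi =>
        le_trans (S16.chain_mono (τ := c) hc i n hi le_rfl) hcN
      have helem : S16.tvs y ε n c
          = ∑ i ∈ Finset.range n, max (|x (s (c (i + 1))) - x (s (c i))| - ε) 0 := by
        rw [S16.tvs, hy]
      have hmemTS : S16.tvs y ε n c ∈ TS := by
        rw [hTS]
        refine ⟨n, fun i => s (c i), (hSrange _ (hsmem _)).1, (hSrange _ (hsmem _)).2, ?_, ?_⟩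
        · intro i hi
          exact hsstrict _ _ (hc i hi) (hcle (i+1) (by omega))
        · exact helem
      calc _ ≤ S16.tvs y ε n c := by rw [← hvals]; exact hval
        _ ≤ sSup TS := le_csSup hbT hmemTS
    have hUne : US.Nonempty := ⟨0, h0U⟩
    have hDne : DS.Nonempty := ⟨0, h0D⟩
    have h1 : ∀ d ∈ DS, sSup US ≤ sSup TS - d := fun d hd =>
      csSup_le hUne fun u hu => by linarith [key u hu d hd]
    have h2 : sSup DS ≤ sSup TS - sSup US :=
      csSup_le hDne fun d hd => by linarith [h1 d hd]
    linarith
end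
end

section
/- Let x: [0,∞) → ℝ be càdlàg, ε > 0 and t ≥ 0. Then | 2 · UTV(x,[0,t],ε) − TTV(x,[0,t],ε) − (x_t − x_0) | ≤ ε and | 2 · DTV(x,[0,t],ε) − TTV(x,[0,t],ε) + (x_t − x_0) | ≤ ε; equivalently, UTV(x,[0,t],ε) = (1/2)( TTV(x,[0,t],ε) + x_t − x_0 + R^ε_t ) and DTV(x,[0,t],ε) = (1/2)( TTV(x,[0,t],ε) − x_t + x_0 − R^ε_t ) for some R^ε_t with |R^ε_t| ≤ ε. -/
open MeasureTheory Filter Topology Set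
open scoped Classical

noncomputable section

namespace TV17

/-- DP pair for upward truncated variation: `(U n, Q n)`. -/
def uq (c : ℕ → ℝ) (η : ℝ) : ℕ → ℝ × ℝ
  | 0 => (0, -c 0)
  | n+1 =>
    let p := uq c η n
    let u := max p.1 (p.2 + c (n+1) - η)
    (u, max p.2 (u - c (n+1)))

/-- DP pair for downward truncated variation: `(D n, R n)`. -/
def dr (c : ℕ → ℝ) (η : ℝ) : ℕ → ℝ × ℝ
  | 0 => (0, c 0)
  | n+1 =>
    let p := dr c η n
    let d := max p.1 (p.2 - c (n+1) - η)
    (d, max p.2 (d + c (n+1)))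

/-- DP triple for truncated variation: `(T n, QT n, RT n)`. -/
def tq (c : ℕ → ℝ) (η : ℝ) : ℕ → ℝ × ℝ × ℝ
  | 0 => (0, -c 0, c 0)
  | n+1 =>
    let p := tq c η n
    let t := max p.1 (max (p.2.1 + c (n+1) - η) (p.2.2 - c (n+1) - η))
    (t, max p.2.1 (t - c (n+1)), max p.2.2 (t + c (n+1)))

variable (c : ℕ → ℝ) (η : ℝ)

def U (n : ℕ) : ℝ := (uq c η n).1
def Q (n : ℕ) : ℝ := (uq c η n).2
def D (n : ℕ) : ℝ := (dr c η n).1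
def R (n : ℕ) : ℝ := (dr c η n).2
def T (n : ℕ) : ℝ := (tq c η n).1
def QT (n : ℕ) : ℝ := (tq c η n).2.1
def RT (n : ℕ) : ℝ := (tq c η n).2.2

@[simp] lemma U_zero : U c η 0 = 0 := rfl
@[simp] lemma Q_zero : Q c η 0 = -c 0 := rfl
@[simp] lemma D_zero : D c η 0 = 0 := rfl
@[simp] lemma R_zero : R c η 0 = c 0 := rfl
@[simp] lemma T_zero : T c η 0 = 0 := rfl
@[simp] lemma QT_zero : QT c η 0 = -c 0 := rfl
@[simp] lemma RT_zero : RT c η 0 = c 0 := rfl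

lemma U_succ (n : ℕ) : U c η (n+1) = max (U c η n) (Q c η n + c (n+1) - η) := rfl
lemma Q_succ (n : ℕ) : Q c η (n+1) = max (Q c η n) (U c η (n+1) - c (n+1)) := rfl
lemma D_succ (n : ℕ) : D c η (n+1) = max (D c η n) (R c η n - c (n+1) - η) := rfl
lemma R_succ (n : ℕ) : R c η (n+1) = max (R c η n) (D c η (n+1) + c (n+1)) := rfl
lemma T_succ (n : ℕ) :
    T c η (n+1) = max (T c η n) (max (QT c η n + c (n+1) - η) (RT c η n - c (n+1) - η)) := rfl
lemma QT_succ (n : ℕ) : QT c η (n+1) = max (QT c η n) (T c η (n+1) - c (n+1)) := rfl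
lemma RT_succ (n : ℕ) : RT c η (n+1) = max (RT c η n) (T c η (n+1) + c (n+1)) := rfl

lemma U_mono : Monotone (U c η) :=
  monotone_nat_of_le_succ fun n => by rw [U_succ]; exact le_max_left _ _
lemma Q_mono : Monotone (Q c η) :=
  monotone_nat_of_le_succ fun n => by rw [Q_succ]; exact le_max_left _ _
lemma D_mono : Monotone (D c η) :=
  monotone_nat_of_le_succ fun n => by rw [D_succ]; exact le_max_left _ _
lemma R_mono : Monotone (R c η) :=
  monotone_nat_of_le_succ fun n => by rw [R_succ]; exact le_max_left _ _
lemma T_mono : Monotone (T c η) :=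
  monotone_nat_of_le_succ fun n => by rw [T_succ]; exact le_max_left _ _
lemma QT_mono : Monotone (QT c η) :=
  monotone_nat_of_le_succ fun n => by rw [QT_succ]; exact le_max_left _ _
lemma RT_mono : Monotone (RT c η) :=
  monotone_nat_of_le_succ fun n => by rw [RT_succ]; exact le_max_left _ _

lemma U_nonneg (n : ℕ) : 0 ≤ U c η n := U_mono c η (Nat.zero_le n)
lemma D_nonneg (n : ℕ) : 0 ≤ D c η n := D_mono c η (Nat.zero_le n)
lemma T_nonneg (n : ℕ) : 0 ≤ T c η n := T_mono c η (Nat.zero_le n)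

lemma sub_le_Q (n : ℕ) : U c η n - c n ≤ Q c η n := by
  cases n with
  | zero => simp
  | succ n => rw [Q_succ]; exact le_max_right _ _
lemma add_le_R (n : ℕ) : D c η n + c n ≤ R c η n := by
  cases n with
  | zero => simp
  | succ n => rw [R_succ]; exact le_max_right _ _
lemma sub_le_QT (n : ℕ) : T c η n - c n ≤ QT c η n := by
  cases n with
  | zero => simp
  | succ n => rw [QT_succ]; exact le_max_right _ _
lemma add_le_RT (n : ℕ) : T c η n + c n ≤ RT c η n := by
  cases n with
  | zero => simp
  | succ n => rw [RT_succ]; exact le_max_right _ _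

lemma neg_le_Q {j n : ℕ} (h : j ≤ n) : -c j ≤ Q c η n :=
  le_trans (by linarith [U_nonneg c η j, sub_le_Q c η j]) (Q_mono c η h)
lemma neg_le_QT {j n : ℕ} (h : j ≤ n) : -c j ≤ QT c η n :=
  le_trans (by linarith [T_nonneg c η j, sub_le_QT c η j]) (QT_mono c η h)
lemma le_RT {j n : ℕ} (h : j ≤ n) : c j ≤ RT c η n :=
  le_trans (by linarith [T_nonneg c η j, add_le_RT c η j]) (RT_mono c η h)
lemma le_R {j n : ℕ} (h : j ≤ n) : c j ≤ R c η n :=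
  le_trans (by linarith [D_nonneg c η j, add_le_R c η j]) (R_mono c η h)

/-- Swap: the DP for `-c` as U-side equals the DP for `c` as D-side. -/
lemma uq_neg (n : ℕ) : uq (fun i => -c i) η n = dr c η n := by
  induction n with
  | zero => simp [uq, dr]
  | succ n ih =>
    simp only [uq, dr, ih, ← sub_eq_add_neg, sub_neg_eq_add]

/-- The main identity invariants (needs `0 ≤ η`):
`T = U + D`, `QT = Q + D`, `RT = R + U`, `Q + R ≤ U + D + η`. -/
lemma identity_invariants (hη : 0 ≤ η) (n : ℕ) :
    T c η n = U c η n + D c η n ∧ QT c η n = Q c η n + D c η n ∧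
      RT c η n = R c η n + U c η n ∧ Q c η n + R c η n ≤ U c η n + D c η n + η := by
  induction n with
  | zero => simp; linarith
  | succ n ih =>
    obtain ⟨hT, hQT, hRT, hI⟩ := ih
    have hU := U_succ c η n
    have hQ := Q_succ c η n
    have hD := D_succ c η n
    have hR := R_succ c η n
    have hTs := T_succ c η n
    have hQTs := QT_succ c η n
    have hRTs := RT_succ c η n
    have hUm : U c η n ≤ U c η (n+1) := U_mono c η (Nat.le_succ n)
    have hDm : D c η n ≤ D c η (n+1) := D_mono c η (Nat.le_succ n)
    have hQm : Q c η n ≤ Q c η (n+1) := Q_mono c η (Nat.le_succ n)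
    have hRm : R c η n ≤ R c η (n+1) := R_mono c η (Nat.le_succ n)
    have hU1 : Q c η n + c (n+1) - η ≤ U c η (n+1) := by rw [hU]; exact le_max_right _ _
    have hD1 : R c η n - c (n+1) - η ≤ D c η (n+1) := by rw [hD]; exact le_max_right _ _
    have hQ1 : U c η (n+1) - c (n+1) ≤ Q c η (n+1) := sub_le_Q c η (n+1)
    have hR1 : D c η (n+1) + c (n+1) ≤ R c η (n+1) := add_le_R c η (n+1)
    -- abbreviations
    set c' := c (n+1) with hc'
    have hTUD : T c η (n+1) = U c η (n+1) + D c η (n+1) := by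
      apply le_antisymm
      · rw [hTs]
        apply max_le
        · rw [hT]; exact add_le_add hUm hDm
        · apply max_le
          · rw [hQT]; linarith
          · rw [hRT]; linarith
      · rw [hU, hD]
        rcases max_cases (U c η n) (Q c η n + c' - η) with ⟨e1, l1⟩ | ⟨e1, l1⟩ <;>
          rcases max_cases (D c η n) (R c η n - c' - η) with ⟨e2, l2⟩ | ⟨e2, l2⟩ <;>
          rw [e1, e2] <;>
          [skip; skip; skip; skip] <;>
          · have m1 : T c η n ≤ T c η (n+1) := T_mono c η (Nat.le_succ n)
            have m2 : QT c η n + c' - η ≤ T c η (n+1) := by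
              rw [hTs]; exact le_trans (le_max_left _ _) (le_max_right _ _)
            have m3 : RT c η n - c' - η ≤ T c η (n+1) := by
              rw [hTs]; exact le_trans (le_max_right _ _) (le_max_right _ _)
            rw [hT] at m1; rw [hQT] at m2; rw [hRT] at m3
            linarith
    refine ⟨hTUD, ?_, ?_, ?_⟩
    · -- QT = Q + D
      apply le_antisymm
      · rw [hQTs]
        apply max_le
        · rw [hQT]; exact add_le_add hQm hDm
        · rw [hTUD]; linarith
      · have m1 : QT c η n ≤ QT c η (n+1) := QT_mono c η (Nat.le_succ n)
        have m2 : T c η (n+1) - c' ≤ QT c η (n+1) := sub_le_QT c η (n+1)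
        have m0 : T c η n ≤ T c η (n+1) := T_mono c η (Nat.le_succ n)
        rw [hQT] at m1; rw [hTUD] at m2; rw [hT] at m0
        rw [hQ, hD]
        rcases max_cases (Q c η n) (U c η (n+1) - c') with ⟨e1, l1⟩ | ⟨e1, l1⟩ <;>
          rcases max_cases (D c η n) (R c η n - c' - η) with ⟨e2, l2⟩ | ⟨e2, l2⟩ <;>
          rw [e1, e2] <;> rw [hD] at m2 <;>
          rcases max_cases (D c η n) (R c η n - c' - η) with ⟨e3, l3⟩ | ⟨e3, l3⟩ <;>
          rw [e3] at m2 <;> linarith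
    · -- RT = R + U
      apply le_antisymm
      · rw [hRTs]
        apply max_le
        · rw [hRT]; exact add_le_add hRm hUm
        · rw [hTUD]; linarith
      · have m1 : RT c η n ≤ RT c η (n+1) := RT_mono c η (Nat.le_succ n)
        have m2 : T c η (n+1) + c' ≤ RT c η (n+1) := add_le_RT c η (n+1)
        have m0 : T c η n ≤ T c η (n+1) := T_mono c η (Nat.le_succ n)
        rw [hRT] at m1; rw [hTUD] at m2; rw [hT] at m0
        rw [hR, hU]
        rcases max_cases (R c η n) (D c η (n+1) + c') with ⟨e1, l1⟩ | ⟨e1, l1⟩ <;>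
          rcases max_cases (U c η n) (Q c η n + c' - η) with ⟨e2, l2⟩ | ⟨e2, l2⟩ <;>
          rw [e1, e2] <;> rw [hU] at m2 <;>
          rcases max_cases (U c η n) (Q c η n + c' - η) with ⟨e3, l3⟩ | ⟨e3, l3⟩ <;>
          rw [e3] at m2 <;> rw [hD] at l1 m2 <;>
          rcases max_cases (D c η n) (R c η n - c' - η) with ⟨e4, l4⟩ | ⟨e4, l4⟩ <;>
          rw [e4] at l1 m2 <;> linarith
    · -- Q + R ≤ U + D + η
      rw [hQ, hR]
      rcases max_cases (Q c η n) (U c η (n+1) - c') with ⟨e1, l1⟩ | ⟨e1, l1⟩ <;>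
        rcases max_cases (R c η n) (D c η (n+1) + c') with ⟨e2, l2⟩ | ⟨e2, l2⟩ <;>
        rw [e1, e2] <;>
        [linarith [hUm, hDm]; linarith [hU1, hDm]; linarith [hD1, hUm]; linarith]

/-- `U ≤ D + (c n - c 0) + η`, `U ≤ R - c 0`, `Q ≤ D - c 0 + η`. -/
lemma K_invariants (hη : 0 ≤ η) (n : ℕ) :
    U c η n ≤ D c η n + (c n - c 0) + η ∧ U c η n ≤ R c η n - c 0 ∧
      Q c η n ≤ D c η n - c 0 + η := by
  induction n with
  | zero =>
    simp only [U_zero, D_zero, Q_zero, R_zero]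
    exact ⟨by linarith, by linarith, by linarith⟩
  | succ n ih =>
    obtain ⟨_, hK2, hK3⟩ := ih
    have hUm : U c η n ≤ U c η (n+1) := U_mono c η (Nat.le_succ n)
    have hDm : D c η n ≤ D c η (n+1) := D_mono c η (Nat.le_succ n)
    have hRm : R c η n ≤ R c η (n+1) := R_mono c η (Nat.le_succ n)
    have hQm : Q c η n ≤ Q c η (n+1) := Q_mono c η (Nat.le_succ n)
    have hD1 : R c η n - c (n+1) - η ≤ D c η (n+1) := by
      rw [D_succ]; exact le_max_right _ _
    have hR1 : D c η (n+1) + c (n+1) ≤ R c η (n+1) := add_le_R c η (n+1)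
    have hK1 : U c η (n+1) ≤ D c η (n+1) + (c (n+1) - c 0) + η := by
      rw [U_succ]
      apply max_le
      · linarith
      · linarith
    refine ⟨hK1, ?_, ?_⟩
    · rw [U_succ]
      apply max_le
      · linarith
      · linarith
    · rw [Q_succ]
      apply max_le
      · linarith
      · linarith

/-- `|U n - D n - (c n - c 0)| ≤ η`. -/
lemma abs_UD (hη : 0 ≤ η) (n : ℕ) :
    |U c η n - D c η n - (c n - c 0)| ≤ η := by
  have h1 := (K_invariants c η hη n).1
  have h2 := (K_invariants (fun i => -c i) η hη n).1
  have e1 : U (fun i => -c i) η n = D c η n := by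
    show (uq (fun i => -c i) η n).1 = _; rw [uq_neg]; rfl
  have e2 : D (fun i => -c i) η n = U c η n := by
    show (dr (fun i => -c i) η n).1 = _
    have : uq (fun i => - - c i) η n = dr (fun i => -c i) η n := uq_neg (fun i => -c i) η n
    simp only [neg_neg] at this
    rw [← this]; rfl
  simp only [e1, e2] at h2
  rw [abs_le]
  constructor <;> linarith

/-- Upward truncated sum along an index sequence. -/
def usum (c : ℕ → ℝ) (η : ℝ) (f : ℕ → ℕ) (m : ℕ) : ℝ :=
  ∑ j ∈ Finset.range m, max (c (f (j+1)) - c (f j) - η) 0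

/-- Two-sided truncated sum along an index sequence. -/
def tsum (c : ℕ → ℝ) (η : ℝ) (f : ℕ → ℕ) (m : ℕ) : ℝ :=
  ∑ j ∈ Finset.range m, max (|c (f (j+1)) - c (f j)| - η) 0

lemma usum_nonneg (f : ℕ → ℕ) (m : ℕ) : 0 ≤ usum c η f m :=
  Finset.sum_nonneg fun _ _ => le_max_right _ _

lemma tsum_nonneg (f : ℕ → ℕ) (m : ℕ) : 0 ≤ tsum c η f m :=
  Finset.sum_nonneg fun _ _ => le_max_right _ _

lemma upperU (hη : 0 ≤ η) (f : ℕ → ℕ) (m : ℕ) (hf : ∀ j < m, f j ≤ f (j+1)) :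
    usum c η f m ≤ U c η (f m) ∧ usum c η f m - c (f m) ≤ Q c η (f m) := by
  induction m with
  | zero =>
    refine ⟨by simpa [usum] using U_nonneg c η (f 0), ?_⟩
    have := sub_le_Q c η (f 0)
    have := U_nonneg c η (f 0)
    simp only [usum, Finset.range_zero, Finset.sum_empty]
    linarith
  | succ m ih =>
    have hf' : ∀ j < m, f j ≤ f (j+1) := fun j hj => hf j (Nat.lt_succ_of_lt hj)
    obtain ⟨ih1, ih2⟩ := ih hf'
    have hab : f m ≤ f (m+1) := hf m (Nat.lt_succ_self m)
    have hsum : usum c η f (m+1) = usum c η f m + max (c (f (m+1)) - c (f m) - η) 0 := by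
      simp [usum, Finset.sum_range_succ]
    have key : usum c η f (m+1) ≤ U c η (f (m+1)) := by
      rcases le_or_gt (c (f (m+1)) - c (f m)) η with h | h
      · have hmax : max (c (f (m+1)) - c (f m) - η) 0 = 0 := max_eq_right (by linarith)
        have := U_mono c η hab
        rw [hsum, hmax]; linarith
      · have hlt : f m < f (m+1) := by
          rcases lt_or_eq_of_le hab with h' | h'
          · exact h'
          · exfalso; rw [h'] at h; linarith
        obtain ⟨b, hb⟩ : ∃ b, f (m+1) = b + 1 := by
          cases hfm : f (m+1) with
          | zero => omega
          | succ b => exact ⟨b, rfl⟩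
        have hQmono : Q c η (f m) ≤ Q c η b := Q_mono c η (by omega)
        have hU : Q c η b + c (f (m+1)) - η ≤ U c η (f (m+1)) := by
          rw [hb, U_succ]; exact le_max_right _ _
        have hUm : U c η (f m) ≤ U c η (f (m+1)) := U_mono c η hab
        have hUnn : 0 ≤ U c η (f (m+1)) := U_nonneg c η _
        have : max (c (f (m+1)) - c (f m) - η) 0 ≤ U c η (f (m+1)) - usum c η f m := by
          apply max_le
          · linarith
          · linarith
        linarith [hsum]
    exact ⟨key, by linarith [sub_le_Q c η (f (m+1))]⟩

lemma upperT (hη : 0 ≤ η) (f : ℕ → ℕ) (m : ℕ) (hf : ∀ j < m, f j ≤ f (j+1)) :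
    tsum c η f m ≤ T c η (f m) ∧ tsum c η f m - c (f m) ≤ QT c η (f m) ∧
      tsum c η f m + c (f m) ≤ RT c η (f m) := by
  induction m with
  | zero =>
    have h1 := sub_le_QT c η (f 0)
    have h2 := add_le_RT c η (f 0)
    have h3 := T_nonneg c η (f 0)
    simp only [tsum, Finset.range_zero, Finset.sum_empty]
    refine ⟨h3, by linarith, by linarith⟩
  | succ m ih =>
    have hf' : ∀ j < m, f j ≤ f (j+1) := fun j hj => hf j (Nat.lt_succ_of_lt hj)
    obtain ⟨ih1, ih2, ih3⟩ := ih hf'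
    have hab : f m ≤ f (m+1) := hf m (Nat.lt_succ_self m)
    have hsum : tsum c η f (m+1) = tsum c η f m + max (|c (f (m+1)) - c (f m)| - η) 0 := by
      simp [tsum, Finset.sum_range_succ]
    have key : tsum c η f (m+1) ≤ T c η (f (m+1)) := by
      rcases le_or_gt (|c (f (m+1)) - c (f m)|) η with h | h
      · have hmax : max (|c (f (m+1)) - c (f m)|- η) 0 = 0 := max_eq_right (by linarith)
        have := T_mono c η hab
        rw [hsum, hmax]; linarith
      · have hlt : f m < f (m+1) := by
          rcases lt_or_eq_of_le hab with h' | h'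
          · exact h'
          · exfalso; rw [h'] at h; simp at h; linarith
        obtain ⟨b, hb⟩ : ∃ b, f (m+1) = b + 1 := by
          cases hfm : f (m+1) with
          | zero => omega
          | succ b => exact ⟨b, rfl⟩
        have hQTmono : QT c η (f m) ≤ QT c η b := QT_mono c η (by omega)
        have hRTmono : RT c η (f m) ≤ RT c η b := RT_mono c η (by omega)
        have hT1 : QT c η b + c (f (m+1)) - η ≤ T c η (f (m+1)) := by
          rw [hb, T_succ]; exact le_trans (le_max_left _ _) (le_max_right _ _)
        have hT2 : RT c η b - c (f (m+1)) - η ≤ T c η (f (m+1)) := by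
          rw [hb, T_succ]; exact le_trans (le_max_right _ _) (le_max_right _ _)
        have hTm : T c η (f m) ≤ T c η (f (m+1)) := T_mono c η hab
        have hTnn : 0 ≤ T c η (f (m+1)) := T_nonneg c η _
        have : max (|c (f (m+1)) - c (f m)| - η) 0 ≤ T c η (f (m+1)) - tsum c η f m := by
          apply max_le
          · rcases abs_cases (c (f (m+1)) - c (f m)) with ⟨he, _⟩ | ⟨he, _⟩ <;> rw [he] <;> linarith
          · linarith
        linarith [hsum]
    exact ⟨key, by linarith [sub_le_QT c η (f (m+1))], by linarith [add_le_RT c η (f (m+1))]⟩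

lemma usum_if_eq (f : ℕ → ℕ) (m b : ℕ) :
    usum c η (fun j => if j ≤ m then f j else b) (m+1) =
      usum c η f m + max (c b - c (f m) - η) 0 := by
  unfold usum
  rw [Finset.sum_range_succ]
  congr 1
  · apply Finset.sum_congr rfl
    intro j hj
    have hj' : j < m := Finset.mem_range.mp hj
    simp only [if_pos (by omega : j ≤ m), if_pos (by omega : j + 1 ≤ m)]
  · simp only [if_pos (le_refl m), if_neg (by omega : ¬ (m+1 ≤ m))]

lemma tsum_if_eq (f : ℕ → ℕ) (m b : ℕ) :
    tsum c η (fun j => if j ≤ m then f j else b) (m+1) =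
      tsum c η f m + max (|c b - c (f m)| - η) 0 := by
  unfold tsum
  rw [Finset.sum_range_succ]
  congr 1
  · apply Finset.sum_congr rfl
    intro j hj
    have hj' : j < m := Finset.mem_range.mp hj
    simp only [if_pos (by omega : j ≤ m), if_pos (by omega : j + 1 ≤ m)]
  · simp only [if_pos (le_refl m), if_neg (by omega : ¬ (m+1 ≤ m))]

lemma strict_if {f : ℕ → ℕ} {m b : ℕ} (hs : ∀ j < m, f j < f (j+1)) (hb : f m < b) :
    ∀ j < m+1, (fun j => if j ≤ m then f j else b) j < (fun j => if j ≤ m then f j else b) (j+1) := by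
  intro j hj
  by_cases h1 : j + 1 ≤ m
  · simp only [if_pos (by omega : j ≤ m), if_pos h1]; exact hs j (by omega)
  · have hj' : j = m := by omega
    simp only [if_pos (le_of_eq hj'), if_neg h1]
    rw [hj']; exact hb

lemma witnessU (n : ℕ) :
    (∃ m f, (∀ j < m, f j < f (j+1)) ∧ f m ≤ n ∧ U c η n ≤ usum c η f m) ∧
    (∃ m f, (∀ j < m, f j < f (j+1)) ∧ f m ≤ n ∧ Q c η n ≤ usum c η f m - c (f m)) := by
  induction n with
  | zero =>
    refine ⟨⟨0, fun _ => 0, by omega, le_refl 0, by simp [usum]⟩,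
      ⟨0, fun _ => 0, by omega, le_refl 0, by simp [usum]⟩⟩
  | succ n ih =>
    obtain ⟨⟨m1, f1, hs1, he1, hv1⟩, ⟨m2, f2, hs2, he2, hv2⟩⟩ := ih
    have hU : (∃ m f, (∀ j < m, f j < f (j+1)) ∧ f m ≤ n+1 ∧ U c η (n+1) ≤ usum c η f m) := by
      rcases le_or_gt (Q c η n + c (n+1) - η) (U c η n) with h | h
      · exact ⟨m1, f1, hs1, le_trans he1 (Nat.le_succ n),
          by rw [U_succ, max_eq_left h]; exact hv1⟩
      · refine ⟨m2+1, fun j => if j ≤ m2 then f2 j else n+1,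
          strict_if hs2 (by omega), by simp, ?_⟩
        rw [usum_if_eq, U_succ, max_eq_right (le_of_lt h)]
        have h1 : c (n+1) - c (f2 m2) - η ≤ max (c (n+1) - c (f2 m2) - η) 0 := le_max_left _ _
        linarith
    refine ⟨hU, ?_⟩
    rcases le_or_gt (U c η (n+1) - c (n+1)) (Q c η n) with h | h
    · exact ⟨m2, f2, hs2, le_trans he2 (Nat.le_succ n),
        by rw [Q_succ, max_eq_left h]; exact hv2⟩
    · obtain ⟨m, f, hs, he, hv⟩ := hU
      rcases eq_or_lt_of_le he with heq | hlt
      · refine ⟨m, f, hs, he, ?_⟩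
        rw [Q_succ, max_eq_right (le_of_lt h), heq]
        linarith
      · refine ⟨m+1, fun j => if j ≤ m then f j else n+1,
          strict_if hs (by omega), by simp, ?_⟩
        rw [usum_if_eq, Q_succ, max_eq_right (le_of_lt h)]
        simp only [if_neg (by omega : ¬ (m+1 ≤ m))]
        have h1 : (0:ℝ) ≤ max (c (n+1) - c (f m) - η) 0 := le_max_right _ _
        linarith

lemma witnessT (n : ℕ) :
    (∃ m f, (∀ j < m, f j < f (j+1)) ∧ f m ≤ n ∧ T c η n ≤ tsum c η f m) ∧
    (∃ m f, (∀ j < m, f j < f (j+1)) ∧ f m ≤ n ∧ QT c η n ≤ tsum c η f m - c (f m)) ∧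
    (∃ m f, (∀ j < m, f j < f (j+1)) ∧ f m ≤ n ∧ RT c η n ≤ tsum c η f m + c (f m)) := by
  induction n with
  | zero =>
    refine ⟨⟨0, fun _ => 0, by omega, le_refl 0, by simp [tsum]⟩,
      ⟨0, fun _ => 0, by omega, le_refl 0, by simp [tsum]⟩,
      ⟨0, fun _ => 0, by omega, le_refl 0, by simp [tsum]⟩⟩
  | succ n ih =>
    obtain ⟨⟨m1, f1, hs1, he1, hv1⟩, ⟨m2, f2, hs2, he2, hv2⟩, ⟨m3, f3, hs3, he3, hv3⟩⟩ := ih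
    have habs1 : ∀ z : ℝ, z - η ≤ max (|z| - η) 0 :=
      fun z => le_trans (by have := le_abs_self z; linarith) (le_max_left _ _)
    have habs2 : ∀ z : ℝ, -z - η ≤ max (|z| - η) 0 :=
      fun z => le_trans (by have := neg_abs_le z; linarith) (le_max_left _ _)
    have hT : (∃ m f, (∀ j < m, f j < f (j+1)) ∧ f m ≤ n+1 ∧ T c η (n+1) ≤ tsum c η f m) := by
      rcases le_or_gt (max (QT c η n + c (n+1) - η) (RT c η n - c (n+1) - η)) (T c η n) with h | h
      · exact ⟨m1, f1, hs1, le_trans he1 (Nat.le_succ n),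
          by rw [T_succ, max_eq_left h]; exact hv1⟩
      · rw [T_succ, max_eq_right (le_of_lt h)]
        rcases max_cases (QT c η n + c (n+1) - η) (RT c η n - c (n+1) - η) with ⟨he', _⟩ | ⟨he', _⟩ <;>
          rw [he']
        · refine ⟨m2+1, fun j => if j ≤ m2 then f2 j else n+1,
            strict_if hs2 (by omega), by simp, ?_⟩
          rw [tsum_if_eq]
          have := habs1 (c (n+1) - c (f2 m2))
          linarith
        · refine ⟨m3+1, fun j => if j ≤ m3 then f3 j else n+1,
            strict_if hs3 (by omega), by simp, ?_⟩
          rw [tsum_if_eq]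
          have := habs2 (c (n+1) - c (f3 m3))
          linarith
    refine ⟨hT, ?_, ?_⟩
    · rcases le_or_gt (T c η (n+1) - c (n+1)) (QT c η n) with h | h
      · exact ⟨m2, f2, hs2, le_trans he2 (Nat.le_succ n),
          by rw [QT_succ, max_eq_left h]; exact hv2⟩
      · obtain ⟨m, f, hs, he, hv⟩ := hT
        rcases eq_or_lt_of_le he with heq | hlt
        · refine ⟨m, f, hs, he, ?_⟩
          rw [QT_succ, max_eq_right (le_of_lt h), heq]
          linarith
        · refine ⟨m+1, fun j => if j ≤ m then f j else n+1,
            strict_if hs (by omega), by simp, ?_⟩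
          rw [tsum_if_eq, QT_succ, max_eq_right (le_of_lt h)]
          simp only [if_neg (by omega : ¬ (m+1 ≤ m))]
          have h1 : (0:ℝ) ≤ max (|c (n+1) - c (f m)| - η) 0 := le_max_right _ _
          linarith
    · rcases le_or_gt (T c η (n+1) + c (n+1)) (RT c η n) with h | h
      · exact ⟨m3, f3, hs3, le_trans he3 (Nat.le_succ n),
          by rw [RT_succ, max_eq_left h]; exact hv3⟩
      · obtain ⟨m, f, hs, he, hv⟩ := hT
        rcases eq_or_lt_of_le he with heq | hlt
        · refine ⟨m, f, hs, he, ?_⟩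
          rw [RT_succ, max_eq_right (le_of_lt h), heq]
          linarith
        · refine ⟨m+1, fun j => if j ≤ m then f j else n+1,
            strict_if hs (by omega), by simp, ?_⟩
          rw [tsum_if_eq, RT_succ, max_eq_right (le_of_lt h)]
          simp only [if_neg (by omega : ¬ (m+1 ≤ m))]
          have h1 : (0:ℝ) ≤ max (|c (n+1) - c (f m)| - η) 0 := le_max_right _ _
          linarith

/-- D-side quantities as U-side of `-c`. -/
lemma D_eq_U_neg (n : ℕ) : D c η n = U (fun i => -c i) η n := by
  show _ = (uq (fun i => -c i) η n).1; rw [uq_neg]; rfl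

lemma upperD (hη : 0 ≤ η) (f : ℕ → ℕ) (m : ℕ) (hf : ∀ j < m, f j ≤ f (j+1)) :
    (∑ j ∈ Finset.range m, max (c (f j) - c (f (j+1)) - η) 0) ≤ D c η (f m) := by
  have h := (upperU (fun i => -c i) η hη f m hf).1
  rw [D_eq_U_neg]
  refine le_trans (le_of_eq ?_) h
  unfold usum
  apply Finset.sum_congr rfl
  intro j _
  congr 1
  ring



/-- A `δ`-oscillation partition of `[0, r]`. -/
def PartOk (x : ℝ → ℝ) (δ r : ℝ) : Prop :=
  ∃ (k : ℕ) (s : ℕ → ℝ), s 0 = 0 ∧ s k = r ∧ (∀ i, i < k → s i < s (i+1)) ∧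
    ∀ i, i < k → ∀ u v : ℝ, s i ≤ u → u < s (i+1) → s i ≤ v → v < s (i+1) → |x u - x v| ≤ δ

lemma partOk_zero (x : ℝ → ℝ) (δ : ℝ) : PartOk x δ 0 :=
  ⟨0, fun _ => 0, rfl, rfl, by omega, by omega⟩

lemma partOk_extend {x : ℝ → ℝ} {δ r r' : ℝ} (h : PartOk x δ r) (hrr : r < r')
    (hosc : ∀ u v : ℝ, r ≤ u → u < r' → r ≤ v → v < r' → |x u - x v| ≤ δ) :
    PartOk x δ r' := by
  obtain ⟨k, s, h0, hk, hst, hosc0⟩ := h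
  refine ⟨k+1, fun i => if i ≤ k then s i else r', ?_, ?_, ?_, ?_⟩
  · simp only [if_pos (Nat.zero_le k)]; exact h0
  · simp only [if_neg (by omega : ¬ (k+1 ≤ k))]
  · intro i hi
    by_cases h1 : i + 1 ≤ k
    · simp only [if_pos (by omega : i ≤ k), if_pos h1]; exact hst i (by omega)
    · have hik : i = k := by omega
      subst hik
      simp only [if_pos (le_refl i), if_neg h1, hk]
      exact hrr
  · intro i hi u v hu1 hu2 hv1 hv2
    by_cases h1 : i + 1 ≤ k
    · simp only [if_pos (by omega : i ≤ k), if_pos h1] at hu1 hu2 hv1 hv2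
      exact hosc0 i (by omega) u v hu1 hu2 hv1 hv2
    · have hik : i = k := by omega
      subst hik
      simp only [if_pos (le_refl i), if_neg h1, hk] at hu1 hu2 hv1 hv2
      exact hosc u v hu1 hu2 hv1 hv2

/-- Existence of a `δ`-oscillation partition of `[0, t]` for a càdlàg path. -/
lemma osc_partition {x : ℝ → ℝ} (hx : Cadlag x) {t δ : ℝ} (ht : 0 < t) (hδ : 0 < δ) :
    PartOk x δ t := by
  -- right-continuity bound
  have rc : ∀ a : ℝ, 0 ≤ a → ∃ h > 0, ∀ u : ℝ, a ≤ u → u < a + h → |x u - x a| ≤ δ/2 := by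
    intro a ha
    have h1 := (Metric.tendsto_nhdsWithin_nhds).mp (hx.1 a ha) (δ/2) (by linarith)
    obtain ⟨h, hh, hball⟩ := h1
    refine ⟨h, hh, fun u hu1 hu2 => ?_⟩
    have : dist u a < h := by rw [Real.dist_eq, abs_of_nonneg (by linarith)]; linarith
    have := hball (mem_Ici.mpr hu1) this
    rw [Real.dist_eq] at this; linarith
  -- left-limit bound
  have ll : ∀ a : ℝ, 0 < a → ∃ h > 0, ∀ u v : ℝ, a - h < u → u < a → a - h < v → v < a →
      |x u - x v| ≤ δ := by
    intro a ha
    have h1 := hx.2 a ha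
    have h2 : ∀ᶠ u in 𝓝[<] a, dist (x u) (Function.leftLim x a) < δ/2 :=
      h1 (Metric.ball_mem_nhds _ (by linarith))
    obtain ⟨l, hl, hsub⟩ := mem_nhdsLT_iff_exists_Ioo_subset.mp h2
    refine ⟨a - l, by simp [mem_Iio] at hl; linarith, fun u v hu1 hu2 hv1 hv2 => ?_⟩
    have hu : dist (x u) (Function.leftLim x a) < δ/2 := hsub ⟨by linarith, hu2⟩
    have hv : dist (x v) (Function.leftLim x a) < δ/2 := hsub ⟨by linarith, hv2⟩
    rw [Real.dist_eq] at hu hv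
    have := abs_sub_le (x u) (Function.leftLim x a) (x v)
    rw [abs_sub_comm (Function.leftLim x a) (x v)] at this
    linarith
  set A : Set ℝ := {r | 0 < r ∧ r ≤ t ∧ PartOk x δ r} with hA
  -- A is nonempty
  obtain ⟨h0, hh0, hrc0⟩ := rc 0 le_rfl
  have hr0 : min h0 t ∈ A := by
    refine ⟨lt_min hh0 ht, min_le_right _ _, ?_⟩
    refine partOk_extend (partOk_zero x δ) (lt_min hh0 ht) (fun u v hu1 hu2 hv1 hv2 => ?_)
    have hu := hrc0 u hu1 (by have := min_le_left h0 t; linarith)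
    have hv := hrc0 v hv1 (by have := min_le_left h0 t; linarith)
    have := abs_sub_le (x u) (x 0) (x v)
    rw [abs_sub_comm (x 0) (x v)] at this
    linarith
  have hAne : A.Nonempty := ⟨_, hr0⟩
  have hAbdd : BddAbove A := ⟨t, fun r hr => hr.2.1⟩
  set m := sSup A with hm
  have hm0 : 0 < m := lt_of_lt_of_le (lt_min hh0 ht) (le_csSup hAbdd hr0)
  have hmt : m ≤ t := csSup_le hAne (fun r hr => hr.2.1)
  -- m ∈ A
  have hPm : PartOk x δ m := by
    obtain ⟨h, hh, hll⟩ := ll m hm0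
    obtain ⟨r, hrA, hrgt⟩ := exists_lt_of_lt_csSup hAne (by linarith : m - h < m)
    have hrm : r ≤ m := le_csSup hAbdd hrA
    rcases eq_or_lt_of_le hrm with heq | hlt
    · rw [← heq]; exact hrA.2.2
    · exact partOk_extend hrA.2.2 hlt
        (fun u v hu1 hu2 hv1 hv2 => hll u v (by linarith) hu2 (by linarith) hv2)
  -- m = t
  rcases eq_or_lt_of_le hmt with heq | hlt
  · rw [← heq]; exact hPm
  · exfalso
    obtain ⟨h, hh, hrcm⟩ := rc m (le_of_lt hm0)
    have hr' : min (m + h/2) t ∈ A := by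
      refine ⟨by positivity, min_le_right _ _, ?_⟩
      refine partOk_extend hPm (lt_min (by linarith) hlt) (fun u v hu1 hu2 hv1 hv2 => ?_)
      have hu2' : u < m + h := by have := min_le_left (m + h/2) t; linarith
      have hv2' : v < m + h := by have := min_le_left (m + h/2) t; linarith
      have hu := hrcm u hu1 hu2'
      have hv := hrcm v hv1 hv2'
      have := abs_sub_le (x u) (x m) (x v)
      rw [abs_sub_comm (x m) (x v)] at this
      linarith
    have := le_csSup hAbdd hr'
    have h2 : m < min (m + h/2) t := lt_min (by linarith) hlt
    linarith

lemma seq_mono_le {α : Type*} [Preorder α] {s : ℕ → α} {k : ℕ}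
    (h : ∀ i, i < k → s i < s (i+1)) : ∀ j, j ≤ k → ∀ i, i ≤ j → s i ≤ s j := by
  intro j
  induction j with
  | zero => intro _ i hi; rw [Nat.le_zero.mp hi]
  | succ j ih =>
    intro hjk i hij
    by_cases hi : i = j + 1
    · rw [hi]
    · exact le_trans (ih (by omega) i (by omega)) (le_of_lt (h j (by omega)))

lemma seq_mono_lt {α : Type*} [Preorder α] {s : ℕ → α} {k : ℕ}
    (h : ∀ i, i < k → s i < s (i+1)) {i j : ℕ} (hij : i < j) (hjk : j ≤ k) : s i < s j := by
  obtain ⟨j', rfl⟩ : ∃ j', j = j' + 1 := ⟨j - 1, by omega⟩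
  exact lt_of_le_of_lt (seq_mono_le h j' (by omega) i (by omega)) (h j' (by omega))

/-- The index of the piece of the partition containing `u`. -/
def pIdx (s : ℕ → ℝ) (k : ℕ) (u : ℝ) : ℕ := Nat.findGreatest (fun i => s i ≤ u) k

lemma pIdx_le (s : ℕ → ℝ) (k : ℕ) (u : ℝ) : pIdx s k u ≤ k := Nat.findGreatest_le k

lemma pIdx_mono (s : ℕ → ℝ) (k : ℕ) {u v : ℝ} (huv : u ≤ v) : pIdx s k u ≤ pIdx s k v :=
  Nat.findGreatest_mono (fun i hi => le_trans hi huv) le_rfl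

lemma pIdx_close {x : ℝ → ℝ} {t δ : ℝ} {k : ℕ} {s : ℕ → ℝ}
    (h0 : s 0 = 0) (hk : s k = t) (hst : ∀ i, i < k → s i < s (i+1))
    (hosc : ∀ i, i < k → ∀ u v : ℝ, s i ≤ u → u < s (i+1) → s i ≤ v → v < s (i+1) →
      |x u - x v| ≤ δ)
    (hδ : 0 ≤ δ) {u : ℝ} (hu0 : 0 ≤ u) (hut : u ≤ t) :
    |x u - x (s (pIdx s k u))| ≤ δ := by
  set i := pIdx s k u with hi
  have hle : s i ≤ u := by
    have h := Nat.findGreatest_spec (P := fun j => s j ≤ u) (m := 0) (Nat.zero_le k)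
      (by simpa [h0] using hu0)
    exact h
  rcases eq_or_lt_of_le hut with heq | hlt
  · have h1 : k ≤ i := Nat.le_findGreatest le_rfl (by rw [hk, heq])
    have h2 : i = k := le_antisymm (pIdx_le s k u) h1
    rw [h2, hk, ← heq]
    simpa using hδ
  · have hik : i < k := by
      rcases eq_or_lt_of_le (pIdx_le s k u) with he | hl
      · exfalso; rw [← hi] at he; rw [he, hk] at hle; linarith
      · exact hl
    have hnext : u < s (i+1) := by
      by_contra hcon
      push_neg at hcon
      exact Nat.findGreatest_is_greatest (Nat.lt_succ_self i) (by omega) hcon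
    exact hosc i hik u (s i) hle hnext le_rfl (hst i hik)

/-- The sets whose suprema are `UTV`, `DTV`, `TTV` on `[0, b]`. -/
def USet (x : ℝ → ℝ) (b η : ℝ) : Set ℝ :=
  {v : ℝ | ∃ (n : ℕ) (r : ℕ → ℝ), 0 ≤ r 0 ∧ r n ≤ b ∧ (∀ i, i < n → r i < r (i + 1)) ∧
    v = ∑ i ∈ Finset.range n, max (x (r (i + 1)) - x (r i) - η) 0}

def DSet (x : ℝ → ℝ) (b η : ℝ) : Set ℝ :=
  {v : ℝ | ∃ (n : ℕ) (r : ℕ → ℝ), 0 ≤ r 0 ∧ r n ≤ b ∧ (∀ i, i < n → r i < r (i + 1)) ∧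
    v = ∑ i ∈ Finset.range n, max (x (r i) - x (r (i + 1)) - η) 0}

def TSet (x : ℝ → ℝ) (b η : ℝ) : Set ℝ :=
  {v : ℝ | ∃ (n : ℕ) (r : ℕ → ℝ), 0 ≤ r 0 ∧ r n ≤ b ∧ (∀ i, i < n → r i < r (i + 1)) ∧
    v = ∑ i ∈ Finset.range n, max (|x (r (i + 1)) - x (r i)| - η) 0}

lemma upper_transfer {x : ℝ → ℝ} {t δ : ℝ} {k : ℕ} {s : ℕ → ℝ}
    (h0 : s 0 = 0) (hk : s k = t) (hst : ∀ i, i < k → s i < s (i+1))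
    (hosc : ∀ i, i < k → ∀ u v : ℝ, s i ≤ u → u < s (i+1) → s i ≤ v → v < s (i+1) →
      |x u - x v| ≤ δ)
    (hδ : 0 < δ) {η : ℝ} (hη : 0 ≤ η - 2*δ) :
    (∀ v ∈ USet x t η, v ≤ U (fun i => x (s i)) (η - 2*δ) k) ∧
    (∀ v ∈ DSet x t η, v ≤ D (fun i => x (s i)) (η - 2*δ) k) ∧
    (∀ v ∈ TSet x t η, v ≤ T (fun i => x (s i)) (η - 2*δ) k) := by
  set c : ℕ → ℝ := fun i => x (s i) with hc
  have common : ∀ (n : ℕ) (r : ℕ → ℝ), 0 ≤ r 0 → r n ≤ t → (∀ i, i < n → r i < r (i + 1)) →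
      ∃ p : ℕ → ℕ, (∀ j, j < n → p j ≤ p (j+1)) ∧ p n ≤ k ∧
        (∀ j, j ≤ n → |x (r j) - c (p j)| ≤ δ) := by
    intro n r hr0 hrn hrs
    refine ⟨fun j => pIdx s k (r j), fun j hj => pIdx_mono s k (le_of_lt (hrs j hj)),
      pIdx_le s k (r n), fun j hj => ?_⟩
    have h1 : 0 ≤ r j := le_trans hr0 (seq_mono_le hrs j hj 0 (Nat.zero_le j))
    have h2 : r j ≤ t := le_trans (seq_mono_le hrs n le_rfl j hj) hrn
    exact pIdx_close h0 hk hst hosc hδ.le h1 h2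
  refine ⟨?_, ?_, ?_⟩
  · rintro v ⟨n, r, hr0, hrn, hrs, rfl⟩
    obtain ⟨p, hp1, hp2, hp3⟩ := common n r hr0 hrn hrs
    have hsum : (∑ i ∈ Finset.range n, max (x (r (i + 1)) - x (r i) - η) 0) ≤
        usum c (η - 2*δ) p n := by
      apply Finset.sum_le_sum
      intro i hi
      have hi' : i < n := Finset.mem_range.mp hi
      have e1 := abs_le.mp (hp3 (i+1) (by omega))
      have e2 := abs_le.mp (hp3 i (by omega))
      exact max_le_max (by linarith) le_rfl
    exact le_trans hsum (le_trans ((upperU c _ hη p n hp1).1) (U_mono c _ hp2))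
  · rintro v ⟨n, r, hr0, hrn, hrs, rfl⟩
    obtain ⟨p, hp1, hp2, hp3⟩ := common n r hr0 hrn hrs
    have hsum : (∑ i ∈ Finset.range n, max (x (r i) - x (r (i + 1)) - η) 0) ≤
        ∑ j ∈ Finset.range n, max (c (p j) - c (p (j+1)) - (η - 2*δ)) 0 := by
      apply Finset.sum_le_sum
      intro i hi
      have hi' : i < n := Finset.mem_range.mp hi
      have e1 := abs_le.mp (hp3 (i+1) (by omega))
      have e2 := abs_le.mp (hp3 i (by omega))
      exact max_le_max (by linarith) le_rfl
    exact le_trans hsum (le_trans (upperD c _ hη p n hp1) (D_mono c _ hp2))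
  · rintro v ⟨n, r, hr0, hrn, hrs, rfl⟩
    obtain ⟨p, hp1, hp2, hp3⟩ := common n r hr0 hrn hrs
    have hsum : (∑ i ∈ Finset.range n, max (|x (r (i + 1)) - x (r i)| - η) 0) ≤
        tsum c (η - 2*δ) p n := by
      apply Finset.sum_le_sum
      intro i hi
      have hi' : i < n := Finset.mem_range.mp hi
      have e1 := hp3 (i+1) (by omega)
      have e2 := hp3 i (by omega)
      have key : |x (r (i+1)) - x (r i)| ≤ |c (p (i+1)) - c (p i)| + 2*δ := by
        have t1 : |x (r (i+1)) - x (r i)| - |c (p (i+1)) - c (p i)| ≤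
            |(x (r (i+1)) - x (r i)) - (c (p (i+1)) - c (p i))| := abs_sub_abs_le_abs_sub _ _
        have t2 : (x (r (i+1)) - x (r i)) - (c (p (i+1)) - c (p i)) =
            (x (r (i+1)) - c (p (i+1))) - (x (r i) - c (p i)) := by ring
        rw [t2] at t1
        have t3 := abs_sub (x (r (i+1)) - c (p (i+1))) (x (r i) - c (p i))
        linarith
      exact max_le_max (by linarith) le_rfl
    exact le_trans hsum (le_trans ((upperT c _ hη p n hp1).1) (T_mono c _ hp2))

lemma witness_transfer {x : ℝ → ℝ} {t : ℝ} {k : ℕ} {s : ℕ → ℝ}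
    (h0 : s 0 = 0) (hk : s k = t) (hst : ∀ i, i < k → s i < s (i+1)) (η : ℝ) :
    (∃ v ∈ USet x t η, U (fun i => x (s i)) η k ≤ v) ∧
    (∃ v ∈ TSet x t η, T (fun i => x (s i)) η k ≤ v) := by
  set c : ℕ → ℝ := fun i => x (s i) with hc
  constructor
  · obtain ⟨m, f, hfs, hfm, hv⟩ := (witnessU c η k).1
    have hfj : ∀ j, j ≤ m → f j ≤ k := fun j hj => le_trans (seq_mono_le hfs m le_rfl j hj) hfm
    refine ⟨usum c η f m, ⟨m, fun j => s (f j), ?_, ?_, ?_, ?_⟩, hv⟩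
    · rw [← h0]; exact seq_mono_le hst (f 0) (hfj 0 (Nat.zero_le m)) 0 (Nat.zero_le _)
    · rw [← hk]; exact seq_mono_le hst k le_rfl (f m) hfm
    · intro i hi
      exact seq_mono_lt hst (hfs i hi) (hfj (i+1) (by omega))
    · rfl
  · obtain ⟨m, f, hfs, hfm, hv⟩ := (witnessT c η k).1
    have hfj : ∀ j, j ≤ m → f j ≤ k := fun j hj => le_trans (seq_mono_le hfs m le_rfl j hj) hfm
    refine ⟨tsum c η f m, ⟨m, fun j => s (f j), ?_, ?_, ?_, ?_⟩, hv⟩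
    · rw [← h0]; exact seq_mono_le hst (f 0) (hfj 0 (Nat.zero_le m)) 0 (Nat.zero_le _)
    · rw [← hk]; exact seq_mono_le hst k le_rfl (f m) hfm
    · intro i hi
      exact seq_mono_lt hst (hfs i hi) (hfj (i+1) (by omega))
    · rfl

lemma max_abs_split (a b ε : ℝ) (hε : 0 ≤ ε) :
    max (|a - b| - ε) 0 = max (a - b - ε) 0 + max (b - a - ε) 0 := by
  rcases abs_cases (a - b) with ⟨e, hd⟩ | ⟨e, hd⟩
  · rw [e, max_eq_right (by linarith : b - a - ε ≤ 0), add_zero]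
  · rw [e, max_eq_right (by linarith : a - b - ε ≤ 0), zero_add]
    congr 1
    ring

lemma key {x : ℝ → ℝ} (hx : Cadlag x) {ε t : ℝ} (hε : 0 < ε) (ht : 0 < t) :
    |2 * sSup (USet x t ε) - sSup (TSet x t ε) - (x t - x 0)| ≤ ε ∧
      sSup (USet x t ε) + sSup (DSet x t ε) = sSup (TSet x t ε) := by
  have hU0 : ∀ η : ℝ, (0:ℝ) ∈ USet x t η :=
    fun η => ⟨0, fun _ => 0, le_rfl, le_of_lt ht, by omega, by simp⟩
  have hD0 : ∀ η : ℝ, (0:ℝ) ∈ DSet x t η :=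
    fun η => ⟨0, fun _ => 0, le_rfl, le_of_lt ht, by omega, by simp⟩
  have hT0 : ∀ η : ℝ, (0:ℝ) ∈ TSet x t η :=
    fun η => ⟨0, fun _ => 0, le_rfl, le_of_lt ht, by omega, by simp⟩
  have approx : ∀ δ : ℝ, 0 < δ → ∃ (k : ℕ) (c : ℕ → ℝ), c 0 = x 0 ∧ c k = x t ∧
      (∀ η : ℝ, 0 ≤ η - 2*δ →
        (∀ v ∈ USet x t η, v ≤ U c (η - 2*δ) k) ∧
        (∀ v ∈ DSet x t η, v ≤ D c (η - 2*δ) k) ∧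
        (∀ v ∈ TSet x t η, v ≤ T c (η - 2*δ) k)) ∧
      (∀ η : ℝ, (∃ v ∈ USet x t η, U c η k ≤ v) ∧ (∃ v ∈ TSet x t η, T c η k ≤ v)) := by
    intro δ hδ
    obtain ⟨k, s, h0, hk, hst, hosc⟩ := osc_partition hx ht hδ
    exact ⟨k, fun i => x (s i), by show x (s 0) = x 0; rw [h0], by show x (s k) = x t; rw [hk],
      fun η hη => upper_transfer h0 hk hst hosc hδ hη,
      fun η => witness_transfer h0 hk hst η⟩
  set F : ℝ → ℝ := fun η => sSup (TSet x t η) with hF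
  have hbdd : ∀ η : ℝ, 0 < η →
      BddAbove (USet x t η) ∧ BddAbove (DSet x t η) ∧ BddAbove (TSet x t η) := by
    intro η hη
    obtain ⟨k, c, _, _, hup, _⟩ := approx (η/4) (by linarith)
    obtain ⟨u1, u2, u3⟩ := hup η (by linarith)
    exact ⟨⟨_, fun v hv => u1 v hv⟩, ⟨_, fun v hv => u2 v hv⟩, ⟨_, fun v hv => u3 v hv⟩⟩
  have hTne : ∀ η : ℝ, (TSet x t η).Nonempty := fun η => ⟨0, hT0 η⟩
  have hF_anti : ∀ η₁ η₂ : ℝ, 0 < η₁ → η₁ ≤ η₂ → F η₂ ≤ F η₁ := by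
    intro η₁ η₂ hη₁ h12
    apply csSup_le (hTne η₂)
    rintro v ⟨n, r, hr0, hrn, hrs, rfl⟩
    have hmem : (∑ i ∈ Finset.range n, max (|x (r (i+1)) - x (r i)| - η₁) 0) ∈ TSet x t η₁ :=
      ⟨n, r, hr0, hrn, hrs, rfl⟩
    refine le_trans (Finset.sum_le_sum fun i _ => max_le_max (by linarith) le_rfl)
      (le_csSup (hbdd η₁ hη₁).2.2 hmem)
  have hF_convex : ∀ a b c' : ℝ, 0 < a → a < b → b < c' →
      F b ≤ ((c' - b)/(c' - a)) * F a + ((b - a)/(c' - a)) * F c' := by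
    intro a b c' ha hab hbc
    have hca : (0:ℝ) < c' - a := by linarith
    set lam := (c' - b)/(c' - a) with hlamdef
    set mu := (b - a)/(c' - a) with hmudef
    have hlam : 0 ≤ lam := div_nonneg (by linarith) (by linarith)
    have hmu : 0 ≤ mu := div_nonneg (by linarith) (by linarith)
    have hsum1 : lam + mu = 1 := by
      rw [hlamdef, hmudef, ← add_div, div_eq_one_iff_eq (ne_of_gt hca)]
      ring
    have hb : b = lam * a + mu * c' := by
      rw [hlamdef, hmudef]
      field_simp
      ring
    apply csSup_le (hTne b)
    rintro v ⟨n, r, hr0, hrn, hrs, rfl⟩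
    have hma : (∑ i ∈ Finset.range n, max (|x (r (i+1)) - x (r i)| - a) 0) ∈ TSet x t a :=
      ⟨n, r, hr0, hrn, hrs, rfl⟩
    have hmc : (∑ i ∈ Finset.range n, max (|x (r (i+1)) - x (r i)| - c') 0) ∈ TSet x t c' :=
      ⟨n, r, hr0, hrn, hrs, rfl⟩
    have h1 : (∑ i ∈ Finset.range n, max (|x (r (i+1)) - x (r i)| - b) 0) ≤
        lam * (∑ i ∈ Finset.range n, max (|x (r (i+1)) - x (r i)| - a) 0) +
        mu * (∑ i ∈ Finset.range n, max (|x (r (i+1)) - x (r i)| - c') 0) := by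
      rw [Finset.mul_sum, Finset.mul_sum, ← Finset.sum_add_distrib]
      apply Finset.sum_le_sum
      intro i _
      set d := |x (r (i+1)) - x (r i)| with hd
      apply max_le
      · have e1 : lam * (d - a) + mu * (d - c') = (lam + mu) * d - (lam * a + mu * c') := by
          ring
        have e2 : d - b = lam * (d - a) + mu * (d - c') := by
          rw [e1, hsum1, ← hb, one_mul]
        rw [e2]
        exact add_le_add (mul_le_mul_of_nonneg_left (le_max_left _ _) hlam)
          (mul_le_mul_of_nonneg_left (le_max_left _ _) hmu)
      · have p1 : 0 ≤ lam * max (d - a) 0 := mul_nonneg hlam (le_max_right _ _)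
        have p2 : 0 ≤ mu * max (d - c') 0 := mul_nonneg hmu (le_max_right _ _)
        linarith
    refine le_trans h1 (add_le_add
      (mul_le_mul_of_nonneg_left (le_csSup (hbdd a ha).2.2 hma) hlam)
      (mul_le_mul_of_nonneg_left (le_csSup (hbdd c' (by linarith)).2.2 hmc) hmu))
  set C := F (ε/2) - F (2*ε) with hCdef
  have hC : 0 ≤ C := sub_nonneg.mpr (hF_anti (ε/2) (2*ε) (by linarith) (by linarith))
  have hCont : ∀ δ : ℝ, 0 < δ → δ < ε/4 → F (ε - 2*δ) - F (ε + 2*δ) ≤ (8*δ/ε) * C := by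
    intro δ hδ hδ2
    have h1 := hF_convex (ε/2) (ε - 2*δ) (ε + 2*δ) (by linarith) (by linarith) (by linarith)
    have e1 : (ε + 2*δ) - (ε - 2*δ) = 4*δ := by ring
    have e2 : (ε + 2*δ) - ε/2 = ε/2 + 2*δ := by ring
    have e3 : (ε - 2*δ) - ε/2 = ε/2 - 2*δ := by ring
    rw [e1, e2, e3] at h1
    have hden : (0:ℝ) < ε/2 + 2*δ := by linarith
    have key1 : (4*δ/(ε/2 + 2*δ)) * F (ε/2) + ((ε/2 - 2*δ)/(ε/2 + 2*δ)) * F (ε + 2*δ)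
        - F (ε + 2*δ) = (4*δ/(ε/2 + 2*δ)) * (F (ε/2) - F (ε + 2*δ)) := by
      field_simp
      ring
    have key3 : F (ε/2) - F (ε + 2*δ) ≤ C := by
      have := hF_anti (ε + 2*δ) (2*ε) (by linarith) (by linarith)
      rw [hCdef]
      linarith
    have hcoef : 0 ≤ 4*δ/(ε/2 + 2*δ) := div_nonneg (by linarith) (by linarith)
    have key2 : 4*δ/(ε/2 + 2*δ) ≤ 8*δ/ε := by
      rw [div_le_div_iff₀ hden hε]
      nlinarith
    have step1 : F (ε - 2*δ) - F (ε + 2*δ) ≤ (4*δ/(ε/2 + 2*δ)) * (F (ε/2) - F (ε + 2*δ)) := by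
      linarith [key1]
    have step2 : (4*δ/(ε/2 + 2*δ)) * (F (ε/2) - F (ε + 2*δ)) ≤ (4*δ/(ε/2 + 2*δ)) * C :=
      mul_le_mul_of_nonneg_left key3 hcoef
    have step3 : (4*δ/(ε/2 + 2*δ)) * C ≤ (8*δ/ε) * C := mul_le_mul_of_nonneg_right key2 hC
    linarith
  have main : ∀ δ : ℝ, 0 < δ → δ < ε/4 →
      |2 * sSup (USet x t ε) - F ε - (x t - x 0)| ≤ ε + (8*δ/ε) * C ∧
      sSup (USet x t ε) + sSup (DSet x t ε) ≤ F ε + (8*δ/ε) * C := by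
    intro δ hδ hδ2
    obtain ⟨k, c, hc0, hck, hup, hwit⟩ := approx δ hδ
    have hηε : (0:ℝ) ≤ ε - 2*δ := by linarith
    have idT1 : T c (ε-2*δ) k = U c (ε-2*δ) k + D c (ε-2*δ) k :=
      (identity_invariants c _ hηε k).1
    have idT0 : T c ε k = U c ε k + D c ε k := (identity_invariants c _ hε.le k).1
    have habs1 : |U c (ε-2*δ) k - D c (ε-2*δ) k - (c k - c 0)| ≤ ε - 2*δ := abs_UD c _ hηε k
    have habs0 : |U c ε k - D c ε k - (c k - c 0)| ≤ ε := abs_UD c _ hε.le k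
    have hGle : sSup (USet x t ε) ≤ U c (ε-2*δ) k :=
      csSup_le ⟨0, hU0 ε⟩ (hup ε (by linarith)).1
    have hHle : sSup (DSet x t ε) ≤ D c (ε-2*δ) k :=
      csSup_le ⟨0, hD0 ε⟩ (hup ε (by linarith)).2.1
    have hFle : F ε ≤ T c (ε-2*δ) k := csSup_le ⟨0, hT0 ε⟩ (hup ε (by linarith)).2.2
    have hGge : U c ε k ≤ sSup (USet x t ε) := by
      obtain ⟨v, hv, hle⟩ := (hwit ε).1
      exact le_trans hle (le_csSup (hbdd ε hε).1 hv)
    have hFge : T c ε k ≤ F ε := by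
      obtain ⟨v, hv, hle⟩ := (hwit ε).2
      exact le_trans hle (le_csSup (hbdd ε hε).2.2 hv)
    have hT1le : T c (ε-2*δ) k ≤ F (ε-2*δ) := by
      obtain ⟨v, hv, hle⟩ := (hwit (ε-2*δ)).2
      exact le_trans hle (le_csSup (hbdd _ (by linarith)).2.2 hv)
    have hT0ge : F (ε+2*δ) ≤ T c ε k := by
      apply csSup_le ⟨0, hT0 _⟩
      intro v hv
      have h := (hup (ε+2*δ) (by linarith)).2.2 v hv
      have he : ε + 2*δ - 2*δ = ε := by ring
      rwa [he] at h
    have hcont := hCont δ hδ hδ2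
    have hΔ : c k - c 0 = x t - x 0 := by rw [hck, hc0]
    rw [hΔ, abs_le] at habs1 habs0
    constructor
    · rw [abs_le]
      constructor
      · linarith [hGge, hFle, habs0.1, hT1le, hT0ge]
      · linarith [hGle, hFge, habs1.2, hT1le, hT0ge]
    · have hanti : F (ε+2*δ) ≤ F ε := hF_anti ε (ε+2*δ) hε (by linarith)
      linarith [hGle, hHle, hT1le]
  -- pass to the limit δ → 0
  have limit : ∀ X : ℝ, (∀ δ : ℝ, 0 < δ → δ < ε/4 → X ≤ (8*δ/ε) * C) → X ≤ 0 := by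
    intro X hX
    by_contra hcon
    push_neg at hcon
    set δ0 := min (ε/8) (X * ε / (8 * (C+1))) with hδ0def
    have hδ0pos : 0 < δ0 :=
      lt_min (by linarith) (div_pos (mul_pos hcon hε) (by linarith))
    have hδ0lt : δ0 < ε/4 := lt_of_le_of_lt (min_le_left _ _) (by linarith)
    have h := hX δ0 hδ0pos hδ0lt
    have hd : δ0 ≤ X * ε / (8 * (C+1)) := min_le_right _ _
    have hprod : δ0 * (8 * (C+1)) ≤ X * ε := (le_div_iff₀ (by linarith)).mp hd
    have hfin : (8*δ0/ε) * C < X := by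
      rw [div_mul_eq_mul_div, div_lt_iff₀ hε]
      nlinarith
    linarith
  have conc1 : |2 * sSup (USet x t ε) - F ε - (x t - x 0)| ≤ ε := by
    have := limit (|2 * sSup (USet x t ε) - F ε - (x t - x 0)| - ε)
      (fun δ hδ hδ2 => by linarith [(main δ hδ hδ2).1])
    linarith
  have conc2 : sSup (USet x t ε) + sSup (DSet x t ε) ≤ F ε := by
    have := limit (sSup (USet x t ε) + sSup (DSet x t ε) - F ε)
      (fun δ hδ hδ2 => by linarith [(main δ hδ hδ2).2])
    linarith
  have hsplit : F ε ≤ sSup (USet x t ε) + sSup (DSet x t ε) := by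
    apply csSup_le (hTne ε)
    rintro v ⟨n, r, hr0, hrn, hrs, rfl⟩
    have h1 : (∑ i ∈ Finset.range n, max (x (r (i+1)) - x (r i) - ε) 0) ∈ USet x t ε :=
      ⟨n, r, hr0, hrn, hrs, rfl⟩
    have h2 : (∑ i ∈ Finset.range n, max (x (r i) - x (r (i+1)) - ε) 0) ∈ DSet x t ε :=
      ⟨n, r, hr0, hrn, hrs, rfl⟩
    have he : (∑ i ∈ Finset.range n, max (|x (r (i+1)) - x (r i)| - ε) 0) =
        (∑ i ∈ Finset.range n, max (x (r (i+1)) - x (r i) - ε) 0) +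
        (∑ i ∈ Finset.range n, max (x (r i) - x (r (i+1)) - ε) 0) := by
      rw [← Finset.sum_add_distrib]
      exact Finset.sum_congr rfl fun i _ => max_abs_split _ _ _ hε.le
    rw [he]
    exact add_le_add (le_csSup (hbdd ε hε).1 h1) (le_csSup (hbdd ε hε).2.1 h2)
  exact ⟨conc1, le_antisymm conc2 hsplit⟩

end TV17

/-- the representation of `UTV` and `DTV` in terms of `TTV`, the increment
`x_t - x_0` and a remainder `R` with `|R| ≤ ε`. -/
theorem statement17 (x : ℝ → ℝ) (hx : Cadlag x) (ε : ℝ) (hε : 0 < ε)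
    (t : ℝ) (ht : 0 ≤ t) :
    |2 * UTV x 0 t ε - TTV x 0 t ε - (x t - x 0)| ≤ ε ∧
    |2 * DTV x 0 t ε - TTV x 0 t ε + (x t - x 0)| ≤ ε ∧
    ∃ R : ℝ, |R| ≤ ε ∧
      UTV x 0 t ε = (1 / 2) * (TTV x 0 t ε + x t - x 0 + R) ∧
      DTV x 0 t ε = (1 / 2) * (TTV x 0 t ε - x t + x 0 - R) := by
  have hUeq : UTV x 0 t ε = sSup (TV17.USet x t ε) := rfl
  have hDeq : DTV x 0 t ε = sSup (TV17.DSet x t ε) := rfl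
  have hTeq : TTV x 0 t ε = sSup (TV17.TSet x t ε) := rfl
  rcases eq_or_lt_of_le ht with h0 | hpos
  · -- the degenerate case `t = 0`
    subst h0
    have hz : ∀ S : Set ℝ, (0:ℝ) ∈ S → (∀ v ∈ S, v = 0) → sSup S = 0 := by
      intro S h1 h2
      have hS : S = {0} := Set.eq_singleton_iff_unique_mem.mpr ⟨h1, h2⟩
      rw [hS, csSup_singleton]
    have hgen : ∀ (g : ℕ → ℝ) (n : ℕ), 0 ≤ g 0 → g n ≤ 0 →
        (∀ i, i < n → g i < g (i+1)) → n = 0 := by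
      intro g n h1 h2 h3
      by_contra hn
      have := TV17.seq_mono_lt h3 (Nat.pos_of_ne_zero hn) le_rfl
      linarith
    have hU : sSup (TV17.USet x 0 ε) = 0 := by
      refine hz _ ⟨0, fun _ => 0, le_rfl, le_rfl, by omega, by simp⟩ ?_
      rintro v ⟨n, r, h1, h2, h3, rfl⟩
      rw [hgen r n h1 h2 h3]
      simp
    have hD : sSup (TV17.DSet x 0 ε) = 0 := by
      refine hz _ ⟨0, fun _ => 0, le_rfl, le_rfl, by omega, by simp⟩ ?_
      rintro v ⟨n, r, h1, h2, h3, rfl⟩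
      rw [hgen r n h1 h2 h3]
      simp
    have hT : sSup (TV17.TSet x 0 ε) = 0 := by
      refine hz _ ⟨0, fun _ => 0, le_rfl, le_rfl, by omega, by simp⟩ ?_
      rintro v ⟨n, r, h1, h2, h3, rfl⟩
      rw [hgen r n h1 h2 h3]
      simp
    rw [hUeq, hDeq, hTeq, hU, hD, hT]
    have e0 : 2*(0:ℝ) - 0 - (x 0 - x 0) = 0 := by ring
    have e0' : 2*(0:ℝ) - 0 + (x 0 - x 0) = 0 := by ring
    refine ⟨by rw [e0, abs_zero]; exact hε.le, by rw [e0', abs_zero]; exact hε.le,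
      0, by rw [abs_zero]; exact hε.le, by ring, by ring⟩
  · obtain ⟨h1, h2⟩ := TV17.key hx hε hpos
    rw [hUeq, hDeq, hTeq]
    refine ⟨h1, ?_, ?_⟩
    · have hneg : 2 * sSup (TV17.DSet x t ε) - sSup (TV17.TSet x t ε) + (x t - x 0)
          = -(2 * sSup (TV17.USet x t ε) - sSup (TV17.TSet x t ε) - (x t - x 0)) := by
        linear_combination 2 * h2
      rw [hneg, abs_neg]
      exact h1
    · refine ⟨2 * sSup (TV17.USet x t ε) - sSup (TV17.TSet x t ε) - (x t - x 0), h1,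
        by ring, ?_⟩
      linear_combination h2
end
end

section
/- Let y: [0,∞) → ℝ be a càdlàg path of locally finite total variation, let f: ℝ → ℝ be continuously differentiable and let F be an antiderivative of f. Then for every t > 0, ∫_{(0,t]} f(y_s) dy_s = F(y_t) − F(y_0) − Σ_{0<s≤t} ( F(y_s) − F(y_{s−}) − f(y_s) Δy_s ), where the sum converges absolutely. -/
open MeasureTheory Filter Topology Set
open scoped Classical

noncomputable section

section S19section
open Function

namespace S19

lemma SF_add_apply (u v : StieltjesFunction ℝ) (x : ℝ) : (u + v) x = u x + v x := rfl

lemma leftLim_add_SF (u v : StieltjesFunction ℝ) (x : ℝ) :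
    leftLim (⇑(u + v)) x = leftLim u x + leftLim v x := by
  apply leftLim_eq_of_tendsto
  have h := (u.mono.tendsto_leftLim x).add (v.mono.tendsto_leftLim x)
  exact h.congr (fun s => rfl)

lemma toReal_Ioc (u : StieltjesFunction ℝ) {a b : ℝ} (hab : a ≤ b) :
    (u.measure (Ioc a b)).toReal = u b - u a := by
  rw [u.measure_Ioc, ENNReal.toReal_ofReal (sub_nonneg.2 (u.mono hab))]

lemma toReal_Ioo (u : StieltjesFunction ℝ) {a b : ℝ} (hab : a < b) :
    (u.measure (Ioo a b)).toReal = leftLim u b - u a := by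
  rw [u.measure_Ioo, ENNReal.toReal_ofReal (sub_nonneg.2 (u.mono.le_leftLim hab))]

lemma toReal_sing (u : StieltjesFunction ℝ) (b : ℝ) :
    (u.measure {b}).toReal = u b - leftLim u b := by
  rw [u.measure_singleton, ENNReal.toReal_ofReal (sub_nonneg.2 (u.mono.leftLim_le le_rfl))]

lemma integral_singleton' (μ : Measure ℝ) (b : ℝ) (g : ℝ → ℝ) :
    ∫ s in ({b} : Set ℝ), g s ∂μ = (μ {b}).toReal * g b := by
  rw [Measure.restrict_singleton, integral_smul_measure, integral_dirac, smul_eq_mul]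

lemma slope_repr {F f : ℝ → ℝ} (hF : ∀ z, HasDerivAt F (f z) z) {p q : ℝ} (hpq : p < q) :
    ∃ c ∈ Ioo p q, F q - F p = f c * (q - p) := by
  obtain ⟨c, hc, hc'⟩ := exists_hasDerivAt_eq_slope F f hpq
    (fun z _ => (hF z).continuousAt.continuousWithinAt) (fun z _ => hF z)
  refine ⟨c, hc, ?_⟩
  rw [hc', div_mul_cancel₀]
  exact sub_ne_zero.2 (ne_of_gt hpq)

lemma jump_summable (u : StieltjesFunction ℝ) {t : ℝ} (ht : 0 ≤ t) :
    Summable (fun s : Ioc (0:ℝ) t => u s - leftLim u s) ∧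
      ∑' s : Ioc (0:ℝ) t, (u (s:ℝ) - leftLim u (s:ℝ)) ≤ u t - u 0 := by
  have hnn : ∀ s : Ioc (0:ℝ) t, 0 ≤ u (s:ℝ) - leftLim u (s:ℝ) :=
    fun s => sub_nonneg.2 (u.mono.leftLim_le le_rfl)
  have hbound : ∀ Fs : Finset ↥(Ioc (0:ℝ) t),
      ∑ x ∈ Fs, (u (x:ℝ) - leftLim u (x:ℝ)) ≤ u t - u 0 := by
    intro Fs
    have h1 : ∀ x : ↥(Ioc (0:ℝ) t), u (x:ℝ) - leftLim u (x:ℝ) = (u.measure {(x:ℝ)}).toReal :=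
      fun x => (toReal_sing u _).symm
    have hd : (↑Fs : Set ↥(Ioc (0:ℝ) t)).PairwiseDisjoint (fun x => ({(x:ℝ)} : Set ℝ)) := by
      intro a _ b _ hab
      simp only [Set.disjoint_singleton_left, Set.mem_singleton_iff]
      exact fun h => hab (Subtype.coe_injective h)
    calc ∑ x ∈ Fs, (u (x:ℝ) - leftLim u (x:ℝ))
        = ∑ x ∈ Fs, (u.measure {(x:ℝ)}).toReal := Finset.sum_congr rfl (fun x _ => h1 x)
      _ = (∑ x ∈ Fs, u.measure {(x:ℝ)}).toReal :=
          (ENNReal.toReal_sum (fun x _ => by rw [u.measure_singleton]; exact ENNReal.ofReal_ne_top)).symm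
      _ = (u.measure (⋃ x ∈ Fs, {(x:ℝ)})).toReal := by
          rw [measure_biUnion_finset hd (fun x _ => measurableSet_singleton _)]
      _ ≤ u t - u 0 := by
          apply ENNReal.toReal_le_of_le_ofReal (sub_nonneg.2 (u.mono ht))
          rw [← u.measure_Ioc]
          apply measure_mono
          intro z hz
          simp only [Set.mem_iUnion, Set.mem_singleton_iff] at hz
          obtain ⟨x, _, rfl⟩ := hz
          exact x.2
  exact ⟨summable_of_sum_le hnn hbound,
    Summable.tsum_le_of_sum_le (summable_of_sum_le hnn hbound) hbound⟩

lemma sum_setIntegral (μ : Measure ℝ) (g : ℝ → ℝ) (r : ℕ → ℝ) (n : ℕ)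
    (hmono : ∀ i j, i ≤ j → j ≤ n → r i ≤ r j)
    (hint : IntegrableOn g (Ioc (r 0) (r n)) μ) :
    ∫ s in Ioc (r 0) (r n), g s ∂μ = ∑ i ∈ Finset.range n, ∫ s in Ioc (r i) (r (i+1)), g s ∂μ := by
  induction n with
  | zero => simp
  | succ m ih =>
    have h0m : r 0 ≤ r m := hmono 0 m (Nat.zero_le _) (Nat.le_succ _)
    have hmm : r m ≤ r (m+1) := hmono m (m+1) (Nat.le_succ _) le_rfl
    have hsplit : Ioc (r 0) (r m) ∪ Ioc (r m) (r (m+1)) = Ioc (r 0) (r (m+1)) :=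
      Ioc_union_Ioc_eq_Ioc h0m hmm
    have hsub1 : Ioc (r 0) (r m) ⊆ Ioc (r 0) (r (m+1)) := Ioc_subset_Ioc le_rfl hmm
    have hsub2 : Ioc (r m) (r (m+1)) ⊆ Ioc (r 0) (r (m+1)) := Ioc_subset_Ioc h0m le_rfl
    rw [← hsplit, setIntegral_union (Ioc_disjoint_Ioc_of_le le_rfl) measurableSet_Ioc
        (hint.mono_set hsub1) (hint.mono_set hsub2), Finset.sum_range_succ,
      ih (fun i j hij hj => hmono i j hij (hj.trans (Nat.le_succ _))) (hint.mono_set hsub1)]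

lemma exists_partition (w : StieltjesFunction ℝ) {t δ : ℝ} (ht : 0 < t) (hδ : 0 < δ) :
    ∃ (n : ℕ) (r : ℕ → ℝ), r 0 = 0 ∧ r n = t ∧ (∀ i, i < n → r i < r (i + 1)) ∧
      (∀ i, i < n → leftLim w (r (i + 1)) - w (r i) ≤ δ) := by
  have key : ∀ x : ℝ, x < t → ∃ x', x < x' ∧ x' ≤ t ∧ leftLim w x' - w x ≤ δ ∧
      (x' < t → w x + δ ≤ w x') := by
    intro x hx
    set A : Set ℝ := {s | x < s ∧ s ≤ t ∧ leftLim w s ≤ w x + δ} with hA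
    have h1 : Tendsto w (𝓝[>] x) (𝓝 (w x)) :=
      (w.right_continuous x).mono_left (nhdsWithin_mono x Ioi_subset_Ici_self)
    have hev1 : ∀ᶠ s in 𝓝[>] x, w s < w x + δ :=
      h1 (Iio_mem_nhds (lt_add_of_pos_right _ hδ))
    have hev2 : ∀ᶠ s in 𝓝[>] x, s ∈ Ioo x t := Ioo_mem_nhdsGT_of_mem ⟨le_rfl, hx⟩
    obtain ⟨s₀, hs₀1, hs₀2⟩ := (hev1.and hev2).exists
    have hs₀A : s₀ ∈ A := ⟨hs₀2.1, hs₀2.2.le, (w.mono.leftLim_le le_rfl).trans hs₀1.le⟩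
    have hne : A.Nonempty := ⟨s₀, hs₀A⟩
    have hbdd : BddAbove A := ⟨t, fun s hs => hs.2.1⟩
    refine ⟨sSup A, lt_csSup_of_lt hbdd hs₀A hs₀2.1, csSup_le hne (fun s hs => hs.2.1), ?_, ?_⟩
    · have hz : ∀ z < sSup A, w z ≤ w x + δ := by
        intro z hz
        obtain ⟨s', hs'A, hzs'⟩ := exists_lt_of_lt_csSup hne hz
        exact (w.mono.le_leftLim hzs').trans hs'A.2.2
      have hll : leftLim w (sSup A) ≤ w x + δ := by
        refine le_of_tendsto (w.mono.tendsto_leftLim (sSup A)) ?_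
        filter_upwards [self_mem_nhdsWithin] with z hz'
        exact hz z hz'
      linarith
    · intro hx't
      have hxsup : x < sSup A := lt_csSup_of_lt hbdd hs₀A hs₀2.1
      have hev : ∀ᶠ s in 𝓝[>] (sSup A), w x + δ ≤ w s := by
        filter_upwards [Ioo_mem_nhdsGT_of_mem (⟨le_rfl, hx't⟩ : sSup A ∈ Ico (sSup A) t)]
          with s hs
        have hsnA : s ∉ A := fun hmem => absurd (le_csSup hbdd hmem) (not_le.2 hs.1)
        have hnle : ¬ (leftLim w s ≤ w x + δ) :=
          fun hc => hsnA ⟨hxsup.trans hs.1, hs.2.le, hc⟩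
        exact (not_le.1 hnle).le.trans (w.mono.leftLim_le le_rfl)
      have h2 : Tendsto w (𝓝[>] (sSup A)) (𝓝 (w (sSup A))) :=
        (w.right_continuous (sSup A)).mono_left (nhdsWithin_mono _ Ioi_subset_Ici_self)
      exact ge_of_tendsto h2 hev
  choose next hnext1 hnext2 hnext3 hnext4 using key
  set g : ℝ → ℝ := fun x => if h : x < t then next x h else t with hg
  set r : ℕ → ℝ := fun n => Nat.rec 0 (fun _ xx => g xx) n with hr
  have hr0 : r 0 = 0 := rfl
  have hrsucc : ∀ i, r (i+1) = g (r i) := fun i => rfl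
  have hrle : ∀ i, r i ≤ t := by
    intro i
    induction i with
    | zero => exact ht.le
    | succ m ih =>
      rw [hrsucc]
      by_cases h : r m < t
      · rw [hg]; simp only [dif_pos h]; exact hnext2 _ h
      · rw [hg]; simp only [dif_neg h]; exact le_rfl
  have hstay : ∀ i, ¬ r i < t → r (i+1) = t := by
    intro i h; rw [hrsucc, hg]; simp only [dif_neg h]
  have hstep : ∀ i, r i < t → r i < r (i+1) ∧ leftLim w (r (i+1)) - w (r i) ≤ δ ∧
      (r (i+1) < t → w (r i) + δ ≤ w (r (i+1))) := by
    intro i h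
    rw [hrsucc, hg]
    simp only [dif_pos h]
    exact ⟨hnext1 _ h, hnext3 _ h, hnext4 _ h⟩
  have growth : ∀ i : ℕ, r i < t → w 0 + i * δ ≤ w (r i) := by
    intro i
    induction i with
    | zero => intro _; simp [hr0]
    | succ m ih =>
      intro h
      have hm : r m < t := by
        by_contra hc
        rw [hstay m hc] at h
        exact lt_irrefl _ h
      have h1 := ih hm
      have h2 := (hstep m hm).2.2 h
      push_cast
      linarith
  have hterm : ∃ N : ℕ, r N = t := by
    obtain ⟨N, hN⟩ := exists_nat_gt ((w t - w 0) / δ)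
    refine ⟨N, ?_⟩
    by_contra hc
    have hlt : r N < t := lt_of_le_of_ne (hrle N) hc
    have h1 := growth N hlt
    have h2 : w (r N) ≤ w t := w.mono (hrle N)
    have h3 : (w t - w 0) / δ * δ < N * δ := by
      apply mul_lt_mul_of_pos_right hN hδ
    rw [div_mul_cancel₀ _ (ne_of_gt hδ)] at h3
    linarith
  set n := Nat.find hterm with hn
  have hrn : r n = t := Nat.find_spec hterm
  have hltn : ∀ i, i < n → r i < t := by
    intro i hi
    exact lt_of_le_of_ne (hrle i) (Nat.find_min hterm hi)
  exact ⟨n, r, hr0, hrn, fun i hi => (hstep i (hltn i hi)).1,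
    fun i hi => (hstep i (hltn i hi)).2.1⟩


/-- MVT-type estimate. -/
lemma mvt_bound {F f : ℝ → ℝ} (hF : ∀ z, HasDerivAt F (f z) z) {A B ε δ : ℝ}
    (hε : 0 ≤ ε)
    (hmod : ∀ p ∈ Icc A B, ∀ q ∈ Icc A B, |p - q| ≤ δ → |f p - f q| ≤ ε)
    {p q ξ : ℝ} (hp : p ∈ Icc A B) (hq : q ∈ Icc A B) (hqp : |q - p| ≤ δ)
    (hξ : ξ = p ∨ ξ = q) :
    |F q - F p - f ξ * (q - p)| ≤ ε * |q - p| := by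
  have hξK : ξ ∈ Icc A B := by rcases hξ with rfl | rfl <;> assumption
  rcases lt_trichotomy p q with h | h | h
  · obtain ⟨c, hc, hrepr⟩ := slope_repr hF h
    have hcK : c ∈ Icc A B := ⟨hp.1.trans hc.1.le, hc.2.le.trans hq.2⟩
    have habs : |q - p| = q - p := abs_of_pos (sub_pos.2 h)
    have hcξ : |c - ξ| ≤ δ := by
      rw [habs] at hqp
      rcases hξ with rfl | rfl <;>
        exact (abs_le.2 ⟨by linarith [hc.1, hc.2], by linarith [hc.1, hc.2]⟩).trans hqp
    have : F q - F p - f ξ * (q - p) = (f c - f ξ) * (q - p) := by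
      rw [hrepr]; ring
    rw [this, abs_mul]
    exact mul_le_mul_of_nonneg_right (hmod c hcK ξ hξK hcξ) (abs_nonneg _)
  · subst h; simp
  · obtain ⟨c, hc, hrepr⟩ := slope_repr hF h
    have hcK : c ∈ Icc A B := ⟨hq.1.trans hc.1.le, hc.2.le.trans hp.2⟩
    have habs : |q - p| = p - q := by rw [abs_sub_comm]; exact abs_of_pos (sub_pos.2 h)
    have hcξ : |c - ξ| ≤ δ := by
      rw [habs] at hqp
      rcases hξ with rfl | rfl <;>
        exact (abs_le.2 ⟨by linarith [hc.1, hc.2], by linarith [hc.1, hc.2]⟩).trans hqp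
    have heq : F q - F p - f ξ * (q - p) = -((f c - f ξ) * (p - q)) := by
      linear_combination -hrepr
    rw [heq, abs_neg, abs_mul, abs_sub_comm p q]
    exact mul_le_mul_of_nonneg_right (hmod c hcK ξ hξK hcξ) (abs_nonneg _)
  
theorem core (u v : StieltjesFunction ℝ) {f F : ℝ → ℝ} (hf : Continuous f)
    (hF : ∀ z, HasDerivAt F (f z) z) {t : ℝ} (ht : 0 < t) :
    Summable (fun s : Ioc (0:ℝ) t => |F (u s - v s) - F (leftLim u s - leftLim v s) -
        f (u s - v s) * ((u s - v s) - (leftLim u s - leftLim v s))|) ∧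
    (∫ s in Ioc (0:ℝ) t, f (u s - v s) ∂u.measure) -
        (∫ s in Ioc (0:ℝ) t, f (u s - v s) ∂v.measure)
      = F (u t - v t) - F (u 0 - v 0) -
        ∑' s : Ioc (0:ℝ) t, (F (u s - v s) - F (leftLim u s - leftLim v s) -
          f (u s - v s) * ((u s - v s) - (leftLim u s - leftLim v s))) := by
  set A := u 0 - v t with hA
  set B := u t - v 0 with hB
  have hu0t : u 0 ≤ u t := u.mono ht.le
  have hv0t : v 0 ≤ v t := v.mono ht.le
  have hAB : A ≤ B := by rw [hA, hB]; linarith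
  have hmemY : ∀ s : ℝ, 0 ≤ s → s ≤ t → u s - v s ∈ Icc A B := by
    intro s h0 h1
    have h2 : u 0 ≤ u s := u.mono h0
    have h3 : u s ≤ u t := u.mono h1
    have h4 : v 0 ≤ v s := v.mono h0
    have h5 : v s ≤ v t := v.mono h1
    exact ⟨by rw [hA]; linarith, by rw [hB]; linarith⟩
  have hmemYl : ∀ s : ℝ, 0 < s → s ≤ t → leftLim u s - leftLim v s ∈ Icc A B := by
    intro s h0 h1
    have h2 : u 0 ≤ leftLim u s := u.mono.le_leftLim h0
    have h3 : leftLim u s ≤ u s := u.mono.leftLim_le le_rfl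
    have h3' : u s ≤ u t := u.mono h1
    have h4 : v 0 ≤ leftLim v s := v.mono.le_leftLim h0
    have h5 : leftLim v s ≤ v s := v.mono.leftLim_le le_rfl
    have h5' : v s ≤ v t := v.mono h1
    exact ⟨by rw [hA]; linarith, by rw [hB]; linarith⟩
  obtain ⟨M, hM⟩ := isCompact_Icc.exists_bound_of_continuousOn (f := f) hf.continuousOn
  have hM0 : 0 ≤ M := (norm_nonneg _).trans (hM A ⟨le_rfl, hAB⟩)
  have hMabs : ∀ z ∈ Icc A B, |f z| ≤ M := by
    intro z hz; simpa [Real.norm_eq_abs] using hM z hz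
  have hjump_le : ∀ s : ℝ, |((u s - v s) - (leftLim u s - leftLim v s))| ≤
      (u s - leftLim u s) + (v s - leftLim v s) := by
    intro s
    have h1 : leftLim u s ≤ u s := u.mono.leftLim_le le_rfl
    have h2 : leftLim v s ≤ v s := v.mono.leftLim_le le_rfl
    rw [abs_le]; constructor <;> linarith
  have hjsumu := jump_summable u ht.le
  have hjsumv := jump_summable v ht.le
  have hjw_sum : Summable (fun s : Ioc (0:ℝ) t =>
      (u s - leftLim u s) + (v s - leftLim v s)) := hjsumu.1.add hjsumv.1
  have hjw_tsum : ∑' s : Ioc (0:ℝ) t, ((u s - leftLim u s) + (v s - leftLim v s))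
      ≤ (u t - u 0) + (v t - v 0) := by
    rw [Summable.tsum_add hjsumu.1 hjsumv.1]
    exact add_le_add hjsumu.2 hjsumv.2
  have hmod_crude : ∀ p ∈ Icc A B, ∀ q ∈ Icc A B, |p - q| ≤ B - A → |f p - f q| ≤ 2 * M := by
    intro p hp q hq _
    calc |f p - f q| ≤ |f p| + |f q| := abs_sub _ _
      _ ≤ 2 * M := by linarith [hMabs p hp, hMabs q hq]
  have hcorr_abs : ∀ s : ℝ, 0 < s → s ≤ t →
      |F (u s - v s) - F (leftLim u s - leftLim v s) -
        f (u s - v s) * ((u s - v s) - (leftLim u s - leftLim v s))|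
      ≤ (2 * M) * ((u s - leftLim u s) + (v s - leftLim v s)) := by
    intro s h0 h1
    have hYs := hmemY s h0.le h1
    have hYls := hmemYl s h0 h1
    have hd : |(u s - v s) - (leftLim u s - leftLim v s)| ≤ B - A := by
      obtain ⟨hy1, hy2⟩ := hYs
      obtain ⟨hl1, hl2⟩ := hYls
      rw [abs_le]; constructor <;> linarith
    have hm := mvt_bound hF (by linarith : (0:ℝ) ≤ 2*M) hmod_crude hYls hYs hd (Or.inr rfl)
    calc |F (u s - v s) - F (leftLim u s - leftLim v s) -
        f (u s - v s) * ((u s - v s) - (leftLim u s - leftLim v s))|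
        ≤ (2*M) * |(u s - v s) - (leftLim u s - leftLim v s)| := hm
      _ ≤ (2*M) * ((u s - leftLim u s) + (v s - leftLim v s)) :=
          mul_le_mul_of_nonneg_left (hjump_le s) (by linarith)
  have hS1 : Summable (fun s : Ioc (0:ℝ) t =>
      |F (u s - v s) - F (leftLim u s - leftLim v s) -
        f (u s - v s) * ((u s - v s) - (leftLim u s - leftLim v s))|) := by
    exact Summable.of_nonneg_of_le (fun s => abs_nonneg _)
      (fun s => hcorr_abs s.1 s.2.1 s.2.2) (hjw_sum.mul_left (2*M))
  refine ⟨hS1, ?_⟩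
  set G : ℝ → ℝ := fun s => F (u s - v s) - F (leftLim u s - leftLim v s) -
      f (u s - v s) * ((u s - v s) - (leftLim u s - leftLim v s)) with hGdef
  have hScorr : Summable (fun s : Ioc (0:ℝ) t => G s) := hS1.of_abs
  -- integrability
  have hYmeas : Measurable (fun s : ℝ => u s - v s) := u.mono.measurable.sub v.mono.measurable
  have hfY : Measurable (fun s : ℝ => f (u s - v s)) := hf.measurable.comp hYmeas
  have hIu : IntegrableOn (fun s : ℝ => f (u s - v s)) (Ioc 0 t) u.measure := by
    refine Integrable.mono' (g := fun _ => M) ?_ hfY.aestronglyMeasurable ?_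
    · refine integrableOn_const (lt_top_iff_ne_top.1 ?_)
      rw [u.measure_Ioc]; exact ENNReal.ofReal_lt_top
    · refine (ae_restrict_iff' measurableSet_Ioc).2 (ae_of_all _ ?_)
      intro s hs
      simpa [Real.norm_eq_abs] using hMabs _ (hmemY s hs.1.le hs.2)
  have hIv : IntegrableOn (fun s : ℝ => f (u s - v s)) (Ioc 0 t) v.measure := by
    refine Integrable.mono' (g := fun _ => M) ?_ hfY.aestronglyMeasurable ?_
    · refine integrableOn_const (lt_top_iff_ne_top.1 ?_)
      rw [v.measure_Ioc]; exact ENNReal.ofReal_lt_top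
    · refine (ae_restrict_iff' measurableSet_Ioc).2 (ae_of_all _ ?_)
      intro s hs
      simpa [Real.norm_eq_abs] using hMabs _ (hmemY s hs.1.le hs.2)
  set L := (∫ s in Ioc (0:ℝ) t, f (u s - v s) ∂u.measure) -
      (∫ s in Ioc (0:ℝ) t, f (u s - v s) ∂v.measure) with hL
  set R := F (u t - v t) - F (u 0 - v 0) - ∑' s : Ioc (0:ℝ) t, G s with hR
  show L = R
  have main : ∀ ε : ℝ, 0 < ε → |L - R| ≤ ε := by
    intro ε hε
    set V := (u t - u 0) + (v t - v 0) with hV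
    have hV0 : 0 ≤ V := by rw [hV]; linarith
    set εf := ε / (3 * V + 1) with hεf
    have hεfpos : 0 < εf := div_pos hε (by linarith)
    have huc : UniformContinuousOn f (Icc A B) :=
      isCompact_Icc.uniformContinuousOn_of_continuous hf.continuousOn
    rw [Metric.uniformContinuousOn_iff_le] at huc
    obtain ⟨δ, hδpos, hmodd⟩ := huc εf hεfpos
    have hmod : ∀ p ∈ Icc A B, ∀ q ∈ Icc A B, |p - q| ≤ δ → |f p - f q| ≤ εf := by
      intro p hp q hq hpq
      have := hmodd p hp q hq (by rwa [Real.dist_eq])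
      rwa [Real.dist_eq] at this
    obtain ⟨n, r, hr0, hrn, hrlt, hrosc⟩ := exists_partition (u + v) ht hδpos
    have hosc : ∀ i, i < n →
        (leftLim u (r (i+1)) + leftLim v (r (i+1))) - (u (r i) + v (r i)) ≤ δ := by
      intro i hi
      have h := hrosc i hi
      rwa [leftLim_add_SF, SF_add_apply] at h
    have hrmono : ∀ i j, i ≤ j → j ≤ n → r i ≤ r j := by
      intro i j hij
      induction j, hij using Nat.le_induction with
      | base => intro _; exact le_rfl
      | succ k hik ih =>
        intro hkn
        exact (ih ((Nat.le_succ k).trans hkn)).trans (hrlt k (Nat.lt_of_succ_le hkn)).le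
    have hrstrict : ∀ i j, i < j → j ≤ n → r i < r j := by
      intro i j hij hjn
      have h1 : r i < r (i+1) := hrlt i (lt_of_lt_of_le hij hjn)
      exact h1.trans_le (hrmono (i+1) j hij hjn)
    have hr_nonneg : ∀ i, i ≤ n → 0 ≤ r i := fun i hi => hr0 ▸ hrmono 0 i (Nat.zero_le _) hi
    have hr_let : ∀ i, i ≤ n → r i ≤ t := fun i hi => hrn ▸ hrmono i n hi le_rfl
    -- per-interval estimate
    have key : ∀ i, i < n →
        |(F (u (r (i+1)) - v (r (i+1))) - F (u (r i) - v (r i))) - G (r (i+1))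
          - ((∫ s in Ioc (r i) (r (i+1)), f (u s - v s) ∂u.measure)
              - ∫ s in Ioc (r i) (r (i+1)), f (u s - v s) ∂v.measure)|
        ≤ 2 * εf * ((u (r (i+1)) + v (r (i+1))) - (u (r i) + v (r i))) := by
      intro i hi
      set a := r i with ha
      set b := r (i+1) with hb
      have hab : a < b := hrlt i hi
      have ha0 : 0 ≤ a := hr_nonneg i hi.le
      have hbt : b ≤ t := hr_let (i+1) hi
      have hat : a ≤ t := hab.le.trans hbt
      have hb0 : 0 < b := lt_of_le_of_lt ha0 hab
      have hosci : (leftLim u b + leftLim v b) - (u a + v a) ≤ δ := hosc i hi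
      have hYa := hmemY a ha0 hat
      have hYb := hmemY b hb0.le hbt
      have hYlb := hmemYl b hb0 hbt
      have huab : u a ≤ leftLim u b := u.mono.le_leftLim hab
      have hvab : v a ≤ leftLim v b := v.mono.le_leftLim hab
      have hulb : leftLim u b ≤ u b := u.mono.leftLim_le le_rfl
      have hvlb : leftLim v b ≤ v b := v.mono.leftLim_le le_rfl
      have h1 : |(leftLim u b - leftLim v b) - (u a - v a)|
          ≤ (leftLim u b + leftLim v b) - (u a + v a) := by
        rw [abs_le]; constructor <;> linarith
      have e2 : |F (leftLim u b - leftLim v b) - F (u a - v a)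
          - f (u a - v a) * ((leftLim u b - leftLim v b) - (u a - v a))|
          ≤ εf * ((leftLim u b + leftLim v b) - (u a + v a)) := by
        have hm := mvt_bound hF hεfpos.le hmod hYa hYlb (h1.trans hosci) (Or.inl rfl)
        calc |F (leftLim u b - leftLim v b) - F (u a - v a)
            - f (u a - v a) * ((leftLim u b - leftLim v b) - (u a - v a))|
            ≤ εf * |(leftLim u b - leftLim v b) - (u a - v a)| := hm
          _ ≤ εf * ((leftLim u b + leftLim v b) - (u a + v a)) :=
              mul_le_mul_of_nonneg_left h1 hεfpos.le
      have hptwise : ∀ s, a ≤ s → s < b → |f (u s - v s) - f (u a - v a)| ≤ εf := by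
        intro s has hsb
        have hs0 : 0 ≤ s := ha0.trans has
        have hst : s ≤ t := hsb.le.trans hbt
        have h2 : u s ≤ leftLim u b := u.mono.le_leftLim hsb
        have h3 : v s ≤ leftLim v b := v.mono.le_leftLim hsb
        have h4 : u a ≤ u s := u.mono has
        have h5 : v a ≤ v s := v.mono has
        have h6 : |(u s - v s) - (u a - v a)| ≤ δ := by
          rw [abs_le]; constructor <;> linarith
        exact hmod _ (hmemY s hs0 hst) _ hYa h6
      have hsplitIoc : Ioo a b ∪ {b} = Ioc a b := Ioo_union_right hab
      have hdisj : Disjoint (Ioo a b) ({b} : Set ℝ) := by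
        simp [Set.disjoint_singleton_right]
      have hIocu : IntegrableOn (fun s : ℝ => f (u s - v s)) (Ioc a b) u.measure :=
        hIu.mono_set (Ioc_subset_Ioc ha0 hbt)
      have hIocv : IntegrableOn (fun s : ℝ => f (u s - v s)) (Ioc a b) v.measure :=
        hIv.mono_set (Ioc_subset_Ioc ha0 hbt)
      have hioo_u : IntegrableOn (fun s : ℝ => f (u s - v s)) (Ioo a b) u.measure :=
        hIocu.mono_set Ioo_subset_Ioc_self
      have hioo_v : IntegrableOn (fun s : ℝ => f (u s - v s)) (Ioo a b) v.measure :=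
        hIocv.mono_set Ioo_subset_Ioc_self
      have hsing_u : IntegrableOn (fun s : ℝ => f (u s - v s)) ({b} : Set ℝ) u.measure :=
        hIocu.mono_set (by rw [← hsplitIoc]; exact subset_union_right)
      have hsing_v : IntegrableOn (fun s : ℝ => f (u s - v s)) ({b} : Set ℝ) v.measure :=
        hIocv.mono_set (by rw [← hsplitIoc]; exact subset_union_right)
      have hint_u : ∫ s in Ioc a b, f (u s - v s) ∂u.measure
          = (∫ s in Ioo a b, f (u s - v s) ∂u.measure)
            + (u b - leftLim u b) * f (u b - v b) := by
        rw [← hsplitIoc, setIntegral_union hdisj (measurableSet_singleton b) hioo_u hsing_u,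
          integral_singleton', toReal_sing]
      have hint_v : ∫ s in Ioc a b, f (u s - v s) ∂v.measure
          = (∫ s in Ioo a b, f (u s - v s) ∂v.measure)
            + (v b - leftLim v b) * f (u b - v b) := by
        rw [← hsplitIoc, setIntegral_union hdisj (measurableSet_singleton b) hioo_v hsing_v,
          integral_singleton', toReal_sing]
      have hbnd : ∀ s ∈ Ioo a b, ‖f (u s - v s) - f (u a - v a)‖ ≤ εf := by
        intro s hs
        simpa [Real.norm_eq_abs] using hptwise s hs.1.le hs.2
      have hEu : |(∫ s in Ioo a b, f (u s - v s) ∂u.measure)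
          - f (u a - v a) * (leftLim u b - u a)| ≤ εf * (leftLim u b - u a) := by
        have hconst : ∫ _ in Ioo a b, f (u a - v a) ∂u.measure
            = f (u a - v a) * (leftLim u b - u a) := by
          rw [setIntegral_const, measureReal_def, toReal_Ioo u hab, smul_eq_mul, mul_comm]
        rw [← hconst, ← integral_sub hioo_u (integrableOn_const (lt_top_iff_ne_top.1 (by
          rw [u.measure_Ioo]; exact ENNReal.ofReal_lt_top)))]
        have hn := norm_setIntegral_le_of_norm_le_const
          (by rw [u.measure_Ioo]; exact ENNReal.ofReal_lt_top) hbnd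
        rw [measureReal_def, toReal_Ioo u hab] at hn
        simpa [Real.norm_eq_abs] using hn
      have hEv : |(∫ s in Ioo a b, f (u s - v s) ∂v.measure)
          - f (u a - v a) * (leftLim v b - v a)| ≤ εf * (leftLim v b - v a) := by
        have hconst : ∫ _ in Ioo a b, f (u a - v a) ∂v.measure
            = f (u a - v a) * (leftLim v b - v a) := by
          rw [setIntegral_const, measureReal_def, toReal_Ioo v hab, smul_eq_mul, mul_comm]
        rw [← hconst, ← integral_sub hioo_v (integrableOn_const (lt_top_iff_ne_top.1 (by
          rw [v.measure_Ioo]; exact ENNReal.ofReal_lt_top)))]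
        have hn := norm_setIntegral_le_of_norm_le_const
          (by rw [v.measure_Ioo]; exact ENNReal.ofReal_lt_top) hbnd
        rw [measureReal_def, toReal_Ioo v hab] at hn
        simpa [Real.norm_eq_abs] using hn
      have hXeq : (F (u b - v b) - F (u a - v a)) - G b
          - ((∫ s in Ioc a b, f (u s - v s) ∂u.measure)
              - ∫ s in Ioc a b, f (u s - v s) ∂v.measure)
          = (F (leftLim u b - leftLim v b) - F (u a - v a)
              - f (u a - v a) * ((leftLim u b - leftLim v b) - (u a - v a)))
            - ((∫ s in Ioo a b, f (u s - v s) ∂u.measure)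
                - f (u a - v a) * (leftLim u b - u a))
            + ((∫ s in Ioo a b, f (u s - v s) ∂v.measure)
                - f (u a - v a) * (leftLim v b - v a)) := by
        rw [hint_u, hint_v, hGdef]; ring
      rw [hXeq]
      set E2 := F (leftLim u b - leftLim v b) - F (u a - v a)
          - f (u a - v a) * ((leftLim u b - leftLim v b) - (u a - v a)) with hE2
      set EU := (∫ s in Ioo a b, f (u s - v s) ∂u.measure)
          - f (u a - v a) * (leftLim u b - u a) with hEU
      set EV := (∫ s in Ioo a b, f (u s - v s) ∂v.measure)
          - f (u a - v a) * (leftLim v b - v a) with hEV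
      calc |E2 - EU + EV| ≤ |E2 - EU| + |EV| := abs_add_le _ _
        _ ≤ |E2| + |EU| + |EV| := by linarith [abs_sub E2 EU]
        _ ≤ εf * ((leftLim u b + leftLim v b) - (u a + v a)) + εf * (leftLim u b - u a)
            + εf * (leftLim v b - v a) := by
            exact add_le_add (add_le_add e2 hEu) hEv
        _ = εf * (2*(leftLim u b + leftLim v b) - 2*(u a + v a)) := by ring
        _ ≤ 2 * εf * ((u b + v b) - (u a + v a)) := by
            rw [show 2 * εf * ((u b + v b) - (u a + v a))
              = εf * (2*(u b + v b) - 2*(u a + v a)) by ring]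
            exact mul_le_mul_of_nonneg_left (by linarith) hεfpos.le
    -- telescoping
    have tele1 : ∑ i ∈ Finset.range n,
        (F (u (r (i+1)) - v (r (i+1))) - F (u (r i) - v (r i)))
        = F (u t - v t) - F (u 0 - v 0) := by
      rw [Finset.sum_range_sub (f := fun i => F (u (r i) - v (r i))), hr0, hrn]
    have hintu_sum : ∑ i ∈ Finset.range n,
        (∫ s in Ioc (r i) (r (i+1)), f (u s - v s) ∂u.measure)
        = ∫ s in Ioc (0:ℝ) t, f (u s - v s) ∂u.measure := by
      have h := sum_setIntegral u.measure (fun s => f (u s - v s)) r n hrmono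
        (by rw [hr0, hrn]; exact hIu)
      rw [hr0, hrn] at h
      exact h.symm
    have hintv_sum : ∑ i ∈ Finset.range n,
        (∫ s in Ioc (r i) (r (i+1)), f (u s - v s) ∂v.measure)
        = ∫ s in Ioc (0:ℝ) t, f (u s - v s) ∂v.measure := by
      have h := sum_setIntegral v.measure (fun s => f (u s - v s)) r n hrmono
        (by rw [hr0, hrn]; exact hIv)
      rw [hr0, hrn] at h
      exact h.symm
    have hkeysum : |(F (u t - v t) - F (u 0 - v 0))
        - (∑ i ∈ Finset.range n, G (r (i+1))) - L| ≤ 2 * εf * V := by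
      have hsum_eq : ∑ i ∈ Finset.range n,
          ((F (u (r (i+1)) - v (r (i+1))) - F (u (r i) - v (r i))) - G (r (i+1))
            - ((∫ s in Ioc (r i) (r (i+1)), f (u s - v s) ∂u.measure)
                - ∫ s in Ioc (r i) (r (i+1)), f (u s - v s) ∂v.measure))
          = (F (u t - v t) - F (u 0 - v 0))
            - (∑ i ∈ Finset.range n, G (r (i+1))) - L := by
        have e3 : ∑ i ∈ Finset.range n,
            ((∫ s in Ioc (r i) (r (i+1)), f (u s - v s) ∂u.measure)
              - ∫ s in Ioc (r i) (r (i+1)), f (u s - v s) ∂v.measure) = L := by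
          rw [Finset.sum_sub_distrib, hintu_sum, hintv_sum, hL]
        rw [← tele1, ← e3, ← Finset.sum_sub_distrib, ← Finset.sum_sub_distrib]
      rw [← hsum_eq]
      calc |∑ i ∈ Finset.range n, _| ≤ ∑ i ∈ Finset.range n,
            |(F (u (r (i+1)) - v (r (i+1))) - F (u (r i) - v (r i))) - G (r (i+1))
              - ((∫ s in Ioc (r i) (r (i+1)), f (u s - v s) ∂u.measure)
                  - ∫ s in Ioc (r i) (r (i+1)), f (u s - v s) ∂v.measure)| :=
          Finset.abs_sum_le_sum_abs _ _
        _ ≤ ∑ i ∈ Finset.range n,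
            2 * εf * ((u (r (i+1)) + v (r (i+1))) - (u (r i) + v (r i))) :=
          Finset.sum_le_sum (fun i hi => key i (Finset.mem_range.1 hi))
        _ = 2 * εf * ∑ i ∈ Finset.range n,
            ((u (r (i+1)) + v (r (i+1))) - (u (r i) + v (r i))) := by
          rw [Finset.mul_sum]
        _ = 2 * εf * V := by
          rw [Finset.sum_range_sub (f := fun i => u (r i) + v (r i)), hr0, hrn, hV]
          ring
    -- partition points as a finset of the subtype
    have hmemIoc : ∀ i : Fin n, r (i.1+1) ∈ Ioc (0:ℝ) t := fun i =>
      ⟨hr0 ▸ hrstrict 0 (i.1+1) (Nat.succ_pos _) (Nat.succ_le_of_lt i.2),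
        hr_let (i.1+1) (Nat.succ_le_of_lt i.2)⟩
    set Fp : Finset ↥(Ioc (0:ℝ) t) := Finset.image
      (fun i : Fin n => (⟨r (i.1+1), hmemIoc i⟩ : ↥(Ioc (0:ℝ) t))) Finset.univ with hFp
    have hFp_sum : ∑ x ∈ Fp, G x = ∑ i ∈ Finset.range n, G (r (i+1)) := by
      rw [hFp, Finset.sum_image ?_]
      · exact Fin.sum_univ_eq_sum_range (fun i => G (r (i+1))) n
      · intro i _ j _ hij
        have hval : r (i.1+1) = r (j.1+1) := congrArg Subtype.val hij
        by_contra hne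
        have hne' : i.1 ≠ j.1 := fun h => hne (Fin.ext h)
        rcases hne'.lt_or_gt with h | h
        · exact absurd hval
            (ne_of_lt (hrstrict _ _ (Nat.succ_lt_succ h) (Nat.succ_le_of_lt j.2)))
        · exact absurd hval.symm
            (ne_of_lt (hrstrict _ _ (Nat.succ_lt_succ h) (Nat.succ_le_of_lt i.2)))
    have hsplit_tsum : (∑ x ∈ Fp, G x)
        + ∑' x : ((↑Fp : Set ↥(Ioc (0:ℝ) t))ᶜ : Set ↥(Ioc (0:ℝ) t)), G x
        = ∑' s : Ioc (0:ℝ) t, G s := Summable.sum_add_tsum_compl hScorr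
    -- tail estimate
    have hptb : ∀ x : ((↑Fp : Set ↥(Ioc (0:ℝ) t))ᶜ : Set ↥(Ioc (0:ℝ) t)),
        |G x.1| ≤ εf * ((u x.1 - leftLim u x.1) + (v x.1 - leftLim v x.1)) := by
      rintro ⟨⟨s, hs⟩, hx2⟩
      have hsFp : (⟨s, hs⟩ : ↥(Ioc (0:ℝ) t)) ∉ Fp := hx2
      have hcov : ∃ i, i < n ∧ r i < s ∧ s ≤ r (i+1) := by
        have haux : ∀ m, m ≤ n → s ≤ r m → ∃ i, i < m ∧ r i < s ∧ s ≤ r (i+1) := by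
          intro m
          induction m with
          | zero => intro _ hle; rw [hr0] at hle; exact absurd hs.1 (not_lt.2 hle)
          | succ k ih =>
            intro hkn hle
            by_cases h : s ≤ r k
            · obtain ⟨i, hi, h1, h2⟩ := ih ((Nat.le_succ k).trans hkn) h
              exact ⟨i, hi.trans (Nat.lt_succ_self k), h1, h2⟩
            · exact ⟨k, Nat.lt_succ_self k, not_le.1 h, hle⟩
        exact haux n le_rfl (hrn ▸ hs.2)
      obtain ⟨i, hin, his, hsi⟩ := hcov
      have hslt : s < r (i+1) := by
        rcases lt_or_eq_of_le hsi with h | h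
        · exact h
        · exfalso; apply hsFp
          rw [hFp]
          exact Finset.mem_image.2 ⟨⟨i, hin⟩, Finset.mem_univ _, Subtype.ext h.symm⟩
      have h1 : u s ≤ leftLim u (r (i+1)) := u.mono.le_leftLim hslt
      have h2 : v s ≤ leftLim v (r (i+1)) := v.mono.le_leftLim hslt
      have h3 : u (r i) ≤ leftLim u s := u.mono.le_leftLim his
      have h4 : v (r i) ≤ leftLim v s := v.mono.le_leftLim his
      have hosci := hosc i hin
      have hjws : (u s - leftLim u s) + (v s - leftLim v s) ≤ δ := by linarith
      have h6 : |(u s - v s) - (leftLim u s - leftLim v s)| ≤ δ := (hjump_le s).trans hjws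
      have hm := mvt_bound hF hεfpos.le hmod (hmemYl s hs.1 hs.2) (hmemY s hs.1.le hs.2)
        h6 (Or.inr rfl)
      calc |G s| ≤ εf * |(u s - v s) - (leftLim u s - leftLim v s)| := hm
        _ ≤ εf * ((u s - leftLim u s) + (v s - leftLim v s)) :=
            mul_le_mul_of_nonneg_left (hjump_le s) hεfpos.le
    have htail : |∑' x : ((↑Fp : Set ↥(Ioc (0:ℝ) t))ᶜ : Set ↥(Ioc (0:ℝ) t)), G x|
        ≤ εf * V := by
      have hjw_sub : Summable (fun x : ((↑Fp : Set ↥(Ioc (0:ℝ) t))ᶜ : Set ↥(Ioc (0:ℝ) t)) =>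
          (u x.1 - leftLim u x.1) + (v x.1 - leftLim v x.1)) :=
        hjw_sum.subtype _
      have habs_sub : Summable (fun x : ((↑Fp : Set ↥(Ioc (0:ℝ) t))ᶜ : Set ↥(Ioc (0:ℝ) t)) =>
          |G x.1|) := hS1.subtype _
      calc |∑' x : ((↑Fp : Set ↥(Ioc (0:ℝ) t))ᶜ : Set ↥(Ioc (0:ℝ) t)), G x|
          ≤ ∑' x : ((↑Fp : Set ↥(Ioc (0:ℝ) t))ᶜ : Set ↥(Ioc (0:ℝ) t)), |G x.1| := by
            simpa [Real.norm_eq_abs] using norm_tsum_le_tsum_norm (f := fun x :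
              ((↑Fp : Set ↥(Ioc (0:ℝ) t))ᶜ : Set ↥(Ioc (0:ℝ) t)) => G x.1)
              (by simpa [Real.norm_eq_abs] using habs_sub)
        _ ≤ ∑' x : ((↑Fp : Set ↥(Ioc (0:ℝ) t))ᶜ : Set ↥(Ioc (0:ℝ) t)),
            εf * ((u x.1 - leftLim u x.1) + (v x.1 - leftLim v x.1)) :=
            Summable.tsum_le_tsum hptb habs_sub (hjw_sub.mul_left εf)
        _ = εf * ∑' x : ((↑Fp : Set ↥(Ioc (0:ℝ) t))ᶜ : Set ↥(Ioc (0:ℝ) t)),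
            ((u x.1 - leftLim u x.1) + (v x.1 - leftLim v x.1)) := tsum_mul_left
        _ ≤ εf * ∑' s : Ioc (0:ℝ) t, ((u s - leftLim u s) + (v s - leftLim v s)) := by
            refine mul_le_mul_of_nonneg_left ?_ hεfpos.le
            refine Summable.tsum_le_tsum_of_inj (fun x => x.1) Subtype.coe_injective
              (fun c _ => add_nonneg (sub_nonneg.2 (u.mono.leftLim_le le_rfl))
                (sub_nonneg.2 (v.mono.leftLim_le le_rfl)))
              (fun x => le_rfl) hjw_sub hjw_sum
        _ ≤ εf * V := mul_le_mul_of_nonneg_left hjw_tsum hεfpos.le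
    -- combine
    have h8 : L - R = -((F (u t - v t) - F (u 0 - v 0))
          - (∑ i ∈ Finset.range n, G (r (i+1))) - L)
        + ∑' x : ((↑Fp : Set ↥(Ioc (0:ℝ) t))ᶜ : Set ↥(Ioc (0:ℝ) t)), G x := by
      rw [hR, ← hsplit_tsum, hFp_sum]; ring
    calc |L - R| = |-((F (u t - v t) - F (u 0 - v 0))
          - (∑ i ∈ Finset.range n, G (r (i+1))) - L)
        + ∑' x : ((↑Fp : Set ↥(Ioc (0:ℝ) t))ᶜ : Set ↥(Ioc (0:ℝ) t)), G x| := by rw [h8]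
      _ ≤ |(F (u t - v t) - F (u 0 - v 0))
          - (∑ i ∈ Finset.range n, G (r (i+1))) - L|
          + |∑' x : ((↑Fp : Set ↥(Ioc (0:ℝ) t))ᶜ : Set ↥(Ioc (0:ℝ) t)), G x| := by
          refine (abs_add_le _ _).trans ?_
          rw [abs_neg]
      _ ≤ 2 * εf * V + εf * V := add_le_add hkeysum htail
      _ = (3 * V) * εf := by ring
      _ ≤ ε := by
          have h9 : (0:ℝ) < 3 * V + 1 := by linarith
          rw [hεf, show (3*V) * (ε / (3*V+1)) = 3*V*ε/(3*V+1) by ring, div_le_iff₀ h9]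
          nlinarith [mul_nonneg hV0 hε.le]
  by_contra hne
  have hpos : 0 < |L - R| := abs_pos.2 (sub_ne_zero.2 hne)
  have hh := main (|L - R| / 2) (by linarith)
  linarith

end S19
end S19section

/-- change of variables for the Lebesgue–Stieltjes integral along a càdlàg
path of locally finite total variation. -/
theorem statement19 (y : ℝ → ℝ) (hy : Cadlag y) (hbv : LocBV y)
    (f f' F : ℝ → ℝ) (hf : ∀ z, HasDerivAt f (f' z) z) (hf' : Continuous f')
    (hF : ∀ z, HasDerivAt F (f z) z) (t : ℝ) (ht : 0 < t) :
    (Summable fun s : Ioc (0:ℝ) t =>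
      |F (y (s : ℝ)) - F (Function.leftLim y (s : ℝ)) - f (y (s : ℝ)) * jmp y (s : ℝ)|) ∧
    lsInt y (fun s => f (y s)) t =
      F (y t) - F (y 0) -
        ∑' s : Ioc (0:ℝ) t,
          (F (y (s : ℝ)) - F (Function.leftLim y (s : ℝ)) -
            f (y (s : ℝ)) * jmp y (s : ℝ)) := by
  classical
  have hfc : Continuous f := by
    rw [continuous_iff_continuousAt]; exact fun z => (hf z).continuousAt
  have h' : ∃ p, IsBVDecompOn y p := hbv
  have hspec := h'.choose_spec
  set u := h'.choose.1 with hu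
  set v := h'.choose.2 with hv
  have hyY : ∀ s : ℝ, 0 ≤ s → y s = u s - v s := fun s hs => hspec s hs
  have hylY : ∀ s : ℝ, 0 < s →
      Function.leftLim y s = Function.leftLim (⇑u) s - Function.leftLim (⇑v) s := by
    intro s hs
    have h1 : Tendsto (fun z => u z - v z) (𝓝[<] s)
        (𝓝 (Function.leftLim (⇑u) s - Function.leftLim (⇑v) s)) :=
      (u.mono.tendsto_leftLim s).sub (v.mono.tendsto_leftLim s)
    have h2 : (fun z => u z - v z) =ᶠ[𝓝[<] s] y := by
      filter_upwards [Ioo_mem_nhdsLT_of_mem (⟨hs, le_rfl⟩ : s ∈ Ioc 0 s)] with z hz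
      exact (hyY z hz.1.le).symm
    exact leftLim_eq_of_tendsto (h1.congr' h2)
  obtain ⟨hsum, heq⟩ := S19.core u v hfc hF ht
  have hcongr : ∀ s : Ioc (0:ℝ) t,
      F (y (s:ℝ)) - F (Function.leftLim y (s:ℝ)) - f (y (s:ℝ)) * jmp y (s:ℝ)
      = F (u (s:ℝ) - v (s:ℝ)) - F (Function.leftLim (⇑u) (s:ℝ) - Function.leftLim (⇑v) (s:ℝ)) -
          f (u (s:ℝ) - v (s:ℝ)) *
            ((u (s:ℝ) - v (s:ℝ)) - (Function.leftLim (⇑u) (s:ℝ) - Function.leftLim (⇑v) (s:ℝ))) := by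
    intro s
    have h0 : (0:ℝ) < (s:ℝ) := s.2.1
    rw [jmp, hyY (s:ℝ) h0.le, hylY (s:ℝ) h0]
  constructor
  · exact (summable_congr (fun s : Ioc (0:ℝ) t => by rw [hcongr s])).2 hsum
  · have hL : lsInt y (fun s => f (y s)) t =
        (∫ s in Ioc (0:ℝ) t, f (u s - v s) ∂u.measure) -
          ∫ s in Ioc (0:ℝ) t, f (u s - v s) ∂v.measure := by
      unfold lsInt
      rw [dif_pos h']
      congr 1
      · refine setIntegral_congr_fun measurableSet_Ioc ?_
        intro s hs
        simp only
        rw [hyY s hs.1.le]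
      · refine setIntegral_congr_fun measurableSet_Ioc ?_
        intro s hs
        simp only
        rw [hyY s hs.1.le]
    rw [hL, heq, ← hyY t ht.le, ← hyY 0 le_rfl]
    congr 1
    exact tsum_congr (fun s => (hcongr s).symm)
end
end
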